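/- arXiv:2107.03092 — 5 statements merged into one kernel-verified Lean document; each statement's English description precedes it below -/
import Mathlib

section
/- Let G be a finite directed graph, k a positive integer, and u, v distinct vertices of G such that G has a directed path from u to v or from v to u. Then for every u-directed tree T in G with k arcs and every v-directed tree T' in G with k arcs, there exists a reconfiguration sequence between T and T' in which every intermediate subgraph is a directed tree in G with k arcs. -/
/-- The vertex set of a set of arcs. -/
def arcVerts {V : Type*} [DecidableEq V] (T : Finset (V × V)) : Finset V :=
  T.image Prod.fst ∪ T.image Prod.snd

/-- The in-degree of a vertex `v` in a set of arcs `T`. -/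
def inDeg {V : Type*} [DecidableEq V] (T : Finset (V × V)) (v : V) : ℕ :=
  (T.filter fun e => e.2 = v).card

/-- The step relation of a set of arcs: `arcRel T a b` iff `(a, b)` is an arc of `T`. -/
def arcRel {V : Type*} (T : Finset (V × V)) : V → V → Prop := fun a b => (a, b) ∈ T

/-- `T` is (the arc set of) a directed tree rooted at `r`: the root has in-degree `0`,
every other vertex has in-degree exactly `1`, and every vertex is reachable from `r`. -/
def IsDirTree {V : Type*} [DecidableEq V] (T : Finset (V × V)) (r : V) : Prop :=
  inDeg T r = 0 ∧ (∀ v ∈ arcVerts T, v ≠ r → inDeg T v = 1) ∧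
    ∀ v ∈ arcVerts T, Relation.ReflTransGen (arcRel T) r v

open Relation Finset

namespace Stmt10

variable {V : Type*} [DecidableEq V]

lemma mem_arcVerts {T : Finset (V × V)} {v : V} :
    v ∈ arcVerts T ↔ (∃ e ∈ T, e.1 = v) ∨ ∃ e ∈ T, e.2 = v := by
  simp [arcVerts, Finset.mem_union, Finset.mem_image]

lemma tail_mem_arcVerts {T : Finset (V × V)} {e : V × V} (he : e ∈ T) : e.1 ∈ arcVerts T :=
  mem_arcVerts.2 (Or.inl ⟨e, he, rfl⟩)

lemma head_mem_arcVerts {T : Finset (V × V)} {e : V × V} (he : e ∈ T) : e.2 ∈ arcVerts T :=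
  mem_arcVerts.2 (Or.inr ⟨e, he, rfl⟩)

lemma arcVerts_insert_subset {T : Finset (V × V)} {e : V × V} :
    arcVerts (insert e T) ⊆ insert e.1 (insert e.2 (arcVerts T)) := by
  intro v hv
  rcases mem_arcVerts.1 hv with ⟨f, hf, hfv⟩ | ⟨f, hf, hfv⟩ <;>
    rcases Finset.mem_insert.1 hf with rfl | hf <;>
    simp_all [Finset.mem_insert]
  · exact Or.inr (Or.inr (hfv ▸ tail_mem_arcVerts hf))
  · exact Or.inr (Or.inr (hfv ▸ head_mem_arcVerts hf))

lemma arcVerts_erase_subset {T : Finset (V × V)} {g : V × V} :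
    arcVerts (T.erase g) ⊆ arcVerts T := by
  intro v hv
  rcases mem_arcVerts.1 hv with ⟨f, hf, hfv⟩ | ⟨f, hf, hfv⟩
  · exact hfv ▸ tail_mem_arcVerts (Finset.mem_of_mem_erase hf)
  · exact hfv ▸ head_mem_arcVerts (Finset.mem_of_mem_erase hf)

lemma inDeg_eq_zero_iff {T : Finset (V × V)} {v : V} :
    inDeg T v = 0 ↔ ∀ e ∈ T, e.2 ≠ v := by
  simp [inDeg, Finset.card_eq_zero, Finset.filter_eq_empty_iff]

lemma inDeg_insert_of_ne {T : Finset (V × V)} {e : V × V} {v : V} (h : e.2 ≠ v) :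
    inDeg (insert e T) v = inDeg T v := by
  unfold inDeg
  rw [Finset.filter_insert, if_neg h]

lemma inDeg_insert_of_head {T : Finset (V × V)} {e : V × V} {v : V} (h : e.2 = v)
    (he : e ∉ T) : inDeg (insert e T) v = inDeg T v + 1 := by
  unfold inDeg
  rw [Finset.filter_insert, if_pos h, Finset.card_insert_of_notMem (fun hc => he (Finset.mem_of_mem_filter _ hc))]

lemma inDeg_erase_of_ne {T : Finset (V × V)} {g : V × V} {v : V} (h : g.2 ≠ v) :
    inDeg (T.erase g) v = inDeg T v := by
  unfold inDeg
  rw [Finset.filter_erase, Finset.erase_eq_of_notMem]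
  intro hc
  exact h (Finset.mem_filter.1 hc).2

-- tree facts
section Tree

variable {X : Finset (V × V)} {r : V} (hX : IsDirTree X r)

include hX

lemma head_ne_root {e : V × V} (he : e ∈ X) : e.2 ≠ r := by
  intro h
  exact (inDeg_eq_zero_iff.1 hX.1 e he) h

lemma in_arc_unique {e f : V × V} (he : e ∈ X) (hf : f ∈ X) (h : e.2 = f.2) : e = f := by
  have h2 : inDeg X f.2 = 1 := hX.2.1 f.2 (head_mem_arcVerts hf) (head_ne_root hX hf)
  have := Finset.card_le_one.1 (le_of_eq h2)
  exact this e (Finset.mem_filter.2 ⟨he, h⟩) f (Finset.mem_filter.2 ⟨hf, rfl⟩)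

lemma exists_in_arc {w : V} (hw : w ∈ arcVerts X) (hwr : w ≠ r) :
    ∃ e ∈ X, e.2 = w := by
  have h1 : inDeg X w = 1 := hX.2.1 w hw hwr
  have : (X.filter fun e => e.2 = w).Nonempty := Finset.card_pos.1 (by rw [show (X.filter fun e => e.2 = w).card = 1 from h1]; omega)
  obtain ⟨e, he⟩ := this
  exact ⟨e, (Finset.mem_filter.1 he).1, (Finset.mem_filter.1 he).2⟩

lemma root_mem_arcVerts (hne : X.Nonempty) : r ∈ arcVerts X := by
  obtain ⟨e, he⟩ := hne
  have hr : Relation.ReflTransGen (arcRel X) r e.2 := hX.2.2 e.2 (head_mem_arcVerts he)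
  rcases (Relation.ReflTransGen.cases_head hr) with h | ⟨c, hrc, _⟩
  · exact absurd h.symm (head_ne_root hX he)
  · exact tail_mem_arcVerts (T := X) hrc

lemma no_self_loop {y : V} : (y, y) ∉ X := by
  intro hyy
  have hne : y ≠ r := head_ne_root hX hyy
  have key : ∀ z, Relation.ReflTransGen (arcRel X) r z → z ≠ y := by
    intro z hz
    induction hz with
    | refl => exact fun h => hne h.symm
    | @tail b c _ harc ih =>
      intro hc
      subst hc
      have h5 : (b, c) = (c, c) := in_arc_unique hX harc hyy rfl
      exact ih (congrArg Prod.fst h5)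
  exact key y (hX.2.2 y (head_mem_arcVerts hyy)) rfl

end Tree


lemma inDeg_erase_of_head {T : Finset (V × V)} {g : V × V} {v : V} (hg : g ∈ T)
    (h : g.2 = v) : inDeg (T.erase g) v = inDeg T v - 1 := by
  unfold inDeg
  rw [Finset.filter_erase, Finset.card_erase_of_mem (Finset.mem_filter.2 ⟨hg, h⟩)]

lemma reach_mono {S T : Finset (V × V)} (h : S ⊆ T) {a b : V}
    (hr : Relation.ReflTransGen (arcRel S) a b) :
    Relation.ReflTransGen (arcRel T) a b := by
  induction hr with
  | refl => exact Relation.ReflTransGen.refl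
  | tail _ hbc ih => exact ih.tail (h hbc)

lemma sdiff_swap {X : Finset (V × V)} {e g : V × V} (he : e ∉ X) (hg : g ∈ X) :
    X \ insert e (X.erase g) = {g} ∧ insert e (X.erase g) \ X = {e} := by
  constructor <;> ext f <;>
    simp only [Finset.mem_sdiff, Finset.mem_insert, Finset.mem_erase, Finset.mem_singleton,
      not_or, not_and] <;> constructor
  · rintro ⟨hfX, hfe, hfg⟩
    by_contra hne
    exact (hfg hne) hfX
  · rintro rfl
    exact ⟨hg, fun hc => he (hc ▸ hg), fun hc => absurd rfl hc⟩
  · rintro ⟨h1 | ⟨_, h2⟩, h3⟩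
    · exact h1
    · exact absurd h2 h3
  · rintro rfl
    exact ⟨Or.inl rfl, he⟩

/-- Lemma A: replacing the in-arc of `y` by `(x, y)`, where `x` is still reachable
after deleting the old in-arc, yields a directed tree with the same root. -/
lemma parent_swap {X : Finset (V × V)} {r : V} (hX : IsDirTree X r) {p x y : V}
    (hpy : (p, y) ∈ X) (hxy : (x, y) ∉ X)
    (hreach : Relation.ReflTransGen (arcRel (X.erase (p, y))) r x) :
    IsDirTree (insert (x, y) (X.erase (p, y))) r := by
  set X' := insert (x, y) (X.erase (p, y)) with hX'
  have hyr : y ≠ r := head_ne_root hX hpy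
  have hxmem : x = r ∨ x ∈ arcVerts X := by
    rcases Relation.ReflTransGen.cases_tail hreach with h | ⟨c, _, harc⟩
    · exact Or.inl h
    · exact Or.inr (head_mem_arcVerts (Finset.mem_of_mem_erase harc))
  have hsub : X.erase (p, y) ⊆ X' := Finset.subset_insert _ _
  have key : ∀ w, Relation.ReflTransGen (arcRel X) r w →
      Relation.ReflTransGen (arcRel X') r w := by
    intro w h
    induction h with
    | refl => exact Relation.ReflTransGen.refl
    | @tail b c hb harc ih =>
      by_cases hbc : (b, c) = (p, y)
      · have hcy : c = y := congrArg Prod.snd hbc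
        subst hcy
        exact (reach_mono hsub hreach).tail (Finset.mem_insert_self _ _)
      · exact ih.tail (hsub (Finset.mem_erase.2 ⟨hbc, harc⟩))
  have hvsub : ∀ w ∈ arcVerts X', w = x ∨ w = y ∨ w ∈ arcVerts X := by
    intro w hw
    rcases Finset.mem_insert.1 (arcVerts_insert_subset hw) with h | h
    · exact Or.inl h
    rcases Finset.mem_insert.1 h with h | h
    · exact Or.inr (Or.inl h)
    · exact Or.inr (Or.inr (arcVerts_erase_subset h))
  have hdeg : ∀ w, w ≠ y → inDeg X' w = inDeg X w := by
    intro w hw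
    rw [hX', inDeg_insert_of_ne (by simpa using fun h => hw h.symm),
      inDeg_erase_of_ne (by simpa using fun h => hw h.symm)]
  have hdegy : inDeg X' y = 1 := by
    rw [hX', inDeg_insert_of_head rfl (fun hc => hxy (Finset.mem_of_mem_erase hc)),
      inDeg_erase_of_head hpy rfl, hX.2.1 y (head_mem_arcVerts hpy) hyr]
  refine ⟨?_, ?_, ?_⟩
  · rw [hdeg r (Ne.symm hyr)]; exact hX.1
  · intro w hw hwr
    by_cases hwy : w = y
    · exact hwy ▸ hdegy
    · rw [hdeg w hwy]
      rcases hvsub w hw with rfl | rfl | h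
      · rcases hxmem with rfl | h
        · exact absurd rfl hwr
        · exact hX.2.1 w h hwr
      · exact absurd rfl hwy
      · exact hX.2.1 w h hwr
  · intro w hw
    rcases hvsub w hw with rfl | rfl | h
    · rcases hxmem with rfl | h
      · exact Relation.ReflTransGen.refl
      · exact key w (hX.2.2 w h)
    · exact (reach_mono hsub hreach).tail (Finset.mem_insert_self _ _)
    · exact key w (hX.2.2 w h)

/-- Adding a pendant arc to a fresh vertex keeps the directed-tree property. -/
lemma leaf_add {X : Finset (V × V)} {r : V} (hX : IsDirTree X r) {x y : V}
    (hy : y ∉ arcVerts X) (hyr : y ≠ r)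
    (hx : Relation.ReflTransGen (arcRel X) r x) :
    IsDirTree (insert (x, y) X) r := by
  have hxyX : (x, y) ∉ X := fun hc => hy (head_mem_arcVerts hc)
  have hxmem : x = r ∨ x ∈ arcVerts X := by
    rcases Relation.ReflTransGen.cases_tail hx with h | ⟨c, _, harc⟩
    · exact Or.inl h
    · exact Or.inr (head_mem_arcVerts harc)
  have hsub : X ⊆ insert (x, y) X := Finset.subset_insert _ _
  have hvsub : ∀ w ∈ arcVerts (insert (x, y) X), w = x ∨ w = y ∨ w ∈ arcVerts X := by
    intro w hw
    rcases Finset.mem_insert.1 (arcVerts_insert_subset hw) with h | h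
    · exact Or.inl h
    rcases Finset.mem_insert.1 h with h | h
    · exact Or.inr (Or.inl h)
    · exact Or.inr (Or.inr h)
  have hdeg : ∀ w, w ≠ y → inDeg (insert (x, y) X) w = inDeg X w := by
    intro w hw
    rw [inDeg_insert_of_ne (by simpa using fun h => hw h.symm)]
  have hdegy : inDeg (insert (x, y) X) y = 1 := by
    rw [inDeg_insert_of_head rfl hxyX, inDeg_eq_zero_iff.2 (by
      intro e he hc
      have h2 : e.2 = y := hc
      exact hy (h2 ▸ head_mem_arcVerts he))]
  refine ⟨?_, ?_, ?_⟩
  · rw [hdeg r (Ne.symm hyr)]; exact hX.1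
  · intro w hw hwr
    by_cases hwy : w = y
    · exact hwy ▸ hdegy
    · rw [hdeg w hwy]
      rcases hvsub w hw with rfl | rfl | h
      · rcases hxmem with rfl | h
        · exact absurd rfl hwr
        · exact hX.2.1 w h hwr
      · exact absurd rfl hwy
      · exact hX.2.1 w h hwr
  · intro w hw
    rcases hvsub w hw with rfl | rfl | h
    · exact reach_mono hsub hx
    · exact (reach_mono hsub hx).tail (Finset.mem_insert_self _ _)
    · exact reach_mono hsub (hX.2.2 w h)

/-- Removing a pendant arc (to a vertex with out-degree zero) keeps the tree property. -/
lemma leaf_remove {X : Finset (V × V)} {r : V} (hX : IsDirTree X r) {g : V × V}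
    (hg : g ∈ X) (hleaf : ∀ e ∈ X, e.1 ≠ g.2) :
    IsDirTree (X.erase g) r := by
  have hz : g.2 ∉ arcVerts (X.erase g) := by
    intro hc
    rcases mem_arcVerts.1 hc with ⟨e, he, hev⟩ | ⟨e, he, hev⟩
    · exact hleaf e (Finset.mem_of_mem_erase he) hev
    · have : e = g := in_arc_unique hX (Finset.mem_of_mem_erase he) hg hev
      exact (Finset.mem_erase.1 he).1 this
  have key : ∀ w, Relation.ReflTransGen (arcRel X) r w →
      w = g.2 ∨ Relation.ReflTransGen (arcRel (X.erase g)) r w := by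
    intro w h
    induction h with
    | refl => exact Or.inr Relation.ReflTransGen.refl
    | @tail b c hb harc ih =>
      rcases ih with hbg | ih
      · exact absurd hbg (hleaf (b, c) harc)
      · by_cases hbc : (b, c) = g
        · exact Or.inl (congrArg Prod.snd hbc)
        · exact Or.inr (ih.tail (Finset.mem_erase.2 ⟨hbc, harc⟩))
  refine ⟨?_, ?_, ?_⟩
  · rw [inDeg_erase_of_ne (head_ne_root hX hg)]; exact hX.1
  · intro w hw hwr
    have hwz : w ≠ g.2 := fun hc => hz (hc ▸ hw)
    rw [inDeg_erase_of_ne (fun hc => hwz hc.symm)]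
    exact hX.2.1 w (arcVerts_erase_subset hw) hwr
  · intro w hw
    rcases key w (hX.2.2 w (arcVerts_erase_subset hw)) with rfl | h
    · exact absurd hw hz
    · exact h


/-- `reachN Z r n v`: `v` is reachable from `r` in `Z` by a path of length at most `n`. -/
def reachN (Z : Finset (V × V)) (r : V) : ℕ → V → Prop
  | 0 => fun v => v = r
  | n + 1 => fun v => reachN Z r n v ∨ ∃ p, reachN Z r n p ∧ (p, v) ∈ Z

lemma reach_exists_reachN {Z : Finset (V × V)} {r v : V}
    (h : Relation.ReflTransGen (arcRel Z) r v) : ∃ n, reachN Z r n v := by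
  induction h with
  | refl => exact ⟨0, rfl⟩
  | @tail b c hb harc ih =>
    obtain ⟨n, hn⟩ := ih
    exact ⟨n + 1, Or.inr ⟨b, hn, harc⟩⟩

lemma reachN_in_arc {Z : Finset (V × V)} {r : V} (hZ : IsDirTree Z r) :
    ∀ n, ∀ q p : V, reachN Z r n q → (p, q) ∈ Z → ∃ m < n, reachN Z r m p := by
  intro n
  induction n with
  | zero =>
    intro q p hq harc
    exact absurd (hq : q = r) (head_ne_root hZ harc)
  | succ n ih =>
    intro q p hq harc
    rcases hq with hq | ⟨p', hp', harc'⟩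
    · obtain ⟨m, hm, hmp⟩ := ih q p hq harc
      exact ⟨m, Nat.lt_succ_of_lt hm, hmp⟩
    · have : (p', q) = (p, q) := in_arc_unique hZ harc' harc rfl
      have hpp : p' = p := congrArg Prod.fst this
      exact ⟨n, Nat.lt_succ_self n, hpp ▸ hp'⟩

/-- Lemma C: in a directed tree `Z`, outside any "grounded" subset `F ⊊ Z` there is
an arc whose head has out-degree zero in `Z`. -/
lemma exists_leaf {Z : Finset (V × V)} {r : V} (hZ : IsDirTree Z r)
    {F : Finset (V × V)} (hFZ : F ⊆ Z)
    (hground : ∀ e ∈ F, Relation.ReflTransGen (arcRel F) r e.1)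
    (hne : (Z \ F).Nonempty) :
    ∃ g ∈ Z, g ∉ F ∧ ∀ e ∈ Z, e.1 ≠ g.2 := by
  classical
  set dep : V × V → ℕ := fun e =>
    if h : ∃ n, reachN Z r n e.2 then Nat.find h else 0 with hdep
  obtain ⟨g, hg, hgmax⟩ := Finset.exists_max_image (Z \ F) dep hne
  have hgZ : g ∈ Z := (Finset.mem_sdiff.1 hg).1
  have hgF : g ∉ F := (Finset.mem_sdiff.1 hg).2
  refine ⟨g, hgZ, hgF, ?_⟩
  intro e he hc
  -- e is an out-arc of g.2
  have heF : e ∉ F := by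
    intro heF
    have hre : Relation.ReflTransGen (arcRel F) r e.1 := hground e heF
    rcases Relation.ReflTransGen.cases_tail hre with h | ⟨c, _, harc⟩
    · exact head_ne_root hZ hgZ (hc ▸ h)
    · -- (c, e.1) ∈ F ⊆ Z, and g has head e.1 too
      have h2 : (c, e.1) = g := in_arc_unique hZ (hFZ harc) hgZ hc
      exact hgF (h2 ▸ harc)
  have heZF : e ∈ Z \ F := Finset.mem_sdiff.2 ⟨he, heF⟩
  -- depth strictly increases along the arc e
  have hex2 : ∃ n, reachN Z r n e.2 := reach_exists_reachN (hZ.2.2 e.2 (head_mem_arcVerts he))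
  have hspec : reachN Z r (Nat.find hex2) e.2 := Nat.find_spec hex2
  have harc' : (e.1, e.2) ∈ Z := by simpa using he
  obtain ⟨m, hm, hmp⟩ := reachN_in_arc hZ (Nat.find hex2) e.2 e.1 hspec harc'
  have hex1 : ∃ n, reachN Z r n e.1 := ⟨m, hmp⟩
  have hlt : dep g < dep e := by
    rw [hdep]
    simp only [← hc]
    rw [dif_pos hex2, dif_pos hex1]
    exact lt_of_le_of_lt (Nat.find_min' hex1 hmp) hm
  exact absurd (hgmax e heZF) (not_le_of_gt hlt)

/-- GROW: if `F ⊊ Y` for a directed tree `Y`, some arc of `Y \ F` has its tail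
reachable from the root through arcs of `F`. -/
lemma grow {Y : Finset (V × V)} {r : V} (hY : IsDirTree Y r)
    {F : Finset (V × V)} (hFY : F ⊆ Y) (hne : (Y \ F).Nonempty) :
    ∃ e ∈ Y, e ∉ F ∧ Relation.ReflTransGen (arcRel F) r e.1 := by
  have key : ∀ w, Relation.ReflTransGen (arcRel Y) r w →
      Relation.ReflTransGen (arcRel F) r w ∨
        ∃ e ∈ Y, e ∉ F ∧ Relation.ReflTransGen (arcRel F) r e.1 := by
    intro w h
    induction h with
    | refl => exact Or.inl Relation.ReflTransGen.refl
    | @tail b c hb harc ih =>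
      rcases ih with ih | ih
      · by_cases hbc : (b, c) ∈ F
        · exact Or.inl (ih.tail hbc)
        · exact Or.inr ⟨(b, c), harc, hbc, ih⟩
      · exact Or.inr ih
  obtain ⟨g, hg⟩ := hne
  have hgY : g ∈ Y := (Finset.mem_sdiff.1 hg).1
  have hgF : g ∉ F := (Finset.mem_sdiff.1 hg).2
  rcases key g.2 (hY.2.2 g.2 (head_mem_arcVerts hgY)) with h | h
  · rcases Relation.ReflTransGen.cases_tail h with h | ⟨c, _, harc⟩
    · exact absurd h (head_ne_root hY hgY)
    · have h2 : (c, g.2) = g := in_arc_unique hY (hFY harc) hgY rfl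
      exact absurd (h2 ▸ harc) hgF
  · exact h


/-- a tree rooted at `c` can be prepended with an arc `(x, c)` from a fresh vertex. -/
lemma root_prepend {Z : Finset (V × V)} {c x : V} (hZ : IsDirTree Z c)
    (hx : x ∉ arcVerts Z) (hxc : x ≠ c) : IsDirTree (insert (x, c) Z) x := by
  have hxcZ : (x, c) ∉ Z := fun hc => hx (tail_mem_arcVerts hc)
  have hvsub : ∀ w ∈ arcVerts (insert (x, c) Z), w = x ∨ w = c ∨ w ∈ arcVerts Z := by
    intro w hw
    rcases Finset.mem_insert.1 (arcVerts_insert_subset hw) with h | h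
    · exact Or.inl h
    rcases Finset.mem_insert.1 h with h | h
    · exact Or.inr (Or.inl h)
    · exact Or.inr (Or.inr h)
  refine ⟨?_, ?_, ?_⟩
  · rw [inDeg_insert_of_ne (show (x, c).2 ≠ x from fun h => hxc h.symm)]
    exact inDeg_eq_zero_iff.2 fun e he hc => hx (hc ▸ head_mem_arcVerts he)
  · intro w hw hwx
    by_cases hwc : w = c
    · subst hwc
      rw [inDeg_insert_of_head rfl hxcZ, hZ.1]
    · rw [inDeg_insert_of_ne (show (x, c).2 ≠ w from fun h => hwc h.symm)]
      rcases hvsub w hw with rfl | rfl | h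
      · exact absurd rfl hwx
      · exact absurd rfl hwc
      · exact hZ.2.1 w h hwc
  · intro w hw
    have harc : arcRel (insert (x, c) Z) x c := Finset.mem_insert_self _ _
    rcases hvsub w hw with rfl | rfl | h
    · exact Relation.ReflTransGen.refl
    · exact Relation.ReflTransGen.single harc
    · exact (Relation.ReflTransGen.single harc).trans
        (reach_mono (Finset.subset_insert _ _) (hZ.2.2 w h))

/-- S3': the root of a tree can be moved backwards along any arc of `A`. -/
lemma root_back {A X : Finset (V × V)} {c x : V} (hX : IsDirTree X c) (hXA : X ⊆ A)
    (hne : X.Nonempty) (harc : (x, c) ∈ A) (hxc : x ≠ c) :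
    ∃ X', IsDirTree X' x ∧ X' ⊆ A ∧ X'.card = X.card ∧
      (X \ X').card = 1 ∧ (X' \ X).card = 1 := by
  have hxcX : (x, c) ∉ X := fun hc => (inDeg_eq_zero_iff.1 hX.1) (x, c) hc rfl
  by_cases hxm : x ∈ arcVerts X
  · -- x is already in the tree: replace its in-arc by (x, c)
    obtain ⟨e, heX, he2⟩ := exists_in_arc hX hxm hxc
    refine ⟨insert (x, c) (X.erase e), ?_, ?_, ?_, ?_, ?_⟩
    · -- tree rooted at x
      have key : ∀ w, Relation.ReflTransGen (arcRel X) c w →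
          Relation.ReflTransGen (arcRel (insert (x, c) (X.erase e))) x w := by
        intro w h
        induction h with
        | refl => exact Relation.ReflTransGen.single (Finset.mem_insert_self _ _)
        | @tail b d hb harc2 ih =>
          by_cases hbd : (b, d) = e
          · have : d = e.2 := congrArg Prod.snd hbd
            rw [this, he2]
          · exact ih.tail (Finset.mem_insert_of_mem (Finset.mem_erase.2 ⟨hbd, harc2⟩))
      have hvsub : ∀ w ∈ arcVerts (insert (x, c) (X.erase e)),
          w = x ∨ w = c ∨ w ∈ arcVerts X := by
        intro w hw
        rcases Finset.mem_insert.1 (arcVerts_insert_subset hw) with h | h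
        · exact Or.inl h
        rcases Finset.mem_insert.1 h with h | h
        · exact Or.inr (Or.inl h)
        · exact Or.inr (Or.inr (arcVerts_erase_subset h))
      refine ⟨?_, ?_, ?_⟩
      · rw [inDeg_insert_of_ne (show (x, c).2 ≠ x from fun h => hxc h.symm),
          inDeg_erase_of_head heX he2, hX.2.1 x hxm hxc]
      · intro w hw hwx
        by_cases hwc : w = c
        · rw [hwc, inDeg_insert_of_head rfl (fun hc => hxcX (Finset.mem_of_mem_erase hc)),
            inDeg_erase_of_ne (show e.2 ≠ c by rw [he2]; exact hxc), hX.1]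
        · rw [inDeg_insert_of_ne (show (x, c).2 ≠ w from fun h => hwc h.symm),
            inDeg_erase_of_ne (show e.2 ≠ w by rw [he2]; exact fun h => hwx h.symm)]
          rcases hvsub w hw with rfl | rfl | h
          · exact absurd rfl hwx
          · exact absurd rfl hwc
          · exact hX.2.1 w h hwc
      · intro w hw
        rcases hvsub w hw with rfl | rfl | h
        · exact Relation.ReflTransGen.refl
        · exact Relation.ReflTransGen.single (Finset.mem_insert_self _ _)
        · exact key w (hX.2.2 w h)
    · intro f hf
      rcases Finset.mem_insert.1 hf with rfl | hf
      · exact harc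
      · exact hXA (Finset.mem_of_mem_erase hf)
    · rw [Finset.card_insert_of_notMem (fun hc => hxcX (Finset.mem_of_mem_erase hc)),
        Finset.card_erase_of_mem heX]
      have : 0 < X.card := Finset.card_pos.2 hne
      omega
    · exact (by rw [(sdiff_swap hxcX heX).1, Finset.card_singleton])
    · exact (by rw [(sdiff_swap hxcX heX).2, Finset.card_singleton])
  · -- x is fresh: drop a leaf and prepend (x, c)
    obtain ⟨g, hgX, hgF, hleaf⟩ := exists_leaf hX (Finset.empty_subset X)
      (fun e he => absurd he (Finset.notMem_empty e))
      (by rw [Finset.sdiff_empty]; exact hne)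
    have hxer : x ∉ arcVerts (X.erase g) := fun hc => hxm (arcVerts_erase_subset hc)
    refine ⟨insert (x, c) (X.erase g), root_prepend (leaf_remove hX hgX hleaf) hxer hxc,
      ?_, ?_, ?_, ?_⟩
    · intro f hf
      rcases Finset.mem_insert.1 hf with rfl | hf
      · exact harc
      · exact hXA (Finset.mem_of_mem_erase hf)
    · rw [Finset.card_insert_of_notMem (fun hc => hxcX (Finset.mem_of_mem_erase hc)),
        Finset.card_erase_of_mem hgX]
      have : 0 < X.card := Finset.card_pos.2 hne
      omega
    · exact (by rw [(sdiff_swap hxcX hgX).1, Finset.card_singleton])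
    · exact (by rw [(sdiff_swap hxcX hgX).2, Finset.card_singleton])

section Reconf

variable (A : Finset (V × V)) (k : ℕ)

def Good (X : Finset (V × V)) : Prop :=
  X ⊆ A ∧ (∃ r, IsDirTree X r) ∧ X.card = k

def Reconf (X Y : Finset (V × V)) : Prop :=
  ∃ ℓ, ∃ f : ℕ → Finset (V × V), f 0 = X ∧ f ℓ = Y ∧
    (∀ i ≤ ℓ, Good A k (f i)) ∧
    (∀ i < ℓ, (f i \ f (i + 1)).card = 1 ∧ (f (i + 1) \ f i).card = 1)

variable {A k}

lemma Reconf.refl {X : Finset (V × V)} (h : Good A k X) : Reconf A k X X :=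
  ⟨0, fun _ => X, rfl, rfl, fun _ _ => h, fun i hi => absurd hi (Nat.not_lt_zero i)⟩

lemma Reconf.single {X Y : Finset (V × V)} (hX : Good A k X) (hY : Good A k Y)
    (h1 : (X \ Y).card = 1) (h2 : (Y \ X).card = 1) : Reconf A k X Y := by
  refine ⟨1, fun i => if i = 0 then X else Y, by simp, by simp, ?_, ?_⟩
  · intro i _
    by_cases h : i = 0 <;> simp [h, hX, hY]
  · intro i hi
    have : i = 0 := by omega
    subst this
    simpa using ⟨h1, h2⟩

lemma Reconf.trans {X Y Z : Finset (V × V)} (h1 : Reconf A k X Y) (h2 : Reconf A k Y Z) :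
    Reconf A k X Z := by
  obtain ⟨ℓ₁, f, hf0, hf1, hfg, hfs⟩ := h1
  obtain ⟨ℓ₂, g, hg0, hg1, hgg, hgs⟩ := h2
  refine ⟨ℓ₁ + ℓ₂, fun i => if i ≤ ℓ₁ then f i else g (i - ℓ₁), ?_, ?_, ?_, ?_⟩
  · simp [hf0]
  · beta_reduce
    by_cases h : ℓ₁ + ℓ₂ ≤ ℓ₁
    · have hz : ℓ₂ = 0 := by omega
      have he : ℓ₁ + ℓ₂ = ℓ₁ := by omega
      rw [if_pos h, he, hf1, ← hg0, ← hg1, hz]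
    · rw [if_neg h]
      have he : ℓ₁ + ℓ₂ - ℓ₁ = ℓ₂ := by omega
      rw [he, hg1]
  · intro i hi
    beta_reduce
    by_cases h : i ≤ ℓ₁
    · rw [if_pos h]; exact hfg i h
    · rw [if_neg h]; exact hgg (i - ℓ₁) (by omega)
  · intro i hi
    beta_reduce
    by_cases h : i + 1 ≤ ℓ₁
    · rw [if_pos (by omega : i ≤ ℓ₁), if_pos h]
      exact hfs i (by omega)
    · by_cases h' : i ≤ ℓ₁
      · -- i = ℓ₁, crossing the boundary
        have hiℓ : i = ℓ₁ := by omega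
        have hℓ₂ : 0 < ℓ₂ := by omega
        rw [if_pos h', if_neg (by omega)]
        have e1 : f i = g 0 := by rw [hiℓ, hf1, hg0]
        have e2 : i + 1 - ℓ₁ = 1 := by omega
        rw [e1, e2]
        exact hgs 0 hℓ₂
      · rw [if_neg h', if_neg (by omega)]
        have e2 : i + 1 - ℓ₁ = (i - ℓ₁) + 1 := by omega
        rw [e2]
        exact hgs (i - ℓ₁) (by omega)

lemma Reconf.symm {X Y : Finset (V × V)} (h : Reconf A k X Y) : Reconf A k Y X := by
  obtain ⟨ℓ, f, hf0, hf1, hfg, hfs⟩ := h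
  refine ⟨ℓ, fun i => f (ℓ - i), by simp [hf1], by simp [hf0], ?_, ?_⟩
  · intro i _
    exact hfg (ℓ - i) (by omega)
  · intro i hi
    have e1 : ℓ - i = (ℓ - (i + 1)) + 1 := by omega
    beta_reduce
    constructor
    · rw [e1]; exact (hfs (ℓ - (i + 1)) (by omega)).2
    · rw [e1]; exact (hfs (ℓ - (i + 1)) (by omega)).1

end Reconf

/-- CRAWL: the root of a tree can crawl backwards along a directed path of `A`. -/
lemma crawl {A : Finset (V × V)} {k : ℕ} {s t : V}
    (hpath : Relation.ReflTransGen (arcRel A) s t) :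
    ∀ X : Finset (V × V), IsDirTree X t → X ⊆ A → X.card = k → 0 < k →
      ∃ Y, IsDirTree Y s ∧ Y ⊆ A ∧ Y.card = k ∧ Reconf A k X Y := by
  induction hpath using Relation.ReflTransGen.head_induction_on with
  | refl =>
    intro X h1 h2 h3 _
    exact ⟨X, h1, h2, h3, Reconf.refl ⟨h2, ⟨t, h1⟩, h3⟩⟩
  | @head a c harc hpath ih =>
    intro X h1 h2 h3 hk
    obtain ⟨Y', hY't, hY'A, hY'k, hR⟩ := ih X h1 h2 h3 hk
    by_cases hac : a = c
    · exact ⟨Y', hac ▸ hY't, hY'A, hY'k, hR⟩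
    · obtain ⟨Y, hY, hYA, hYk, hd1, hd2⟩ :=
        root_back hY't hY'A (Finset.card_pos.1 (by omega)) harc hac
      refine ⟨Y, hY, hYA, hYk.trans hY'k, hR.trans (Reconf.single ?_ ?_ hd1 hd2)⟩
      · exact ⟨hY'A, ⟨c, hY't⟩, hY'k⟩
      · exact ⟨hYA, ⟨a, hY⟩, hYk.trans hY'k⟩


/-- Same-root reconfiguration: any tree `X` can be reconfigured into `Y` (same root)
following a growing "grounded" prefix `F` of `Y`. -/
lemma l2aux {A : Finset (V × V)} {k : ℕ} {r : V} {Y : Finset (V × V)}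
    (hY : IsDirTree Y r) (hYA : Y ⊆ A) (hYk : Y.card = k) :
    ∀ n (X F : Finset (V × V)), IsDirTree X r → X ⊆ A → X.card = k →
      F ⊆ X → F ⊆ Y → (∀ e ∈ F, Relation.ReflTransGen (arcRel F) r e.1) →
      (Y \ F).card = n → Reconf A k X Y := by
  intro n
  induction n with
  | zero =>
    intro X F hX hXA hXk hFX hFY _ hcard
    have hYF : Y ⊆ F := Finset.sdiff_eq_empty_iff_subset.1 (Finset.card_eq_zero.1 hcard)
    have hXY : Y = X := Finset.eq_of_subset_of_card_le (hYF.trans hFX) (by omega)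
    subst hXY
    exact Reconf.refl ⟨hXA, ⟨r, hX⟩, hXk⟩
  | succ n ih =>
    intro X F hX hXA hXk hFX hFY hgr hcard
    have hne : (Y \ F).Nonempty := Finset.card_pos.1 (by omega)
    obtain ⟨e, heY, heF, hre⟩ := grow hY hFY hne
    have hF'Y : insert e F ⊆ Y := Finset.insert_subset heY hFY
    have hgr' : ∀ f ∈ insert e F, Relation.ReflTransGen (arcRel (insert e F)) r f.1 := by
      intro f hf
      rcases Finset.mem_insert.1 hf with rfl | hf
      · exact reach_mono (Finset.subset_insert _ _) hre
      · exact reach_mono (Finset.subset_insert _ _) (hgr f hf)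
    have hcard' : (Y \ insert e F).card = n := by
      rw [Finset.sdiff_insert, Finset.card_erase_of_mem (Finset.mem_sdiff.2 ⟨heY, heF⟩), hcard]
      omega
    by_cases heX : e ∈ X
    · exact ih X (insert e F) hX hXA hXk (Finset.insert_subset heX hFX) hF'Y hgr' hcard'
    · have heYr : e.2 ≠ r := head_ne_root hY heY
      have hXpos : 0 < X.card := by
        rw [hXk, ← hYk]
        exact Finset.card_pos.2 ⟨e, heY⟩
      by_cases hy : e.2 ∈ arcVerts X
      · -- Case (i): replace the in-arc of e.2 in X by e
        obtain ⟨f, hfX, hf2⟩ := exists_in_arc hX hy heYr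
        have hfe : (f.1, e.2) = f := by rw [← hf2]
        have hfY : f ∉ Y := by
          intro hc
          have hfeq : f = e := in_arc_unique hY hc heY hf2
          exact heX (hfeq ▸ hfX)
        have hfF : f ∉ F := fun hc => hfY (hFY hc)
        have hFsub : F ⊆ X.erase f := fun a ha =>
          Finset.mem_erase.2 ⟨fun h => hfF (h ▸ ha), hFX ha⟩
        have hreach : Relation.ReflTransGen (arcRel (X.erase (f.1, e.2))) r e.1 := by
          rw [hfe]
          exact reach_mono hFsub hre
        have hpy : (f.1, e.2) ∈ X := by rw [hfe]; exact hfX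
        have htree' := parent_swap hX hpy (show (e.1, e.2) ∉ X from heX) hreach
        rw [hfe] at htree'
        have htree : IsDirTree (insert e (X.erase f)) r := htree'
        have hX'A : insert e (X.erase f) ⊆ A := by
          intro a ha
          rcases Finset.mem_insert.1 ha with rfl | ha
          · exact hYA heY
          · exact hXA (Finset.mem_of_mem_erase ha)
        have hX'k : (insert e (X.erase f)).card = k := by
          rw [Finset.card_insert_of_notMem (fun hc => heX (Finset.mem_of_mem_erase hc)),
            Finset.card_erase_of_mem hfX]
          omega
        have hF'X' : insert e F ⊆ insert e (X.erase f) :=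
          Finset.insert_subset (Finset.mem_insert_self _ _)
            (hFsub.trans (Finset.subset_insert _ _))
        have hd := sdiff_swap heX hfX
        refine (Reconf.single ⟨hXA, ⟨r, hX⟩, hXk⟩ ⟨hX'A, ⟨r, htree⟩, hX'k⟩ ?_ ?_).trans
          (ih _ (insert e F) htree hX'A hX'k hF'X' hF'Y hgr' hcard')
        · rw [hd.1, Finset.card_singleton]
        · rw [hd.2, Finset.card_singleton]
      · -- Case (ii): add e as a pendant arc and delete some unneeded leaf arc
        have hrex : Relation.ReflTransGen (arcRel X) r e.1 := reach_mono hFX hre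
        have hZ : IsDirTree (insert e X) r := leaf_add hX hy heYr hrex
        have hF'Z : insert e F ⊆ insert e X :=
          Finset.insert_subset (Finset.mem_insert_self _ _)
            (hFX.trans (Finset.subset_insert _ _))
        have hZcard : (insert e X).card = k + 1 := by
          rw [Finset.card_insert_of_notMem heX, hXk]
        have hneZ : ((insert e X) \ insert e F).Nonempty := by
          by_contra h
          have hsub : insert e X ⊆ insert e F :=
            Finset.sdiff_eq_empty_iff_subset.1 (Finset.not_nonempty_iff_eq_empty.1 h)
          have := Finset.card_le_card (hsub.trans hF'Y)
          rw [hZcard, hYk] at this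
          omega
        obtain ⟨g, hgZ, hgF', hleaf⟩ := exists_leaf hZ hF'Z hgr' hneZ
        have hge : g ≠ e := fun hc => hgF' (hc ▸ Finset.mem_insert_self e F)
        have hgX : g ∈ X := (Finset.mem_insert.1 hgZ).resolve_left hge
        have hX'eq : (insert e X).erase g = insert e (X.erase g) :=
          Finset.erase_insert_of_ne (Ne.symm hge)
        have htree : IsDirTree (insert e (X.erase g)) r := by
          rw [← hX'eq]
          exact leaf_remove hZ hgZ hleaf
        have hX'A : insert e (X.erase g) ⊆ A := by
          intro a ha
          rcases Finset.mem_insert.1 ha with rfl | ha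
          · exact hYA heY
          · exact hXA (Finset.mem_of_mem_erase ha)
        have hX'k : (insert e (X.erase g)).card = k := by
          rw [Finset.card_insert_of_notMem (fun hc => heX (Finset.mem_of_mem_erase hc)),
            Finset.card_erase_of_mem hgX]
          omega
        have hgF : g ∉ F := fun hc => hgF' (Finset.mem_insert_of_mem hc)
        have hF'X' : insert e F ⊆ insert e (X.erase g) :=
          Finset.insert_subset (Finset.mem_insert_self _ _)
            (fun a ha => Finset.mem_insert_of_mem
              (Finset.mem_erase.2 ⟨fun h => hgF (h ▸ ha), hFX ha⟩))
        have hd := sdiff_swap heX hgX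
        refine (Reconf.single ⟨hXA, ⟨r, hX⟩, hXk⟩ ⟨hX'A, ⟨r, htree⟩, hX'k⟩ ?_ ?_).trans
          (ih _ (insert e F) htree hX'A hX'k hF'X' hF'Y hgr' hcard')
        · rw [hd.1, Finset.card_singleton]
        · rw [hd.2, Finset.card_singleton]

lemma same_root {A : Finset (V × V)} {k : ℕ} {r : V} {X Y : Finset (V × V)}
    (hX : IsDirTree X r) (hXA : X ⊆ A) (hXk : X.card = k)
    (hY : IsDirTree Y r) (hYA : Y ⊆ A) (hYk : Y.card = k) : Reconf A k X Y :=
  l2aux hY hYA hYk ((Y \ ∅).card) X ∅ hX hXA hXk (Finset.empty_subset _)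
    (Finset.empty_subset _) (fun e he => absurd he (Finset.notMem_empty e)) rfl

end Stmt10

/-- If `u ≠ v` and `G` has a directed path from `u` to `v` or from `v` to `u`, then any
`u`-directed tree with `k` arcs and any `v`-directed tree with `k` arcs in `G` are
connected by a reconfiguration sequence of directed trees with `k` arcs in `G`. -/
theorem stmt10 {V : Type*} [Fintype V] [DecidableEq V] (A : Finset (V × V))
    (k : ℕ) (hk : 0 < k) (u v : V) (huv : u ≠ v)
    (hpath : Relation.ReflTransGen (arcRel A) u v ∨ Relation.ReflTransGen (arcRel A) v u)
    (T T' : Finset (V × V)) (hTA : T ⊆ A) (hT'A : T' ⊆ A)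
    (hT : IsDirTree T u) (hT' : IsDirTree T' v)
    (hkT : T.card = k) (hkT' : T'.card = k) :
    ∃ ℓ, ∃ f : ℕ → Finset (V × V), f 0 = T ∧ f ℓ = T' ∧
      (∀ i ≤ ℓ, f i ⊆ A ∧ (∃ r, IsDirTree (f i) r) ∧ (f i).card = k) ∧
      (∀ i < ℓ, (f i \ f (i + 1)).card = 1 ∧ (f (i + 1) \ f i).card = 1) := by
  have hR : Stmt10.Reconf A k T T' := by
    rcases hpath with hp | hp
    · -- path u →* v: crawl T' backwards to a tree rooted at u, match with T, reverse
      obtain ⟨Y, hYu, hYA, hYk, hR1⟩ := Stmt10.crawl hp T' hT' hT'A hkT' hk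
      exact (hR1.trans (Stmt10.same_root hYu hYA hYk hT hTA hkT)).symm
    · -- path v →* u: crawl T backwards to a tree rooted at v, match with T'
      obtain ⟨Y, hYv, hYA, hYk, hR1⟩ := Stmt10.crawl hp T hT hTA hkT hk
      exact hR1.trans (Stmt10.same_root hYv hYA hYk hT' hT'A hkT')
  obtain ⟨ℓ, f, h1, h2, h3, h4⟩ := hR
  exact ⟨ℓ, f, h1, h2, fun i hi => h3 i hi, h4⟩
end

section
/- Let G = (V, A) be a finite directed graph, k a positive integer, and u, v distinct vertices of G. Suppose there exists a vertex w ∈ N⁺_G(u) ∩ N⁺_G(v) such that the induced subgraph G[V \ {u, v}] contains a w-directed tree with k − 1 arcs. Then for every u-directed tree T in G with k arcs and every v-directed tree T' in G with k arcs, there exists a reconfiguration sequence between T and T' in which every intermediate subgraph is a directed tree in G with k arcs. -/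
/-- The arc set of the subgraph of `A` induced by all vertices other than `u` and `v`. -/
def inducedAvoid {V : Type*} [DecidableEq V] (A : Finset (V × V)) (u v : V) :
    Finset (V × V) :=
  A.filter fun e => e.1 ≠ u ∧ e.1 ≠ v ∧ e.2 ≠ u ∧ e.2 ≠ v

set_option linter.unusedSectionVars false
section Helpers
variable {V : Type*} [DecidableEq V]

lemma fst_mem_arcVerts {T : Finset (V × V)} {e : V × V} (he : e ∈ T) :
    e.1 ∈ arcVerts T := by
  simp only [arcVerts, Finset.mem_union, Finset.mem_image]
  exact Or.inl ⟨e, he, rfl⟩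

lemma snd_mem_arcVerts {T : Finset (V × V)} {e : V × V} (he : e ∈ T) :
    e.2 ∈ arcVerts T := by
  simp only [arcVerts, Finset.mem_union, Finset.mem_image]
  exact Or.inr ⟨e, he, rfl⟩

lemma exists_of_mem_arcVerts {T : Finset (V × V)} {x : V} (hx : x ∈ arcVerts T) :
    ∃ e ∈ T, e.1 = x ∨ e.2 = x := by
  simp only [arcVerts, Finset.mem_union, Finset.mem_image] at hx
  rcases hx with ⟨e, he, h⟩ | ⟨e, he, h⟩
  · exact ⟨e, he, Or.inl h⟩
  · exact ⟨e, he, Or.inr h⟩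

lemma inDeg_zero_iff {T : Finset (V × V)} {v : V} :
    inDeg T v = 0 ↔ ∀ e ∈ T, e.2 ≠ v := by
  simp [inDeg, Finset.card_eq_zero, Finset.filter_eq_empty_iff]

lemma in_arc_unique {T : Finset (V × V)} {v : V} (h : inDeg T v = 1) :
    ∃ c, (c, v) ∈ T ∧ ∀ e ∈ T, e.2 = v → e = (c, v) := by
  rw [inDeg, Finset.card_eq_one] at h
  obtain ⟨e₀, he₀⟩ := h
  have h₀ : e₀ ∈ T.filter fun e => e.2 = v := by rw [he₀]; exact Finset.mem_singleton_self _
  rw [Finset.mem_filter] at h₀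
  refine ⟨e₀.1, ?_, ?_⟩
  · have : e₀ = (e₀.1, v) := by rw [← h₀.2]
    rw [← this]; exact h₀.1
  · intro e he hev
    have : e ∈ T.filter fun e => e.2 = v := Finset.mem_filter.mpr ⟨he, hev⟩
    rw [he₀, Finset.mem_singleton] at this
    rw [this]
    exact Prod.ext rfl h₀.2

lemma root_mem_arcVerts {T : Finset (V × V)} {r : V} (hT : IsDirTree T r)
    (hne : T.Nonempty) : r ∈ arcVerts T := by
  obtain ⟨e, he⟩ := hne
  have h1 := hT.2.2 e.1 (fst_mem_arcVerts he)
  rcases h1.cases_head with h | ⟨c, hc, _⟩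
  · rw [h]; exact fst_mem_arcVerts he
  · exact fst_mem_arcVerts hc

lemma reach_closure {U : Finset (V × V)} {P : V → Prop}
    (hP : ∀ e ∈ U, P e.1 → P e.2) {r z : V} (hr : P r)
    (h : Relation.ReflTransGen (arcRel U) r z) : P z := by
  induction h with
  | refl => exact hr
  | tail _ hbc ih => exact hP _ hbc ih

lemma reach_transfer_avoid {U W : Finset (V × V)} {q : V} {pq : V × V}
    (hq : ∀ e ∈ U, e.1 ≠ q) (hpq : pq.2 = q)
    (hsub : ∀ e ∈ U, e ≠ pq → e ∈ W) {r z : V}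
    (h : Relation.ReflTransGen (arcRel U) r z) :
    z = q ∨ Relation.ReflTransGen (arcRel W) r z := by
  induction h with
  | refl => exact Or.inr Relation.ReflTransGen.refl
  | @tail b c _ hbc ih =>
    rcases ih with hb | hb
    · exact absurd rfl (hb ▸ hq _ hbc)
    · by_cases hc : (b, c) = pq
      · left; rw [← hpq, ← hc]
      · exact Or.inr (hb.tail (hsub _ hbc hc))

lemma reach_transfer_swap {U W : Finset (V × V)} {e₀ : V × V} {r : V}
    (hb : Relation.ReflTransGen (arcRel W) r e₀.2)
    (hsub : ∀ e ∈ U, e ≠ e₀ → e ∈ W) {z : V}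
    (h : Relation.ReflTransGen (arcRel U) r z) :
    Relation.ReflTransGen (arcRel W) r z := by
  induction h with
  | refl => exact Relation.ReflTransGen.refl
  | @tail b c _ hbc ih =>
    by_cases hc : (b, c) = e₀
    · have : c = e₀.2 := by rw [← hc]
      rw [this]; exact hb
    · exact ih.tail (hsub _ hbc hc)

lemma reach_mono {U W : Finset (V × V)} (h : U ⊆ W) {r z : V}
    (hr : Relation.ReflTransGen (arcRel U) r z) :
    Relation.ReflTransGen (arcRel W) r z := by
  induction hr with
  | refl => exact Relation.ReflTransGen.refl
  | tail _ hbc ih => exact ih.tail (h hbc)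

lemma arcVerts_card {T : Finset (V × V)} {r : V} (hT : IsDirTree T r)
    (hne : T.Nonempty) : (arcVerts T).card = T.card + 1 := by
  have hr0 : ∀ e ∈ T, e.2 ≠ r := inDeg_zero_iff.mp hT.1
  have hins : arcVerts T = insert r (T.image Prod.snd) := by
    ext x
    simp only [Finset.mem_insert, Finset.mem_image]
    constructor
    · intro hx
      by_cases hxr : x = r
      · exact Or.inl hxr
      · have := hT.2.2 x hx
        rcases this.cases_tail with h | ⟨y, _, hyx⟩
        · exact absurd h hxr
        · exact Or.inr ⟨(y, x), hyx, rfl⟩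
    · rintro (rfl | ⟨e, he, h⟩)
      · exact root_mem_arcVerts hT hne
      · exact h ▸ snd_mem_arcVerts he
  rw [hins, Finset.card_insert_of_notMem, Finset.card_image_of_injOn]
  · intro e he e' he' hee
    have hv : e.2 ∈ arcVerts T := snd_mem_arcVerts he
    have hvr : e.2 ≠ r := hr0 e he
    obtain ⟨c, _, hcu⟩ := in_arc_unique (hT.2.1 e.2 hv hvr)
    have h1 := hcu e he rfl
    have h2 := hcu e' he' hee.symm
    rw [h1, h2]
  · intro hmem
    obtain ⟨e, he, hre⟩ := Finset.mem_image.mp hmem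
    exact hr0 e he hre
end Helpers

section Step
variable {V : Type*} [Fintype V] [DecidableEq V]

/-- Measure: number of vertices of `S` not reachable from `r` through shared arcs. -/
noncomputable def unfixed (S T : Finset (V × V)) (r : V) : ℕ :=
  {z : V | z ∈ arcVerts S ∧ ¬ Relation.ReflTransGen (arcRel (T ∩ S)) r z}.ncard

lemma sdiff_insert_erase₁ {α : Type*} [DecidableEq α] {T : Finset α} {x y : α}
    (hy : y ∈ T) (hx : x ∉ T) : T \ insert x (T.erase y) = {y} := by
  ext e
  simp only [Finset.mem_sdiff, Finset.mem_insert, Finset.mem_erase, Finset.mem_singleton,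
    not_or, not_and]
  constructor
  · rintro ⟨heT, _, h⟩
    by_contra hey
    exact (h hey) heT
  · rintro rfl
    exact ⟨hy, fun h => hx (h ▸ hy), fun h => absurd rfl h⟩

lemma sdiff_insert_erase₂ {α : Type*} [DecidableEq α] {T : Finset α} {x y : α}
    (hx : x ∉ T) : insert x (T.erase y) \ T = {x} := by
  ext e
  simp only [Finset.mem_sdiff, Finset.mem_insert, Finset.mem_erase, Finset.mem_singleton]
  constructor
  · rintro ⟨h1 | ⟨_, heT⟩, heT'⟩
    · exact h1
    · exact absurd heT heT'
  · rintro rfl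
    exact ⟨Or.inl rfl, hx⟩

lemma card_insert_erase {α : Type*} [DecidableEq α] {T : Finset α} {x y : α}
    (hy : y ∈ T) (hx : x ∉ T) : (insert x (T.erase y)).card = T.card := by
  rw [Finset.card_insert_of_notMem (fun h => hx (Finset.mem_of_mem_erase h)),
    Finset.card_erase_of_mem hy]
  have : 0 < T.card := Finset.card_pos.mpr ⟨y, hy⟩
  omega

lemma step_exists {S T : Finset (V × V)} {r : V}
    (hS : IsDirTree S r) (hT : IsDirTree T r) (hcard : T.card = S.card) (hne : T ≠ S) :
    ∃ T₂, IsDirTree T₂ r ∧ T₂ ⊆ T ∪ S ∧ T₂.card = T.card ∧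
      (T \ T₂).card = 1 ∧ (T₂ \ T).card = 1 ∧ unfixed S T₂ r < unfixed S T r := by
  classical
  set Reach := fun z => Relation.ReflTransGen (arcRel (T ∩ S)) r z with hReachDef
  have hTne : T.Nonempty := by
    rcases Finset.eq_empty_or_nonempty T with h | h
    · exfalso
      apply hne
      rw [h]
      have : S.card = 0 := by rw [← hcard, h]; simp
      rw [Finset.card_eq_zero.mp this]
    · exact h
  have hSne : S.Nonempty := by
    rw [← Finset.card_pos, ← hcard, Finset.card_pos]; exact hTne
  have hrT : r ∈ arcVerts T := root_mem_arcVerts hT hTne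
  have hSr0 : ∀ e ∈ S, e.2 ≠ r := inDeg_zero_iff.mp hS.1
  have hTr0 : ∀ e ∈ T, e.2 ≠ r := inDeg_zero_iff.mp hT.1
  have hReachT : ∀ z, Reach z → z ∈ arcVerts T := by
    intro z hz
    rcases hz.cases_tail with h | ⟨y, _, hyz⟩
    · rw [h]; exact hrT
    · exact snd_mem_arcVerts (Finset.mem_inter.mp hyz).1
  have hReachS : ∀ z, Reach z → z ∈ arcVerts S := by
    intro z hz
    rcases hz.cases_tail with h | ⟨y, _, hyz⟩
    · rw [h]; exact root_mem_arcVerts hS hSne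
    · exact snd_mem_arcVerts (Finset.mem_inter.mp hyz).2
  -- every reached vertex other than r has its (unique in both) in-arc shared
  have hshared : ∀ z, Reach z → z ≠ r → ∃ y, Reach y ∧ (y, z) ∈ T ∩ S ∧
      (∀ e ∈ T, e.2 = z → e = (y, z)) ∧ (∀ e ∈ S, e.2 = z → e = (y, z)) := by
    intro z hz hzr
    rcases hz.cases_tail with h | ⟨y, hy, hyz⟩
    · exact absurd h hzr
    · have hmem : (y, z) ∈ T ∩ S := hyz
      have hzT : z ∈ arcVerts T := snd_mem_arcVerts (Finset.mem_inter.mp hmem).1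
      have hzS : z ∈ arcVerts S := snd_mem_arcVerts (Finset.mem_inter.mp hmem).2
      obtain ⟨c, hc, hcu⟩ := in_arc_unique (hT.2.1 z hzT hzr)
      obtain ⟨d, hd, hdu⟩ := in_arc_unique (hS.2.1 z hzS hzr)
      have h1 : (y, z) = (c, z) := hcu (y, z) (Finset.mem_inter.mp hmem).1 rfl
      have h2 : (y, z) = (d, z) := hdu (y, z) (Finset.mem_inter.mp hmem).2 rfl
      refine ⟨y, hy, hmem, ?_, ?_⟩
      · intro e he h3; rw [hcu e he h3, ← h1]
      · intro e he h3; rw [hdu e he h3, ← h2]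
  -- find an arc (a, b) of S \ T with a reached, b not reached
  have hab : ∃ e ∈ S, Reach e.1 ∧ ¬ Reach e.2 := by
    have hb₀ : ∃ b₀ ∈ arcVerts S, ¬ Reach b₀ := by
      by_contra h
      push_neg at h
      apply hne
      refine (Finset.eq_of_subset_of_card_le ?_ (le_of_eq hcard)).symm
      intro e he
      obtain ⟨y, _, hmem, _, huS⟩ := hshared e.2 (h e.2 (snd_mem_arcVerts he)) (hSr0 e he)
      rw [huS e he rfl]
      exact (Finset.mem_inter.mp hmem).1
    obtain ⟨b₀, hb₀S, hb₀⟩ := hb₀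
    by_contra h
    push_neg at h
    exact hb₀ (reach_closure h Relation.ReflTransGen.refl (hS.2.2 b₀ hb₀S))
  obtain ⟨⟨a, b⟩, habS, hra, hrb⟩ := hab
  simp only at hra hrb
  have habT : (a, b) ∉ T := fun hmem =>
    hrb (hra.tail (Finset.mem_inter.mpr ⟨hmem, habS⟩))
  have hbr : b ≠ r := fun h => hrb (h ▸ Relation.ReflTransGen.refl)
  have hbS : b ∈ arcVerts S := snd_mem_arcVerts habS
  have haT : a ∈ arcVerts T := hReachT a hra
  have hbSu : ∀ e ∈ S, e.2 = b → e = (a, b) := by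
    obtain ⟨d, hd, hdu⟩ := in_arc_unique (hS.2.1 b hbS hbr)
    have h1 : (a, b) = (d, b) := hdu (a, b) habS rfl
    intro e he h2
    rw [hdu e he h2, ← h1]
  by_cases hbT : b ∈ arcVerts T
  · -- Case 1: swap the in-arc of b
    obtain ⟨c, hcb, hcu⟩ := in_arc_unique (hT.2.1 b hbT hbr)
    have hcbS : (c, b) ∉ S := by
      intro h
      have h1 : (c, b) = (a, b) := hbSu (c, b) h rfl
      exact habT (h1 ▸ hcb)
    set T₂ := insert (a, b) (T.erase (c, b)) with hT₂
    have habT₂ : (a, b) ∈ T₂ := Finset.mem_insert_self _ _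
    have hTS_sub : T ∩ S ⊆ T₂ := by
      intro e he
      have h1 := Finset.mem_inter.mp he
      have h2 : e ≠ (c, b) := fun h => hcbS (h ▸ h1.2)
      exact Finset.mem_insert_of_mem (Finset.mem_erase.mpr ⟨h2, h1.1⟩)
    have hsub' : ∀ e ∈ T, e ≠ (c, b) → e ∈ T₂ := fun e he h =>
      Finset.mem_insert_of_mem (Finset.mem_erase.mpr ⟨h, he⟩)
    have hb2 : Relation.ReflTransGen (arcRel T₂) r b :=
      (reach_mono hTS_sub hra).tail habT₂
    have htrans : ∀ z, Relation.ReflTransGen (arcRel T) r z →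
        Relation.ReflTransGen (arcRel T₂) r z :=
      fun z => reach_transfer_swap (e₀ := (c, b)) hb2 hsub'
    have hverts : ∀ z ∈ arcVerts T₂, z = b ∨ z ∈ arcVerts T := by
      intro z hz
      obtain ⟨e, he, h⟩ := exists_of_mem_arcVerts hz
      rcases Finset.mem_insert.mp he with rfl | he'
      · rcases h with h | h
        · right; rw [← h]; exact haT
        · left; exact h.symm
      · right
        have heT := Finset.mem_of_mem_erase he'
        rcases h with h | h
        · exact h ▸ fst_mem_arcVerts heT
        · exact h ▸ snd_mem_arcVerts heT
    have hdegb : inDeg T₂ b = 1 := by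
      have hfil : T₂.filter (fun e => e.2 = b) = {(a, b)} := by
        ext e
        simp only [Finset.mem_filter, Finset.mem_singleton]
        constructor
        · rintro ⟨he, h2⟩
          rcases Finset.mem_insert.mp he with rfl | he'
          · rfl
          · exfalso
            have h3 := Finset.mem_erase.mp he'
            exact h3.1 (hcu e h3.2 h2)
        · rintro rfl
          exact ⟨habT₂, rfl⟩
      rw [inDeg, hfil, Finset.card_singleton]
    have hT₂tree : IsDirTree T₂ r := by
      refine ⟨?_, ?_, ?_⟩
      · rw [inDeg_zero_iff]
        intro e he
        rcases Finset.mem_insert.mp he with rfl | he'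
        · exact hbr
        · exact hTr0 e (Finset.mem_of_mem_erase he')
      · intro z hz hzr
        by_cases hzb : z = b
        · rw [hzb]; exact hdegb
        · have hfil : T₂.filter (fun e => e.2 = z) = T.filter (fun e => e.2 = z) := by
            ext e
            simp only [Finset.mem_filter]
            constructor
            · rintro ⟨he, h2⟩
              rcases Finset.mem_insert.mp he with rfl | he'
              · exact absurd h2.symm hzb
              · exact ⟨Finset.mem_of_mem_erase he', h2⟩
            · rintro ⟨he, h2⟩
              refine ⟨hsub' e he ?_, h2⟩
              rintro rfl
              exact hzb h2.symm
          have hzT : z ∈ arcVerts T := (hverts z hz).resolve_left hzb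
          rw [inDeg, hfil]
          exact hT.2.1 z hzT hzr
      · intro z hz
        rcases hverts z hz with rfl | hzT
        · exact hb2
        · exact htrans z (hT.2.2 z hzT)
    have hsubsh : T ∩ S ⊆ T₂ ∩ S := fun e he =>
      Finset.mem_inter.mpr ⟨hTS_sub he, (Finset.mem_inter.mp he).2⟩
    have hb2' : Relation.ReflTransGen (arcRel (T₂ ∩ S)) r b :=
      (reach_mono hsubsh hra).tail (Finset.mem_inter.mpr ⟨habT₂, habS⟩)
    have hssub : {z : V | z ∈ arcVerts S ∧ ¬ Relation.ReflTransGen (arcRel (T₂ ∩ S)) r z}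
        ⊆ {z : V | z ∈ arcVerts S ∧ ¬ Relation.ReflTransGen (arcRel (T ∩ S)) r z} := by
      rintro z ⟨h1, h2⟩
      exact ⟨h1, fun h => h2 (reach_mono hsubsh h)⟩
    have hss : {z : V | z ∈ arcVerts S ∧ ¬ Relation.ReflTransGen (arcRel (T₂ ∩ S)) r z}
        ⊂ {z : V | z ∈ arcVerts S ∧ ¬ Relation.ReflTransGen (arcRel (T ∩ S)) r z} := by
      rw [Set.ssubset_iff_of_subset hssub]
      exact ⟨b, ⟨hbS, hrb⟩, fun hc => hc.2 hb2'⟩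
    refine ⟨T₂, hT₂tree, ?_, card_insert_erase hcb habT, ?_, ?_, ?_⟩
    · intro e he
      rcases Finset.mem_insert.mp he with rfl | he'
      · exact Finset.mem_union_right _ habS
      · exact Finset.mem_union_left _ (Finset.mem_of_mem_erase he')
    · rw [sdiff_insert_erase₁ hcb habT]; exact Finset.card_singleton _
    · rw [sdiff_insert_erase₂ habT]; exact Finset.card_singleton _
    · unfold unfixed
      exact Set.ncard_lt_ncard hss (Set.toFinite _)
  · -- Case 2: b is a new vertex; relocate a leaf arc
    have hxex : ∃ x ∈ arcVerts T, ¬ Reach x := by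
      by_contra h
      push_neg at h
      have hsub : arcVerts T ⊆ (arcVerts S).erase b := by
        intro z hz
        exact Finset.mem_erase.mpr ⟨fun hzb => hrb (hzb ▸ h z hz), hReachS z (h z hz)⟩
      have h1 := Finset.card_le_card hsub
      have h2 : ((arcVerts S).erase b).card = (arcVerts S).card - 1 :=
        Finset.card_erase_of_mem hbS
      rw [arcVerts_card hT hTne] at h1
      rw [arcVerts_card hS hSne] at h2
      omega
    have hleaf : ∃ q ∈ arcVerts T, ¬ Reach q ∧ ∀ e ∈ T, e.1 ≠ q := by
      by_contra hcon
      push_neg at hcon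
      set Rf : Finset V := Finset.univ.filter (fun z => Reach z) with hRf
      have hRfT : Rf ⊆ arcVerts T := fun z hz => hReachT z (Finset.mem_filter.mp hz).2
      have hrRf : r ∈ Rf :=
        Finset.mem_filter.mpr ⟨Finset.mem_univ _, Relation.ReflTransGen.refl⟩
      set F1 := T.filter (fun e => Reach e.1 ∧ Reach e.2) with hF1
      set F2 := T.filter (fun e => ¬ Reach e.1) with hF2
      set F3 := T.filter (fun e => Reach e.1 ∧ ¬ Reach e.2) with hF3
      have hc1 : (Rf.erase r).card ≤ F1.card := by
        have hsub : Rf.erase r ⊆ F1.image Prod.snd := by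
          intro z hz
          have h1 := Finset.mem_erase.mp hz
          have h2 : Reach z := (Finset.mem_filter.mp h1.2).2
          obtain ⟨y, hy, hmem, _, _⟩ := hshared z h2 h1.1
          exact Finset.mem_image.mpr
            ⟨(y, z), Finset.mem_filter.mpr ⟨(Finset.mem_inter.mp hmem).1, hy, h2⟩, rfl⟩
        exact le_trans (Finset.card_le_card hsub) Finset.card_image_le
      have hc2 : (arcVerts T \ Rf).card ≤ F2.card := by
        have hsub : arcVerts T \ Rf ⊆ F2.image Prod.fst := by
          intro x hx
          have h1 := Finset.mem_sdiff.mp hx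
          have h2 : ¬ Reach x := fun h =>
            h1.2 (Finset.mem_filter.mpr ⟨Finset.mem_univ _, h⟩)
          obtain ⟨e, he, he1⟩ := hcon x h1.1 h2
          exact Finset.mem_image.mpr
            ⟨e, Finset.mem_filter.mpr ⟨he, fun hR => h2 (he1 ▸ hR)⟩, he1⟩
        exact le_trans (Finset.card_le_card hsub) Finset.card_image_le
      have hc3 : 1 ≤ F3.card := by
        obtain ⟨x, hxT, hxR⟩ := hxex
        have hex : ∃ e ∈ T, Reach e.1 ∧ ¬ Reach e.2 := by
          by_contra h
          push_neg at h
          exact hxR (reach_closure h Relation.ReflTransGen.refl (hT.2.2 x hxT))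
        obtain ⟨e, he, h1, h2⟩ := hex
        exact Finset.card_pos.mpr ⟨e, Finset.mem_filter.mpr ⟨he, h1, h2⟩⟩
      have hd12 : Disjoint F1 F2 := by
        rw [Finset.disjoint_left]
        intro e h1 h2
        exact (Finset.mem_filter.mp h2).2 (Finset.mem_filter.mp h1).2.1
      have hd13 : Disjoint (F1 ∪ F2) F3 := by
        rw [Finset.disjoint_left]
        intro e h1 h2
        have h3 := (Finset.mem_filter.mp h2).2
        rcases Finset.mem_union.mp h1 with h | h
        · exact h3.2 (Finset.mem_filter.mp h).2.2
        · exact (Finset.mem_filter.mp h).2 h3.1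
      have hsumle : F1.card + F2.card + F3.card ≤ T.card := by
        rw [← Finset.card_union_of_disjoint hd12, ← Finset.card_union_of_disjoint hd13]
        apply Finset.card_le_card
        intro e he
        rcases Finset.mem_union.mp he with h | h
        · rcases Finset.mem_union.mp h with h' | h'
          · exact (Finset.mem_filter.mp h').1
          · exact (Finset.mem_filter.mp h').1
        · exact (Finset.mem_filter.mp h).1
      have he1 : (Rf.erase r).card = Rf.card - 1 := Finset.card_erase_of_mem hrRf
      have he2 : (arcVerts T \ Rf).card = (arcVerts T).card - Rf.card :=
        Finset.card_sdiff_of_subset hRfT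
      have he3 : (arcVerts T).card = T.card + 1 := arcVerts_card hT hTne
      have he4 : 1 ≤ Rf.card := Finset.card_pos.mpr ⟨r, hrRf⟩
      have he5 : Rf.card ≤ (arcVerts T).card := Finset.card_le_card hRfT
      omega
    obtain ⟨q, hqT, hqR, hqout⟩ := hleaf
    have hqr : q ≠ r := fun h => hqR (h ▸ Relation.ReflTransGen.refl)
    obtain ⟨p, hpq, hpu⟩ := in_arc_unique (hT.2.1 q hqT hqr)
    have hqa : a ≠ q := fun h => hqR (h ▸ hra)
    have hqb : q ≠ b := fun h => hbT (h ▸ hqT)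
    set T₂ := insert (a, b) (T.erase (p, q)) with hT₂
    have habT₂ : (a, b) ∈ T₂ := Finset.mem_insert_self _ _
    have hsub' : ∀ e ∈ T, e ≠ (p, q) → e ∈ T₂ := fun e he h =>
      Finset.mem_insert_of_mem (Finset.mem_erase.mpr ⟨h, he⟩)
    have hsubsh : ∀ e ∈ T ∩ S, e ≠ (p, q) → e ∈ T₂ ∩ S := by
      intro e he h
      have h1 := Finset.mem_inter.mp he
      exact Finset.mem_inter.mpr ⟨hsub' e h1.1 h, h1.2⟩
    have hqout2 : ∀ e ∈ T ∩ S, e.1 ≠ q := fun e he => hqout e (Finset.mem_inter.mp he).1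
    have htr_sh : ∀ z, Reach z → Relation.ReflTransGen (arcRel (T₂ ∩ S)) r z := by
      intro z hz
      rcases reach_transfer_avoid hqout2 rfl hsubsh hz with h | h
      · exact absurd (h ▸ hz) hqR
      · exact h
    have hb2' : Relation.ReflTransGen (arcRel (T₂ ∩ S)) r b :=
      (htr_sh a hra).tail (Finset.mem_inter.mpr ⟨habT₂, habS⟩)
    have hb2 : Relation.ReflTransGen (arcRel T₂) r b :=
      reach_mono Finset.inter_subset_left hb2'
    have htrans : ∀ z, Relation.ReflTransGen (arcRel T) r z →
        z = q ∨ Relation.ReflTransGen (arcRel T₂) r z :=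
      fun z => reach_transfer_avoid hqout rfl hsub'
    have hverts : ∀ z ∈ arcVerts T₂, z = a ∨ z = b ∨ (z ∈ arcVerts T ∧ z ≠ q) := by
      intro z hz
      obtain ⟨e, he, h⟩ := exists_of_mem_arcVerts hz
      rcases Finset.mem_insert.mp he with rfl | he'
      · rcases h with h | h
        · exact Or.inl h.symm
        · exact Or.inr (Or.inl h.symm)
      · have h1 := Finset.mem_erase.mp he'
        right; right
        rcases h with h | h
        · exact ⟨h ▸ fst_mem_arcVerts h1.2, fun hzq => hqout e h1.2 (hzq ▸ h)⟩
        · exact ⟨h ▸ snd_mem_arcVerts h1.2, fun hzq => h1.1 (hpu e h1.2 (hzq ▸ h))⟩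
    have hdegb : inDeg T₂ b = 1 := by
      have hfil : T₂.filter (fun e => e.2 = b) = {(a, b)} := by
        ext e
        simp only [Finset.mem_filter, Finset.mem_singleton]
        constructor
        · rintro ⟨he, h2⟩
          rcases Finset.mem_insert.mp he with rfl | he'
          · rfl
          · exact absurd (h2 ▸ snd_mem_arcVerts (Finset.mem_of_mem_erase he')) hbT
        · rintro rfl
          exact ⟨habT₂, rfl⟩
      rw [inDeg, hfil, Finset.card_singleton]
    have hT₂tree : IsDirTree T₂ r := by
      refine ⟨?_, ?_, ?_⟩
      · rw [inDeg_zero_iff]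
        intro e he
        rcases Finset.mem_insert.mp he with rfl | he'
        · exact hbr
        · exact hTr0 e (Finset.mem_of_mem_erase he')
      · intro z hz hzr
        by_cases hzb : z = b
        · rw [hzb]; exact hdegb
        · have hzq : z ≠ q := by
            rcases hverts z hz with rfl | h1 | h1
            · exact fun h => hqa h
            · exact absurd h1 hzb
            · exact h1.2
          have hfil : T₂.filter (fun e => e.2 = z) = T.filter (fun e => e.2 = z) := by
            ext e
            simp only [Finset.mem_filter]
            constructor
            · rintro ⟨he, h2⟩
              rcases Finset.mem_insert.mp he with rfl | he'
              · exact absurd h2.symm hzb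
              · exact ⟨Finset.mem_of_mem_erase he', h2⟩
            · rintro ⟨he, h2⟩
              refine ⟨hsub' e he ?_, h2⟩
              rintro rfl
              exact hzq h2.symm
          have hzT : z ∈ arcVerts T := by
            rcases hverts z hz with rfl | h1 | h1
            · exact haT
            · exact absurd h1 hzb
            · exact h1.1
          rw [inDeg, hfil]
          exact hT.2.1 z hzT hzr
      · intro z hz
        rcases hverts z hz with rfl | rfl | h1
        · exact reach_mono Finset.inter_subset_left (htr_sh z hra)
        · exact hb2
        · exact (htrans z (hT.2.2 z h1.1)).resolve_left h1.2
    have hssub : {z : V | z ∈ arcVerts S ∧ ¬ Relation.ReflTransGen (arcRel (T₂ ∩ S)) r z}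
        ⊆ {z : V | z ∈ arcVerts S ∧ ¬ Relation.ReflTransGen (arcRel (T ∩ S)) r z} := by
      rintro z ⟨h1, h2⟩
      exact ⟨h1, fun h => h2 (htr_sh z h)⟩
    have hss : {z : V | z ∈ arcVerts S ∧ ¬ Relation.ReflTransGen (arcRel (T₂ ∩ S)) r z}
        ⊂ {z : V | z ∈ arcVerts S ∧ ¬ Relation.ReflTransGen (arcRel (T ∩ S)) r z} := by
      rw [Set.ssubset_iff_of_subset hssub]
      exact ⟨b, ⟨hbS, hrb⟩, fun hc => hc.2 hb2'⟩
    refine ⟨T₂, hT₂tree, ?_, card_insert_erase hpq habT, ?_, ?_, ?_⟩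
    · intro e he
      rcases Finset.mem_insert.mp he with rfl | he'
      · exact Finset.mem_union_right _ habS
      · exact Finset.mem_union_left _ (Finset.mem_of_mem_erase he')
    · rw [sdiff_insert_erase₁ hpq habT]; exact Finset.card_singleton _
    · rw [sdiff_insert_erase₂ habT]; exact Finset.card_singleton _
    · unfold unfixed
      exact Set.ncard_lt_ncard hss (Set.toFinite _)
end Step

section Seq
variable {V : Type*} [Fintype V] [DecidableEq V]

def GoodSeq (A : Finset (V × V)) (k : ℕ) (X Y : Finset (V × V)) : Prop :=
  ∃ ℓ, ∃ f : ℕ → Finset (V × V), f 0 = X ∧ f ℓ = Y ∧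
    (∀ i ≤ ℓ, f i ⊆ A ∧ (∃ r, IsDirTree (f i) r) ∧ (f i).card = k) ∧
    (∀ i < ℓ, (f i \ f (i + 1)).card = 1 ∧ (f (i + 1) \ f i).card = 1)

lemma GoodSeq.rfl' {A : Finset (V × V)} {k : ℕ} {X : Finset (V × V)}
    (h1 : X ⊆ A) (h2 : ∃ r, IsDirTree X r) (h3 : X.card = k) : GoodSeq A k X X :=
  ⟨0, fun _ => X, rfl, rfl, fun _ _ => ⟨h1, h2, h3⟩,
    fun i hi => absurd hi (Nat.not_lt_zero i)⟩

lemma GoodSeq.trans {A : Finset (V × V)} {k : ℕ} {X Y Z : Finset (V × V)}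
    (h1 : GoodSeq A k X Y) (h2 : GoodSeq A k Y Z) : GoodSeq A k X Z := by
  obtain ⟨ℓ₁, f₁, hf10, hf1l, hf1g, hf1s⟩ := h1
  obtain ⟨ℓ₂, f₂, hf20, hf2l, hf2g, hf2s⟩ := h2
  refine ⟨ℓ₁ + ℓ₂, fun i => if i ≤ ℓ₁ then f₁ i else f₂ (i - ℓ₁), ?_, ?_, ?_, ?_⟩
  · simp only [Nat.zero_le, if_pos]; exact hf10
  · by_cases h : ℓ₁ + ℓ₂ ≤ ℓ₁
    · have hz : ℓ₂ = 0 := by omega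
      have he : ℓ₁ + ℓ₂ = ℓ₁ := by omega
      simp only [he, le_refl, if_true, hf1l]
      rw [← hf20, ← hz]
      exact hf2l
    · simp only [if_neg h]
      have he : ℓ₁ + ℓ₂ - ℓ₁ = ℓ₂ := by omega
      rw [he, hf2l]
  · intro i hi
    by_cases h : i ≤ ℓ₁
    · simp only [if_pos h]; exact hf1g i h
    · simp only [if_neg h]; exact hf2g (i - ℓ₁) (by omega)
  · intro i hi
    by_cases h : i + 1 ≤ ℓ₁
    · simp only [if_pos h, if_pos (show i ≤ ℓ₁ by omega)]
      exact hf1s i (by omega)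
    · by_cases h' : i ≤ ℓ₁
      · have hieq : i = ℓ₁ := by omega
        have h0 : 0 < ℓ₂ := by omega
        have hh := hf2s 0 h0
        simp only [if_pos h', if_neg h]
        rw [hieq, hf1l, ← hf20]
        have harith : ℓ₁ + 1 - ℓ₁ = 1 := by omega
        rw [harith]
        exact hh
      · simp only [if_neg h', if_neg h]
        have he : i + 1 - ℓ₁ = (i - ℓ₁) + 1 := by omega
        rw [he]
        exact hf2s (i - ℓ₁) (by omega)

lemma GoodSeq.cons {A : Finset (V × V)} {k : ℕ} {X Y Z : Finset (V × V)}
    (hX1 : X ⊆ A) (hX2 : ∃ r, IsDirTree X r) (hX3 : X.card = k)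
    (hY1 : Y ⊆ A) (hY2 : ∃ r, IsDirTree Y r) (hY3 : Y.card = k)
    (hd1 : (X \ Y).card = 1) (hd2 : (Y \ X).card = 1)
    (h : GoodSeq A k Y Z) : GoodSeq A k X Z := by
  refine GoodSeq.trans ?_ h
  refine ⟨1, fun i => if i = 0 then X else Y, if_pos rfl, if_neg (by omega), ?_, ?_⟩
  · intro i _
    by_cases h0 : i = 0
    · simp only [if_pos h0]; exact ⟨hX1, hX2, hX3⟩
    · simp only [if_neg h0]; exact ⟨hY1, hY2, hY3⟩
  · intro i hi
    have h0 : i = 0 := by omega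
    subst h0
    have e1 : (if (0 : ℕ) = 0 then X else Y) = X := if_pos rfl
    have e2 : (if (0 + 1 : ℕ) = 0 then X else Y) = Y := if_neg (by omega)
    show ((if (0 : ℕ) = 0 then X else Y) \ (if (0 + 1 : ℕ) = 0 then X else Y)).card = 1 ∧
      ((if (0 + 1 : ℕ) = 0 then X else Y) \ (if (0 : ℕ) = 0 then X else Y)).card = 1
    rw [e1, e2]
    exact ⟨hd1, hd2⟩

lemma sameRoot {A S : Finset (V × V)} {r : V} (hS : IsDirTree S r) (hSA : S ⊆ A) :
    ∀ n T, unfixed S T r ≤ n → IsDirTree T r → T ⊆ A → T.card = S.card →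
      GoodSeq A S.card T S := by
  intro n
  induction n with
  | zero =>
    intro T hμ hT hTA hc
    by_cases hTS : T = S
    · subst hTS; exact GoodSeq.rfl' hTA ⟨r, hT⟩ rfl
    · obtain ⟨T₂, _, _, _, _, _, hlt⟩ := step_exists hS hT hc hTS
      omega
  | succ n ih =>
    intro T hμ hT hTA hc
    by_cases hTS : T = S
    · subst hTS; exact GoodSeq.rfl' hTA ⟨r, hT⟩ rfl
    · obtain ⟨T₂, h2tree, h2sub, h2card, hd1, hd2, hlt⟩ := step_exists hS hT hc hTS
      have hT₂A : T₂ ⊆ A := h2sub.trans (Finset.union_subset hTA hSA)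
      exact GoodSeq.cons hTA ⟨r, hT⟩ hc hT₂A ⟨r, h2tree⟩ (h2card.trans hc) hd1 hd2
        (ih T₂ (by omega) h2tree hT₂A (h2card.trans hc))

lemma isDirTree_insert_root {T : Finset (V × V)} {w r : V} (hT : IsDirTree T w)
    (hrT : ∀ e ∈ T, e.1 ≠ r ∧ e.2 ≠ r) (hwr : w ≠ r) :
    IsDirTree (insert (r, w) T) r := by
  have hdegw : inDeg (insert (r, w) T) w = 1 := by
    have hfil : (insert (r, w) T).filter (fun e => e.2 = w) = {(r, w)} := by
      ext e
      simp only [Finset.mem_filter, Finset.mem_singleton]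
      constructor
      · rintro ⟨he, h2⟩
        rcases Finset.mem_insert.mp he with rfl | he'
        · rfl
        · exact absurd h2 (inDeg_zero_iff.mp hT.1 e he')
      · rintro rfl; exact ⟨Finset.mem_insert_self _ _, rfl⟩
    rw [inDeg, hfil, Finset.card_singleton]
  refine ⟨?_, ?_, ?_⟩
  · rw [inDeg_zero_iff]
    intro e he
    rcases Finset.mem_insert.mp he with rfl | he'
    · exact hwr
    · exact (hrT e he').2
  · intro z hz hzr
    by_cases hzw : z = w
    · rw [hzw]; exact hdegw
    · have hfil : (insert (r, w) T).filter (fun e => e.2 = z) =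
          T.filter (fun e => e.2 = z) := by
        ext e
        simp only [Finset.mem_filter, Finset.mem_insert]
        constructor
        · rintro ⟨rfl | he', h2⟩
          · exact absurd h2.symm hzw
          · exact ⟨he', h2⟩
        · rintro ⟨he, h2⟩; exact ⟨Or.inr he, h2⟩
      rw [inDeg, hfil]
      have hzT : z ∈ arcVerts T := by
        obtain ⟨e, he, h⟩ := exists_of_mem_arcVerts hz
        rcases Finset.mem_insert.mp he with rfl | he'
        · rcases h with h | h
          · exact absurd h.symm hzr
          · exact absurd h.symm hzw
        · rcases h with h | h
          · exact h ▸ fst_mem_arcVerts he'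
          · exact h ▸ snd_mem_arcVerts he'
      exact hT.2.1 z hzT hzw
  · intro z hz
    have hstep : Relation.ReflTransGen (arcRel (insert (r, w) T)) r w :=
      Relation.ReflTransGen.single (Finset.mem_insert_self _ _)
    obtain ⟨e, he, h⟩ := exists_of_mem_arcVerts hz
    rcases Finset.mem_insert.mp he with rfl | he'
    · rcases h with h | h
      · subst h; exact Relation.ReflTransGen.refl
      · subst h; exact hstep
    · have hzT : z ∈ arcVerts T := by
        rcases h with h | h
        · exact h ▸ fst_mem_arcVerts he'
        · exact h ▸ snd_mem_arcVerts he'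
      exact hstep.trans (reach_mono (Finset.subset_insert _ _) (hT.2.2 z hzT))

end Seq



/-- If `u ≠ v` and there is a common out-neighbor `w` of `u` and `v` such that
`G[V ∖ {u, v}]` contains a `w`-directed tree with `k - 1` arcs, then any `u`-directed
tree with `k` arcs and any `v`-directed tree with `k` arcs in `G` are connected by a
reconfiguration sequence of directed trees with `k` arcs in `G`. -/
theorem stmt11 {V : Type*} [Fintype V] [DecidableEq V] (A : Finset (V × V))
    (k : ℕ) (hk : 0 < k) (u v : V) (huv : u ≠ v)
    (hw : ∃ w, (u, w) ∈ A ∧ (v, w) ∈ A ∧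
      ∃ T'', T'' ⊆ inducedAvoid A u v ∧ IsDirTree T'' w ∧ T''.card = k - 1)
    (T T' : Finset (V × V)) (hTA : T ⊆ A) (hT'A : T' ⊆ A)
    (hT : IsDirTree T u) (hT' : IsDirTree T' v)
    (hkT : T.card = k) (hkT' : T'.card = k) :
    ∃ ℓ, ∃ f : ℕ → Finset (V × V), f 0 = T ∧ f ℓ = T' ∧
      (∀ i ≤ ℓ, f i ⊆ A ∧ (∃ r, IsDirTree (f i) r) ∧ (f i).card = k) ∧
      (∀ i < ℓ, (f i \ f (i + 1)).card = 1 ∧ (f (i + 1) \ f i).card = 1) := by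
  classical
  obtain ⟨w, huwA, hvwA, T'', hT''sub, hT''tree, hT''card⟩ := hw
  by_cases hk1 : k = 1
  · -- one-step reconfiguration between single arcs
    have hTu : ∀ e ∈ T, e.1 = u := by
      intro e he
      have h1 := hT.2.2 e.1 (fst_mem_arcVerts he)
      rcases h1.cases_head with h | ⟨c, hc, _⟩
      · exact h.symm
      · obtain ⟨e₀, he₀⟩ := Finset.card_eq_one.mp (hkT.trans hk1)
        have hc' : (u, c) ∈ T := hc
        rw [he₀, Finset.mem_singleton] at he hc'
        have : e = (u, c) := by rw [he, ← hc']
        rw [this]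
    have hT'v : ∀ e ∈ T', e.1 = v := by
      intro e he
      have h1 := hT'.2.2 e.1 (fst_mem_arcVerts he)
      rcases h1.cases_head with h | ⟨c, hc, _⟩
      · exact h.symm
      · obtain ⟨e₀, he₀⟩ := Finset.card_eq_one.mp (hkT'.trans hk1)
        have hc' : (v, c) ∈ T' := hc
        rw [he₀, Finset.mem_singleton] at he hc'
        have : e = (v, c) := by rw [he, ← hc']
        rw [this]
    have hdisj : Disjoint T T' := by
      rw [Finset.disjoint_left]
      intro e he he'
      exact huv ((hTu e he).symm.trans (hT'v e he'))
    refine ⟨1, fun i => if i = 0 then T else T', by simp, by simp, ?_, ?_⟩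
    · intro i _
      by_cases h0 : i = 0
      · simp only [if_pos h0]; exact ⟨hTA, ⟨u, hT⟩, hkT⟩
      · simp only [if_neg h0]; exact ⟨hT'A, ⟨v, hT'⟩, hkT'⟩
    · intro i hi
      have h0 : i = 0 := by omega
      subst h0
      have e1 : (if (0 : ℕ) = 0 then T else T') = T := if_pos rfl
      have e2 : (if (0 + 1 : ℕ) = 0 then T else T') = T' := if_neg (by omega)
      show ((if (0 : ℕ) = 0 then T else T') \ (if (0 + 1 : ℕ) = 0 then T else T')).card = 1 ∧
        ((if (0 + 1 : ℕ) = 0 then T else T') \ (if (0 : ℕ) = 0 then T else T')).card = 1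
      rw [e1, e2]
      constructor
      · rw [Finset.sdiff_eq_self_of_disjoint hdisj, hkT, hk1]
      · rw [Finset.sdiff_eq_self_of_disjoint hdisj.symm, hkT', hk1]
  · -- k ≥ 2
    have hk2 : 2 ≤ k := by omega
    have hT''ne : T''.Nonempty := by
      rw [← Finset.card_pos, hT''card]; omega
    have hwAvoid : ∀ e ∈ T'', e.1 ≠ u ∧ e.1 ≠ v ∧ e.2 ≠ u ∧ e.2 ≠ v := by
      intro e he
      exact (Finset.mem_filter.mp (hT''sub he)).2
    have hwuv : w ≠ u ∧ w ≠ v := by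
      have hm : w ∈ arcVerts T'' := root_mem_arcVerts hT''tree hT''ne
      obtain ⟨e, he, h⟩ := exists_of_mem_arcVerts hm
      obtain ⟨h1, h2, h3, h4⟩ := hwAvoid e he
      rcases h with h | h
      · exact ⟨h ▸ h1, h ▸ h2⟩
      · exact ⟨h ▸ h3, h ▸ h4⟩
    have hT''A : T'' ⊆ A := hT''sub.trans (Finset.filter_subset _ _)
    have huwT'' : (u, w) ∉ T'' := fun h => (hwAvoid _ h).1 rfl
    have hvwT'' : (v, w) ∉ T'' := fun h => (hwAvoid _ h).2.1 rfl
    have hM1tree : IsDirTree (insert (u, w) T'') u :=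
      isDirTree_insert_root hT''tree
        (fun e he => ⟨(hwAvoid e he).1, (hwAvoid e he).2.2.1⟩) hwuv.1
    have hM2tree : IsDirTree (insert (v, w) T'') v :=
      isDirTree_insert_root hT''tree
        (fun e he => ⟨(hwAvoid e he).2.1, (hwAvoid e he).2.2.2⟩) hwuv.2
    have hM1card : (insert (u, w) T'').card = k := by
      rw [Finset.card_insert_of_notMem huwT'', hT''card]; omega
    have hM2card : (insert (v, w) T'').card = k := by
      rw [Finset.card_insert_of_notMem hvwT'', hT''card]; omega
    have hM1A : insert (u, w) T'' ⊆ A := Finset.insert_subset huwA hT''A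
    have hM2A : insert (v, w) T'' ⊆ A := Finset.insert_subset hvwA hT''A
    have hd1 : insert (u, w) T'' \ insert (v, w) T'' = {(u, w)} := by
      ext e
      simp only [Finset.mem_sdiff, Finset.mem_insert, Finset.mem_singleton, not_or]
      constructor
      · rintro ⟨rfl | he, _, hn2⟩
        · rfl
        · exact absurd he hn2
      · rintro rfl
        exact ⟨Or.inl rfl, fun h => huv (congrArg Prod.fst h), huwT''⟩
    have hd2 : insert (v, w) T'' \ insert (u, w) T'' = {(v, w)} := by
      ext e
      simp only [Finset.mem_sdiff, Finset.mem_insert, Finset.mem_singleton, not_or]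
      constructor
      · rintro ⟨rfl | he, _, hn2⟩
        · rfl
        · exact absurd he hn2
      · rintro rfl
        exact ⟨Or.inl rfl, fun h => huv (congrArg Prod.fst h).symm, hvwT''⟩
    have hseq1 : GoodSeq A k T (insert (u, w) T'') := by
      have := sameRoot hM1tree hM1A (unfixed (insert (u, w) T'') T u) T le_rfl hT hTA
        (by rw [hM1card, hkT])
      rwa [hM1card] at this
    have hseq3 : GoodSeq A k (insert (v, w) T'') T' := by
      have := sameRoot hT' hT'A (unfixed T' (insert (v, w) T'') v) (insert (v, w) T'')
        le_rfl hM2tree hM2A (by rw [hM2card, hkT'])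
      rwa [hkT'] at this
    have hstep : GoodSeq A k (insert (u, w) T'') T' :=
      GoodSeq.cons hM1A ⟨u, hM1tree⟩ hM1card hM2A ⟨v, hM2tree⟩ hM2card
        (by rw [hd1]; exact Finset.card_singleton _)
        (by rw [hd2]; exact Finset.card_singleton _) hseq3
    obtain ⟨ℓ, f, h1, h2, h3, h4⟩ := hseq1.trans hstep
    exact ⟨ℓ, f, h1, h2, h3, h4⟩
end

section
/- Let G = (V, A) be a (weakly) connected finite directed graph and k a positive integer. Define the undirected auxiliary graph 𝒢 whose vertex set consists of all v ∈ V such that G has a v-directed tree with k arcs, and where distinct u, v ∈ V(𝒢) are joined by an edge if and only if (1) G has a directed path from u to v or from v to u, or (2) there exists w ∈ N⁺_G(u) ∩ N⁺_G(v) such that G[V \ {u, v}] has a w-directed tree with k − 1 arcs. Let T^s and T^g be directed trees in G with k arcs and roots r^s and r^g, respectively. Then there is a path between r^s and r^g in 𝒢 if and only if there is a reconfiguration sequence between T^s and T^g in which every intermediate subgraph is a directed tree in G with k arcs. -/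
/-- `G` contains a `v`-directed tree with `k` arcs. -/
def hasKTree {V : Type*} [DecidableEq V] (A : Finset (V × V)) (k : ℕ) (v : V) : Prop :=
  ∃ T, T ⊆ A ∧ IsDirTree T v ∧ T.card = k

/-- Adjacency in the auxiliary graph `𝒢`: both `u` and `v` are roots of some directed
tree with `k` arcs in `G`, they are distinct, and either `G` has a directed path
between them (in one of the two directions), or they have a common out-neighbor `w`
such that `G[V ∖ {u, v}]` has a `w`-directed tree with `k - 1` arcs. -/
def auxAdj {V : Type*} [DecidableEq V] (A : Finset (V × V)) (k : ℕ) (u v : V) : Prop :=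
  u ≠ v ∧ hasKTree A k u ∧ hasKTree A k v ∧
    ((Relation.ReflTransGen (arcRel A) u v ∨ Relation.ReflTransGen (arcRel A) v u) ∨
      ∃ w, (u, w) ∈ A ∧ (v, w) ∈ A ∧
        ∃ T, T ⊆ inducedAvoid A u v ∧ IsDirTree T w ∧ T.card = k - 1)

set_option linter.unusedSectionVars false

namespace DirTreeAux

open Relation Finset

variable {V : Type*} [DecidableEq V]

lemma mem_arcVerts {T : Finset (V × V)} {v : V} :
    v ∈ arcVerts T ↔ ∃ e ∈ T, e.1 = v ∨ e.2 = v := by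
  simp only [arcVerts, Finset.mem_union, Finset.mem_image]
  constructor
  · rintro (⟨e, he, rfl⟩ | ⟨e, he, rfl⟩) <;> exact ⟨e, he, by tauto⟩
  · rintro ⟨e, he, (rfl | rfl)⟩
    · exact Or.inl ⟨e, he, rfl⟩
    · exact Or.inr ⟨e, he, rfl⟩

lemma fst_mem_arcVerts {T : Finset (V × V)} {e : V × V} (he : e ∈ T) : e.1 ∈ arcVerts T :=
  mem_arcVerts.mpr ⟨e, he, Or.inl rfl⟩

lemma snd_mem_arcVerts {T : Finset (V × V)} {e : V × V} (he : e ∈ T) : e.2 ∈ arcVerts T :=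
  mem_arcVerts.mpr ⟨e, he, Or.inr rfl⟩

lemma inDeg_eq_zero {T : Finset (V × V)} {v : V} :
    inDeg T v = 0 ↔ ∀ e ∈ T, e.2 ≠ v := by
  simp [inDeg, Finset.card_eq_zero, Finset.filter_eq_empty_iff]

lemma arcVerts_subset_of_subset {S T : Finset (V × V)} (h : S ⊆ T) :
    arcVerts S ⊆ arcVerts T := by
  intro v hv
  rcases mem_arcVerts.mp hv with ⟨e, he, h'⟩
  exact mem_arcVerts.mpr ⟨e, h he, h'⟩

lemma reach_mono {S T : Finset (V × V)} (h : S ⊆ T) {a b : V}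
    (hr : ReflTransGen (arcRel S) a b) : ReflTransGen (arcRel T) a b :=
  ReflTransGen.mono (fun _ _ hx => h hx) _ _ hr

/-- unique in-arc of a non-root vertex -/
lemma in_arc_unique {T : Finset (V × V)} {v : V} (h : inDeg T v = 1) :
    ∃ e ∈ T, e.2 = v ∧ ∀ e' ∈ T, e'.2 = v → e' = e := by
  rcases Finset.card_eq_one.mp h with ⟨e, he⟩
  have he' : e ∈ T.filter fun x => x.2 = v := he ▸ Finset.mem_singleton_self e
  rw [Finset.mem_filter] at he'
  refine ⟨e, he'.1, he'.2, fun e' h1 h2 => ?_⟩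
  have : e' ∈ T.filter fun x => x.2 = v := Finset.mem_filter.mpr ⟨h1, h2⟩
  rw [he] at this; exact Finset.mem_singleton.mp this

section tree
variable {T : Finset (V × V)} {r : V} (hT : IsDirTree T r)
include hT

lemma root_not_head {e : V × V} (he : e ∈ T) : e.2 ≠ r :=
  inDeg_eq_zero.mp hT.1 e he

lemma exists_root_out_arc (hne : T.Nonempty) : ∃ w, (r, w) ∈ T := by
  obtain ⟨e, he⟩ := hne
  have h1 : ReflTransGen (arcRel T) r e.1 := hT.2.2 e.1 (fst_mem_arcVerts he)
  rcases h1.cases_head with heq | ⟨c, hc, _⟩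
  · refine ⟨e.2, ?_⟩; rw [heq]; simpa using he
  · exact ⟨c, hc⟩

lemma root_mem_arcVerts (hne : T.Nonempty) : r ∈ arcVerts T := by
  obtain ⟨w, hw⟩ := exists_root_out_arc hT hne
  exact fst_mem_arcVerts hw

lemma in_arc_of_mem {v : V} (hv : v ∈ arcVerts T) (hvr : v ≠ r) :
    ∃ e ∈ T, e.2 = v ∧ ∀ e' ∈ T, e'.2 = v → e' = e :=
  in_arc_unique (hT.2.1 v hv hvr)

end tree

/-! ### Path-length machinery -/

def reachN (R : V → V → Prop) : ℕ → V → V → Prop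
  | 0, a, b => a = b
  | (n+1), a, b => ∃ c, R a c ∧ reachN R n c b

lemma reachN_last {R : V → V → Prop} :
    ∀ {n : ℕ} {a b : V}, reachN R (n+1) a b → ∃ c, reachN R n a c ∧ R c b := by
  intro n
  induction n with
  | zero => rintro a b ⟨c, hc, rfl⟩; exact ⟨a, rfl, hc⟩
  | succ m ih =>
    rintro a b ⟨c, hc, h2⟩
    obtain ⟨d, hd1, hd2⟩ := ih h2
    exact ⟨d, ⟨c, hc, hd1⟩, hd2⟩

lemma reachN_snoc {R : V → V → Prop} :
    ∀ {n : ℕ} {a b c : V}, reachN R n a b → R b c → reachN R (n+1) a c := by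
  intro n
  induction n with
  | zero => rintro a b c rfl h; exact ⟨c, h, rfl⟩
  | succ m ih =>
    rintro a b c ⟨d, hd, h2⟩ h
    exact ⟨d, hd, ih h2 h⟩

lemma reflTransGen_iff_reachN {R : V → V → Prop} {a b : V} :
    ReflTransGen R a b ↔ ∃ n, reachN R n a b := by
  constructor
  · intro h
    induction h with
    | refl => exact ⟨0, rfl⟩
    | tail _ h2 ih => obtain ⟨n, hn⟩ := ih; exact ⟨n+1, reachN_snoc hn h2⟩
  · rintro ⟨n, hn⟩
    induction n generalizing a with
    | zero => rw [hn]
    | succ m ih =>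
      obtain ⟨c, hc, h2⟩ := hn
      exact ReflTransGen.head hc (ih h2)

section treedepth
variable {T : Finset (V × V)} {r : V} (hT : IsDirTree T r)
include hT

open scoped Classical in
/-- depth of a vertex: minimal path length from the root -/
noncomputable def depth (T : Finset (V × V)) (r v : V) : ℕ :=
  if h : ∃ n, reachN (arcRel T) n r v then Nat.find h else 0

omit hT in
lemma depth_spec {v : V} (h : ReflTransGen (arcRel T) r v) :
    reachN (arcRel T) (depth T r v) r v := by
  classical
  have h' := reflTransGen_iff_reachN.mp h
  rw [depth]
  split
  · exact Nat.find_spec ‹_›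
  · exact absurd h' ‹_›

omit hT in
lemma depth_min {v : V} {n : ℕ} (h : reachN (arcRel T) n r v) : depth T r v ≤ n := by
  classical
  rw [depth]
  split
  · exact Nat.find_min' ‹_› h
  · exact absurd (⟨n, h⟩ : ∃ n, reachN (arcRel T) n r v) ‹_›

lemma no_self_loop {v : V} (hv : (v, v) ∈ T) : False := by
  have hvr : v ≠ r := by
    intro h; subst h
    exact root_not_head hT hv rfl
  have hreach : ReflTransGen (arcRel T) r v := hT.2.2 v (snd_mem_arcVerts hv)
  obtain ⟨e, heT, he2, huniq⟩ := in_arc_of_mem hT (snd_mem_arcVerts hv) hvr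
  have heq : (v, v) = e := huniq (v, v) hv rfl
  have hd := depth_spec (T := T) (r := r) hreach
  rcases hn : depth T r v with _ | m
  · rw [hn] at hd; exact hvr hd.symm
  · rw [hn] at hd
    obtain ⟨c, hc1, hc2⟩ := reachN_last hd
    have : (c, v) = e := huniq (c, v) hc2 rfl
    rw [← heq] at this
    have hcv : c = v := congrArg Prod.fst this
    subst hcv
    have := depth_min (T := T) (r := r) hc1
    omega

lemma exists_sink (hne : T.Nonempty) :
    ∃ s ∈ arcVerts T, s ≠ r ∧ ∀ z, (s, z) ∉ T := by
  have hvne : (arcVerts T).Nonempty := ⟨r, root_mem_arcVerts hT hne⟩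
  obtain ⟨s, hs, hmax⟩ := Finset.exists_max_image (arcVerts T) (depth T r) hvne
  have hsr : s ≠ r := by
    rintro rfl
    obtain ⟨w, hw⟩ := exists_root_out_arc hT hne
    -- w has in-arc (r,w); depth w = depth r + 1 > depth r : contradiction with max? 
    -- simpler: do the generic argument below with s := r
    have hwr : w ≠ s := fun h => no_self_loop hT (h ▸ hw)
    have hwv : w ∈ arcVerts T := snd_mem_arcVerts hw
    obtain ⟨e, heT, he2, huniq⟩ := in_arc_of_mem hT hwv hwr
    have heq : (s, w) = e := huniq (s, w) hw rfl
    have hreach : ReflTransGen (arcRel T) s w := hT.2.2 w hwv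
    have hd := depth_spec hreach
    rcases hn : depth T s w with _ | m
    · rw [hn] at hd; exact hwr hd.symm
    · rw [hn] at hd
      obtain ⟨c, hc1, hc2⟩ := reachN_last hd
      have hce : (c, w) = e := huniq (c, w) hc2 rfl
      rw [← heq] at hce
      have : c = s := congrArg Prod.fst hce
      subst this
      have h1 := depth_min hc1
      have h2 := hmax w hwv
      omega
  refine ⟨s, hs, hsr, fun z hz => ?_⟩
  have hzs : z ≠ s := fun h => no_self_loop hT (h ▸ hz)
  have hzr : z ≠ r := root_not_head hT hz
  have hzv : z ∈ arcVerts T := snd_mem_arcVerts hz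
  obtain ⟨e, heT, he2, huniq⟩ := in_arc_of_mem hT hzv hzr
  have heq : (s, z) = e := huniq (s, z) hz rfl
  have hreach : ReflTransGen (arcRel T) r z := hT.2.2 z hzv
  have hd := depth_spec (T := T) (r := r) hreach
  rcases hn : depth T r z with _ | m
  · rw [hn] at hd; exact hzr hd.symm
  · rw [hn] at hd
    obtain ⟨c, hc1, hc2⟩ := reachN_last hd
    have hce : (c, z) = e := huniq (c, z) hc2 rfl
    rw [← heq] at hce
    have : c = s := congrArg Prod.fst hce
    subst this
    have h1 := depth_min (T := T) (r := r) hc1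
    have h2 := hmax z hzv
    omega

lemma root_unique {r' : V} (hT' : IsDirTree T r') (hne : T.Nonempty) : r = r' := by
  by_contra hne'
  have h1 : r ∈ arcVerts T := root_mem_arcVerts hT hne
  have hreach : ReflTransGen (arcRel T) r' r := hT'.2.2 r h1
  rcases hreach.cases_tail with heq | ⟨c, _, hc2⟩
  · exact hne' heq
  · exact root_not_head hT hc2 rfl

end treedepth

end DirTreeAux

namespace DirTreeAux

open Relation Finset

variable {V : Type*} [DecidableEq V]

lemma inDeg_le_of_subset {S T : Finset (V × V)} (h : S ⊆ T) (v : V) :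
    inDeg S v ≤ inDeg T v :=
  Finset.card_le_card (Finset.filter_subset_filter _ h)

lemma inDeg_insert {T : Finset (V × V)} {e : V × V} (he : e ∉ T) (v : V) :
    inDeg (insert e T) v = inDeg T v + if e.2 = v then 1 else 0 := by
  unfold inDeg
  rw [Finset.filter_insert]
  split
  · rw [Finset.card_insert_of_notMem (fun h => he (Finset.mem_filter.mp h).1)]
  · omega

lemma inDeg_erase {T : Finset (V × V)} {e : V × V} (he : e ∈ T) (v : V) :
    inDeg (T.erase e) v + (if e.2 = v then 1 else 0) = inDeg T v := by
  unfold inDeg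
  rw [Finset.filter_erase]
  by_cases h : e.2 = v
  · rw [if_pos h, Finset.card_erase_of_mem (Finset.mem_filter.mpr ⟨he, h⟩)]
    have : 0 < (T.filter fun x => x.2 = v).card :=
      Finset.card_pos.mpr ⟨e, Finset.mem_filter.mpr ⟨he, h⟩⟩
    omega
  · have hne : e ∉ T.filter fun x => x.2 = v := fun hm => h (Finset.mem_filter.mp hm).2
    rw [if_neg h, Finset.erase_eq_of_notMem hne]
    rfl

lemma arcVerts_insert {T : Finset (V × V)} (e : V × V) :
    arcVerts (insert e T) = insert e.1 (insert e.2 (arcVerts T)) := by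
  ext v
  simp only [mem_arcVerts, Finset.mem_insert]
  aesop

lemma arcVerts_erase_subset {T : Finset (V × V)} (e : V × V) :
    arcVerts (T.erase e) ⊆ arcVerts T :=
  arcVerts_subset_of_subset (Finset.erase_subset _ _)

lemma inDeg_eq_zero_of_not_mem {T : Finset (V × V)} {v : V} (h : v ∉ arcVerts T) :
    inDeg T v = 0 :=
  inDeg_eq_zero.mpr fun e he h2 => h (h2 ▸ snd_mem_arcVerts he)

/-- S1: attach a fresh leaf. -/
lemma addLeaf {W : Finset (V × V)} {r t ℓ : V} (hW : IsDirTree W r)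
    (ht : t = r ∨ t ∈ arcVerts W) (hl : ℓ ∉ arcVerts W) (hlt : ℓ ≠ t) (hlr : ℓ ≠ r)
    (hnm : (t, ℓ) ∉ W) : IsDirTree (insert (t, ℓ) W) r := by
  have hreacht : ReflTransGen (arcRel (insert (t, ℓ) W)) r t := by
    rcases ht with rfl | ht
    · exact ReflTransGen.refl
    · exact reach_mono (Finset.subset_insert _ _) (hW.2.2 t ht)
  refine ⟨?_, ?_, ?_⟩
  · rw [inDeg_insert hnm]
    simp only [hW.1]
    simp [hlr]
  · intro v hv hvr
    rw [inDeg_insert hnm]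
    rw [arcVerts_insert] at hv
    simp only [Finset.mem_insert] at hv
    by_cases hvl : v = ℓ
    · subst hvl
      rw [inDeg_eq_zero_of_not_mem hl]
      simp
    · rcases hv with rfl | rfl | hv
      · rcases ht with rfl | ht
        · exact absurd rfl hvr
        · rw [hW.2.1 v ht hvr, if_neg (fun h => hvl h.symm)]
      · exact absurd rfl hvl
      · rw [hW.2.1 v hv hvr, if_neg (fun h => hvl h.symm)]
  · intro v hv
    rw [arcVerts_insert] at hv
    simp only [Finset.mem_insert] at hv
    rcases hv with rfl | rfl | hv
    · exact hreacht
    · exact ReflTransGen.tail hreacht (Finset.mem_insert_self _ _)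
    · exact reach_mono (Finset.subset_insert _ _) (hW.2.2 v hv)

/-- S2: attach a new root above the old root. -/
lemma addRoot {W : Finset (V × V)} {r u : V} (hW : IsDirTree W r)
    (hu : u ∉ arcVerts W) (hur : u ≠ r) : IsDirTree (insert (u, r) W) u := by
  have hnm : (u, r) ∉ W := fun h => hu (fst_mem_arcVerts h)
  have hreachr : ReflTransGen (arcRel (insert (u, r) W)) u r :=
    ReflTransGen.single (Finset.mem_insert_self _ _)
  refine ⟨?_, ?_, ?_⟩
  · rw [inDeg_insert hnm, inDeg_eq_zero_of_not_mem hu, if_neg (fun h => hur h.symm)]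
  · intro v hv hvu
    rw [inDeg_insert hnm]
    rw [arcVerts_insert] at hv
    simp only [Finset.mem_insert] at hv
    rcases hv with rfl | rfl | hv
    · exact absurd rfl hvu
    · rw [hW.1]; simp
    · by_cases hvr : v = r
      · subst hvr; rw [hW.1]; simp
      · rw [hW.2.1 v hv hvr, if_neg (fun h => hvr h.symm)]
  · intro v hv
    rw [arcVerts_insert] at hv
    simp only [Finset.mem_insert] at hv
    rcases hv with rfl | rfl | hv
    · exact ReflTransGen.refl
    · exact hreachr
    · exact hreachr.trans (reach_mono (Finset.subset_insert _ _) (hW.2.2 v hv))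

/-- S3: remove the in-arc of a sink. -/
lemma removeSinkArc {W : Finset (V × V)} {r : V} {e : V × V} (hW : IsDirTree W r)
    (he : e ∈ W) (hs : ∀ z, (e.2, z) ∉ W) : IsDirTree (W.erase e) r := by
  set s := e.2 with hs_def
  have hsr : s ≠ r := root_not_head hW he
  have hsW : s ∈ arcVerts W := snd_mem_arcVerts he
  obtain ⟨f, hf, hf2, huniq⟩ := in_arc_of_mem hW hsW hsr
  have hfe : f = e := by
    have := huniq e he rfl
    exact this ▸ rfl
  have hsnot : s ∉ arcVerts (W.erase e) := by
    intro hmem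
    rcases mem_arcVerts.mp hmem with ⟨e', he', h1 | h2⟩
    · exact hs e'.2 (by rw [← h1]; exact Finset.mem_of_mem_erase he')
    · have he'W := Finset.mem_of_mem_erase he'
      have : e' = f := huniq e' he'W h2
      rw [hfe] at this
      exact (Finset.ne_of_mem_erase he') this
  have hclaim : ∀ v, ReflTransGen (arcRel W) r v →
      v = s ∨ ReflTransGen (arcRel (W.erase e)) r v := by
    intro v hv
    induction hv with
    | refl => exact Or.inr ReflTransGen.refl
    | @tail c d hcd harc ih =>
      rcases ih with rfl | ih
      · exact absurd harc (hs d)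
      · by_cases hae : (c, d) = e
        · left; rw [hs_def, ← hae]
        · exact Or.inr (ih.tail (Finset.mem_erase.mpr ⟨hae, harc⟩))
  refine ⟨?_, ?_, ?_⟩
  · have h1 := inDeg_le_of_subset (Finset.erase_subset e W) r
    have h0 := hW.1
    omega
  · intro v hv hvr
    have hvs : v ≠ s := fun h => hsnot (h ▸ hv)
    have h1 := inDeg_erase he v
    rw [if_neg (fun h : _root_.Prod.snd e = v => hvs (h.symm.trans hs_def.symm))] at h1
    rw [hW.2.1 v (arcVerts_erase_subset e hv) hvr] at h1
    omega
  · intro v hv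
    rcases hclaim v (hW.2.2 v (arcVerts_erase_subset e hv)) with rfl | h
    · exact absurd hv hsnot
    · exact h

end DirTreeAux

namespace DirTreeAux

open Relation Finset

variable {V : Type*} [DecidableEq V]

lemma empty_tree (r : V) : IsDirTree (∅ : Finset (V × V)) r := by
  refine ⟨?_, ?_, ?_⟩
  · simp [inDeg]
  · intro v hv; simp [arcVerts] at hv
  · intro v hv; simp [arcVerts] at hv

lemma singleton_tree {t c : V} (h : c ≠ t) : IsDirTree ({(t, c)} : Finset (V × V)) t := by
  have := addLeaf (W := (∅ : Finset (V × V))) (r := t) (t := t) (ℓ := c)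
    (empty_tree t) (Or.inl rfl) (by simp [arcVerts]) h h (by simp)
  simpa using this

/-- S4: remove the unique arc at the root; the tree gets rerooted at its head. -/
lemma removeRootArc {W : Finset (V × V)} {r : V} {e : V × V} (hW : IsDirTree W r)
    (he : e ∈ W) (he1 : e.1 = r) (honly : ∀ e' ∈ W, e' ≠ e → e'.1 ≠ r) :
    IsDirTree (W.erase e) e.2 := by
  set w := e.2 with hw_def
  have hwr : w ≠ r := root_not_head hW he
  have hwW : w ∈ arcVerts W := snd_mem_arcVerts he
  have hrnot : r ∉ arcVerts (W.erase e) := by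
    intro hmem
    rcases mem_arcVerts.mp hmem with ⟨e', he', h1 | h2⟩
    · exact honly e' (Finset.mem_of_mem_erase he') (Finset.ne_of_mem_erase he') h1
    · exact root_not_head hW (Finset.mem_of_mem_erase he') h2
  have hclaim : ∀ v, ReflTransGen (arcRel W) r v →
      v = r ∨ ReflTransGen (arcRel (W.erase e)) w v := by
    intro v hv
    induction hv with
    | refl => exact Or.inl rfl
    | @tail c d hcd harc ih =>
      by_cases hae : (c, d) = e
      · right
        have : d = w := by rw [hw_def, ← hae]
        rw [this]
      · rcases ih with rfl | ih
        · exact absurd rfl (honly (c, d) harc hae)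
        · exact Or.inr (ih.tail (Finset.mem_erase.mpr ⟨hae, harc⟩))
  refine ⟨?_, ?_, ?_⟩
  · have h1 := inDeg_erase he w
    rw [if_pos hw_def.symm] at h1
    rw [hW.2.1 w hwW hwr] at h1
    omega
  · intro v hv hvw
    have hvr : v ≠ r := fun h => hrnot (h ▸ hv)
    have h1 := inDeg_erase he v
    rw [if_neg (fun h : _root_.Prod.snd e = v => hvw (h.symm.trans hw_def.symm))] at h1
    rw [hW.2.1 v (arcVerts_erase_subset e hv) hvr] at h1
    omega
  · intro v hv
    rcases hclaim v (hW.2.2 v (arcVerts_erase_subset e hv)) with rfl | h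
    · exact absurd hv hrnot
    · exact h

/-- S5: move the root backwards along an arc `(p, r) ∈ A` when `p` is in the tree:
remove the in-arc of `p` and add `(p, r)`. -/
lemma backstepIn {T : Finset (V × V)} {r p : V} {e : V × V} (hT : IsDirTree T r)
    (hp : p ∈ arcVerts T) (hpr : p ≠ r) (he : e ∈ T) (he2 : e.2 = p) :
    IsDirTree (insert (p, r) (T.erase e)) p := by
  have hprT : (p, r) ∉ T := fun h => root_not_head hT h rfl
  have hprT' : (p, r) ∉ T.erase e := fun h => hprT (Finset.mem_of_mem_erase h)
  set S := insert (p, r) (T.erase e) with hS_def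
  obtain ⟨f, hf, hf2, huniq⟩ := in_arc_of_mem hT hp hpr
  have hfe : f = e := (huniq e he he2).symm
  have hclaim : ∀ v, ReflTransGen (arcRel T) r v → ReflTransGen (arcRel S) p v := by
    intro v hv
    induction hv with
    | refl => exact ReflTransGen.single (Finset.mem_insert_self _ _)
    | @tail c d hcd harc ih =>
      by_cases hae : (c, d) = e
      · have : d = p := by rw [← he2, ← hae]
        rw [this]
      · exact ih.tail (Finset.mem_insert_of_mem (Finset.mem_erase.mpr ⟨hae, harc⟩))
  refine ⟨?_, ?_, ?_⟩
  · rw [hS_def, inDeg_insert hprT']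
    have h1 := inDeg_erase he p
    rw [if_pos he2] at h1
    rw [hT.2.1 p hp hpr] at h1
    simp only [if_neg (fun h : r = p => hpr h.symm)]
    omega
  · intro v hv hvp
    rw [hS_def, inDeg_insert hprT']
    rw [hS_def, arcVerts_insert] at hv
    simp only [Finset.mem_insert] at hv
    rcases hv with rfl | rfl | hv
    · exact absurd rfl hvp
    · have h1 := inDeg_le_of_subset (Finset.erase_subset e T) v
      have h0 := hT.1
      rw [if_pos (rfl : (p, v).2 = v)]
      omega
    · by_cases hvr : v = r
      · subst hvr
        have h1 := inDeg_le_of_subset (Finset.erase_subset e T) v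
        have h0 := hT.1
        rw [if_pos (rfl : (p, v).2 = v)]
        omega
      · have h1 := inDeg_erase he v
        rw [if_neg (fun h : _root_.Prod.snd e = v => hvp (h.symm.trans he2))] at h1
        rw [hT.2.1 v (arcVerts_erase_subset e hv) hvr] at h1
        rw [if_neg (fun h : (p, r).2 = v => hvr h.symm)]
        omega
  · intro v hv
    rw [hS_def, arcVerts_insert] at hv
    simp only [Finset.mem_insert] at hv
    rcases hv with rfl | rfl | hv
    · exact ReflTransGen.refl
    · exact ReflTransGen.single (Finset.mem_insert_self _ _)
    · exact hclaim v (hT.2.2 v (arcVerts_erase_subset e hv))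

end DirTreeAux

namespace DirTreeAux

open Relation Finset

variable {V : Type*} [DecidableEq V]

/-- A reconfiguration step: both endpoints are `k`-arc directed trees inside `A`,
differing in exactly one arc. -/
def GoodStep (A : Finset (V × V)) (k : ℕ) (T T' : Finset (V × V)) : Prop :=
  T ⊆ A ∧ T' ⊆ A ∧ (∃ ρ, IsDirTree T ρ) ∧ (∃ ρ, IsDirTree T' ρ) ∧
    T.card = k ∧ T'.card = k ∧ (T \ T').card = 1 ∧ (T' \ T).card = 1

/-- A reconfiguration step between two trees with the same root `r`. -/
def GoodStepR (A : Finset (V × V)) (k : ℕ) (r : V) (T T' : Finset (V × V)) : Prop :=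
  GoodStep A k T T' ∧ IsDirTree T r ∧ IsDirTree T' r

lemma goodStep_symm {A : Finset (V × V)} {k : ℕ} : Symmetric (GoodStep A k) := by
  rintro T T' ⟨h1, h2, h3, h4, h5, h6, h7, h8⟩
  exact ⟨h2, h1, h4, h3, h6, h5, h8, h7⟩

lemma eq_insert_of_sdiff_singleton {T W : Finset (V × V)} {c : V × V}
    (hsub : W ⊆ T) (h : T \ W = {c}) : T = insert c W := by
  ext x
  simp only [Finset.mem_insert]
  constructor
  · intro hx
    by_cases hxW : x ∈ W
    · exact Or.inr hxW
    · left
      have : x ∈ T \ W := Finset.mem_sdiff.mpr ⟨hx, hxW⟩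
      rw [h] at this
      exact Finset.mem_singleton.mp this
  · rintro (rfl | hx)
    · have : x ∈ T \ W := h ▸ Finset.mem_singleton_self x
      exact (Finset.mem_sdiff.mp this).1
    · exact hsub hx

lemma extra_arc {T W : Finset (V × V)} {j : ℕ} (hsub : W ⊆ T)
    (hW : W.card = j) (hT : T.card = j + 1) :
    ∃ c, c ∉ W ∧ T = insert c W := by
  have h1 : (T \ W).card = 1 := by rw [Finset.card_sdiff_of_subset hsub]; omega
  obtain ⟨c, hc⟩ := Finset.card_eq_one.mp h1
  have hcW : c ∉ W := by
    have : c ∈ T \ W := hc ▸ Finset.mem_singleton_self c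
    exact (Finset.mem_sdiff.mp this).2
  exact ⟨c, hcW, eq_insert_of_sdiff_singleton hsub hc⟩

lemma step_decomp {T T' : Finset (V × V)} (hcard : T.card = T'.card)
    (h1 : (T \ T').card = 1) :
    ∃ a b, a ∈ T ∧ a ∉ T' ∧ b ∈ T' ∧ b ∉ T ∧ T' = insert b (T.erase a) := by
  obtain ⟨a, ha⟩ := Finset.card_eq_one.mp h1
  have h2 : (T' \ T).card = 1 := by rw [Finset.card_sdiff_comm hcard] at h1; exact h1
  obtain ⟨b, hb⟩ := Finset.card_eq_one.mp h2
  have haT : a ∈ T ∧ a ∉ T' := by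
    have : a ∈ T \ T' := ha ▸ Finset.mem_singleton_self a
    exact Finset.mem_sdiff.mp this
  have hbT : b ∈ T' ∧ b ∉ T := by
    have : b ∈ T' \ T := hb ▸ Finset.mem_singleton_self b
    exact Finset.mem_sdiff.mp this
  refine ⟨a, b, haT.1, haT.2, hbT.1, hbT.2, ?_⟩
  ext x
  simp only [Finset.mem_insert, Finset.mem_erase]
  constructor
  · intro hx
    by_cases hxT : x ∈ T
    · right
      refine ⟨fun hxa => haT.2 (hxa ▸ hx), hxT⟩
    · left
      have : x ∈ T' \ T := Finset.mem_sdiff.mpr ⟨hx, hxT⟩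
      rw [hb] at this
      exact Finset.mem_singleton.mp this
  · rintro (rfl | ⟨hxa, hxT⟩)
    · exact hbT.1
    · by_contra hxT'
      have : x ∈ T \ T' := Finset.mem_sdiff.mpr ⟨hxT, hxT'⟩
      rw [ha] at this
      exact hxa (Finset.mem_singleton.mp this)

lemma sdiff_insert_insert {W W' : Finset (V × V)} {c : V × V}
    (hc : c ∉ W) (hc' : c ∉ W') :
    (insert c W) \ (insert c W') = W \ W' := by
  ext x
  simp only [Finset.mem_sdiff, Finset.mem_insert]
  constructor
  · rintro ⟨rfl | hxW, hx2⟩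
    · exact absurd (Or.inl rfl) hx2
    · exact ⟨hxW, fun h => hx2 (Or.inr h)⟩
  · rintro ⟨hxW, hxW'⟩
    exact ⟨Or.inr hxW, fun h => by
      rcases h with rfl | h
      · exact hc hxW
      · exact hxW' h⟩

lemma sdiff_of_swap {W : Finset (V × V)} {a b : V × V} (ha : a ∈ W) (hb : b ∉ W) :
    W \ (insert b (W.erase a)) = {a} ∧ (insert b (W.erase a)) \ W = {b} := by
  constructor
  · ext x
    simp only [Finset.mem_sdiff, Finset.mem_insert, Finset.mem_erase, Finset.mem_singleton]
    constructor
    · rintro ⟨hxW, hx2⟩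
      by_contra hxa
      exact hx2 (Or.inr ⟨hxa, hxW⟩)
    · rintro rfl
      refine ⟨ha, ?_⟩
      rintro (rfl | ⟨h1, _⟩)
      · exact hb ha
      · exact h1 rfl
  · ext x
    simp only [Finset.mem_sdiff, Finset.mem_insert, Finset.mem_erase, Finset.mem_singleton]
    constructor
    · rintro ⟨rfl | ⟨_, hxW⟩, hx2⟩
      · rfl
      · exact absurd hxW hx2
    · rintro rfl
      exact ⟨Or.inl rfl, hb⟩

section lift

variable {A : Finset (V × V)} {j : ℕ} {r : V}

/-- The key lifting lemma: a one-arc step on a subtree lifts to (at most) a one-arc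
step on a supertree with one extra arc, preserving the root. -/
lemma liftStep {W W' T : Finset (V × V)} (hj : 1 ≤ j)
    (hstep : GoodStepR A j r W W') (hT : IsDirTree T r) (hTA : T ⊆ A)
    (hTcard : T.card = j + 1) (hsub : W ⊆ T) :
    ∃ T', IsDirTree T' r ∧ T' ⊆ A ∧ T'.card = j + 1 ∧ W' ⊆ T' ∧
      (T = T' ∨ GoodStepR A (j+1) r T T') := by
  obtain ⟨⟨hWA, hW'A, _, _, hWc, hW'c, hd1, hd2⟩, hWr, hW'r⟩ := hstep
  obtain ⟨a, b, haW, haW', hbW', hbW, hW'eq⟩ :=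
    step_decomp (hWc.trans hW'c.symm) hd1
  obtain ⟨c, hcW, hTeq⟩ := extra_arc hsub hWc hTcard
  have hcT : c ∈ T := hTeq ▸ Finset.mem_insert_self c W
  have hWne : W.Nonempty := Finset.card_pos.mp (by omega)
  have hW'ne : W'.Nonempty := Finset.card_pos.mp (by omega)
  have hab : a ≠ b := fun h => hbW (h ▸ haW)
  -- structure of the extra arc c
  have hc2r : c.2 ≠ r := root_not_head hT hcT
  have hcself : c.2 ≠ c.1 := by
    intro h
    exact no_self_loop hT (h ▸ (show (c.1, c.2) ∈ T by rw [Prod.mk.eta]; exact hcT))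
  have hl : c.2 ∉ arcVerts W := by
    intro hmem
    have h1 : inDeg W c.2 = 1 := hWr.2.1 c.2 hmem hc2r
    have h2 : inDeg T c.2 = 1 :=
      hT.2.1 c.2 (snd_mem_arcVerts hcT) hc2r
    rw [hTeq, inDeg_insert hcW, if_pos rfl] at h2
    omega
  have ht : c.1 = r ∨ c.1 ∈ arcVerts W := by
    by_cases h : c.1 = r
    · exact Or.inl h
    · right
      obtain ⟨d, hd, hd2, _⟩ := in_arc_of_mem hT (fst_mem_arcVerts hcT) h
      have hdc : d ≠ c := by
        intro heq
        exact hcself (heq ▸ hd2)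
      have hdW : d ∈ W := by
        rw [hTeq] at hd
        rcases Finset.mem_insert.mp hd with rfl | h'
        · exact absurd rfl hdc
        · exact h'
      exact hd2 ▸ snd_mem_arcVerts hdW
  -- structure of the new arc b
  have hb2r : b.2 ≠ r := root_not_head hW'r hbW'
  have hbself : b.2 ≠ b.1 := by
    intro h
    exact no_self_loop hW'r (h ▸ (show (b.1, b.2) ∈ W' by rw [Prod.mk.eta]; exact hbW'))
  have hx : b.1 = r ∨ b.1 ∈ arcVerts W := by
    by_cases h : b.1 = r
    · exact Or.inl h
    · right
      obtain ⟨d, hd, hd2, _⟩ := in_arc_of_mem hW'r (fst_mem_arcVerts hbW') h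
      have hdb : d ≠ b := by
        intro heq
        exact hbself (heq ▸ hd2)
      have hdW : d ∈ W := by
        rw [hW'eq] at hd
        rcases Finset.mem_insert.mp hd with rfl | h'
        · exact absurd rfl hdb
        · exact Finset.mem_of_mem_erase h'
      exact hd2 ▸ snd_mem_arcVerts hdW
  by_cases hcb : c = b
  · -- the extra arc is exactly the new arc: nothing to do
    refine ⟨T, hT, hTA, hTcard, ?_, Or.inl rfl⟩
    rw [hW'eq, hTeq, hcb]
    intro x hx'
    rcases Finset.mem_insert.mp hx' with rfl | h'
    · exact Finset.mem_insert_self _ _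
    · exact Finset.mem_insert_of_mem (Finset.mem_of_mem_erase h')
  · by_cases hyW : b.2 ∈ arcVerts W
    · -- Case II : the head of b is an old vertex; a must be its in-arc.
      -- New tree: T' = insert c W'
      have ha2 : a.2 = b.2 := by
        have h1 : inDeg W' b.2 = 1 := hW'r.2.1 b.2 (snd_mem_arcVerts hbW') hb2r
        have hbnm : b ∉ W.erase a := fun h => hbW (Finset.mem_of_mem_erase h)
        rw [hW'eq, inDeg_insert hbnm, if_pos rfl] at h1
        have h2 : inDeg (W.erase a) b.2 = 0 := by omega
        have h3 : inDeg W b.2 = 1 := hWr.2.1 b.2 hyW hb2r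
        have h4 := inDeg_erase haW b.2
        rw [h2, h3] at h4
        by_contra hne
        rw [if_neg hne] at h4
        omega
      have hcW' : c ∉ W' := by
        rw [hW'eq]
        intro h
        rcases Finset.mem_insert.mp h with rfl | h'
        · exact hcb rfl
        · exact hcW (Finset.mem_of_mem_erase h')
      have htW' : c.1 = r ∨ c.1 ∈ arcVerts W' := by
        rcases ht with h | h
        · exact Or.inl h
        · right
          by_cases hr : c.1 = r
          · rw [hr]; exact root_mem_arcVerts hW'r hW'ne
          · obtain ⟨d, hd, hd2, _⟩ := in_arc_of_mem hWr h hr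
            by_cases hda : d = a
            · have : c.1 = b.2 := by rw [← hd2, hda, ha2]
              rw [this]
              exact snd_mem_arcVerts hbW'
            · have : d ∈ W' := by
                rw [hW'eq]
                exact Finset.mem_insert_of_mem (Finset.mem_erase.mpr ⟨hda, hd⟩)
              exact hd2 ▸ snd_mem_arcVerts this
      have hlW' : c.2 ∉ arcVerts W' := by
        rw [hW'eq, arcVerts_insert]
        simp only [Finset.mem_insert]
        rintro (h | h | h)
        · rcases hx with hxr | hxv
          · exact hc2r (h.trans hxr)
          · exact hl (h ▸ hxv)
        · exact hl (h ▸ hyW)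
        · exact hl (arcVerts_erase_subset a h)
      have hT'tree : IsDirTree (insert c W') r := by
        have := addLeaf (W := W') (r := r) (t := c.1) (ℓ := c.2) hW'r htW' hlW'
          hcself hc2r (by rw [Prod.mk.eta]; exact hcW')
        rwa [Prod.mk.eta] at this
      refine ⟨insert c W', hT'tree, ?_, ?_, Finset.subset_insert _ _, Or.inr ?_⟩
      · intro x hx'
        rcases Finset.mem_insert.mp hx' with rfl | h'
        · exact hTA hcT
        · exact hW'A h'
      · rw [Finset.card_insert_of_notMem hcW', hW'c]
      · refine ⟨⟨hTA, ?_, ⟨r, hT⟩, ⟨r, hT'tree⟩, hTcard, ?_, ?_, ?_⟩, hT, hT'tree⟩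
        · intro x hx'
          rcases Finset.mem_insert.mp hx' with rfl | h'
          · exact hTA hcT
          · exact hW'A h'
        · rw [Finset.card_insert_of_notMem hcW', hW'c]
        · rw [hTeq, sdiff_insert_insert hcW hcW', hW'eq, (sdiff_of_swap haW hbW).1,
            Finset.card_singleton]
        · rw [hTeq, sdiff_insert_insert hcW' hcW, hW'eq, (sdiff_of_swap haW hbW).2,
            Finset.card_singleton]
    · -- Case I : the head of b is a fresh vertex. New tree: T' = insert b W.
      have hxor : b.1 = r ∨ b.1 ∈ arcVerts W := hx
      have hT'tree : IsDirTree (insert b W) r := by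
        have := addLeaf (W := W) (r := r) (t := b.1) (ℓ := b.2) hWr hxor hyW
          hbself hb2r (by rw [Prod.mk.eta]; exact hbW)
        rwa [Prod.mk.eta] at this
      refine ⟨insert b W, hT'tree, ?_, ?_, ?_, Or.inr ?_⟩
      · intro x hx'
        rcases Finset.mem_insert.mp hx' with rfl | h'
        · exact hW'A hbW'
        · exact hWA h'
      · rw [Finset.card_insert_of_notMem hbW, hWc]
      · rw [hW'eq]
        intro x hx'
        rcases Finset.mem_insert.mp hx' with rfl | h'
        · exact Finset.mem_insert_self _ _
        · exact Finset.mem_insert_of_mem (Finset.mem_of_mem_erase h')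
      · refine ⟨⟨hTA, ?_, ⟨r, hT⟩, ⟨r, hT'tree⟩, hTcard, ?_, ?_, ?_⟩, hT, hT'tree⟩
        · intro x hx'
          rcases Finset.mem_insert.mp hx' with rfl | h'
          · exact hW'A hbW'
          · exact hWA h'
        · rw [Finset.card_insert_of_notMem hbW, hWc]
        · have h1 : T \ (insert b W) = {c} := by
            rw [hTeq]
            ext x
            simp only [Finset.mem_sdiff, Finset.mem_insert, Finset.mem_singleton]
            constructor
            · rintro ⟨rfl | hxW, hx2⟩
              · rfl
              · exact absurd (Or.inr hxW) hx2
            · rintro rfl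
              refine ⟨Or.inl rfl, ?_⟩
              rintro (rfl | h')
              · exact hcb rfl
              · exact hcW h'
          rw [h1, Finset.card_singleton]
        · have h1 : (insert b W) \ T = {b} := by
            rw [hTeq]
            ext x
            simp only [Finset.mem_sdiff, Finset.mem_insert, Finset.mem_singleton]
            constructor
            · rintro ⟨rfl | hxW, hx2⟩
              · rfl
              · exact absurd (Or.inr hxW) hx2
            · rintro rfl
              refine ⟨Or.inl rfl, ?_⟩
              rintro (rfl | h')
              · exact hcb rfl
              · exact hbW h'
          rw [h1, Finset.card_singleton]

lemma liftChain {W U : Finset (V × V)} (hj : 1 ≤ j)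
    (hchain : ReflTransGen (GoodStepR A j r) W U) :
    ∀ {T : Finset (V × V)}, IsDirTree T r → T ⊆ A → T.card = j + 1 → W ⊆ T →
    ∃ T', IsDirTree T' r ∧ T' ⊆ A ∧ T'.card = j + 1 ∧ U ⊆ T' ∧
      ReflTransGen (GoodStepR A (j+1) r) T T' := by
  induction hchain using ReflTransGen.head_induction_on with
  | refl =>
    intro T h1 h2 h3 h4
    exact ⟨T, h1, h2, h3, h4, ReflTransGen.refl⟩
  | head hstep _ ih =>
    intro T h1 h2 h3 h4
    obtain ⟨T1, g1, g2, g3, g4, g5⟩ := liftStep hj hstep h1 h2 h3 h4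
    obtain ⟨T', k1, k2, k3, k4, k5⟩ := ih g1 g2 g3 g4
    rcases g5 with rfl | g5
    · exact ⟨T', k1, k2, k3, k4, k5⟩
    · exact ⟨T', k1, k2, k3, k4, k5.head g5⟩

end lift

end DirTreeAux

namespace DirTreeAux

open Relation Finset

variable {V : Type*} [DecidableEq V]

lemma singleton_root_arc {T : Finset (V × V)} {r : V} {e : V × V}
    (hT : IsDirTree T r) (hTe : T = {e}) : e.1 = r := by
  have hne : T.Nonempty := hTe ▸ Finset.singleton_nonempty e
  have hr : r ∈ arcVerts T := root_mem_arcVerts hT hne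
  rcases mem_arcVerts.mp hr with ⟨f, hf, h1 | h2⟩
  · rw [hTe] at hf
    rw [← Finset.mem_singleton.mp hf]
    exact h1
  · exact absurd h2 (root_not_head hT hf)

lemma insert_sdiff_insert_distinct {U : Finset (V × V)} {c f : V × V}
    (hc : c ∉ U) (hf : f ∉ U) (hcf : c ≠ f) : (insert c U) \ (insert f U) = {c} := by
  ext x
  simp only [Finset.mem_sdiff, Finset.mem_insert, Finset.mem_singleton]
  constructor
  · rintro ⟨rfl | hxU, hx2⟩
    · rfl
    · exact absurd (Or.inr hxU) hx2
  · rintro rfl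
    refine ⟨Or.inl rfl, ?_⟩
    rintro (rfl | h)
    · exact hcf rfl
    · exact hc h

lemma sameRoot {A : Finset (V × V)} :
    ∀ (j : ℕ), 1 ≤ j → ∀ (r : V) (T T' : Finset (V × V)), T ⊆ A → T' ⊆ A →
      IsDirTree T r → IsDirTree T' r → T.card = j → T'.card = j →
      ReflTransGen (GoodStepR A j r) T T' := by
  intro j
  induction j with
  | zero => omega
  | succ n ih =>
    intro _ r T T' hTA hT'A hT hT' hTc hT'c
    rcases Nat.eq_zero_or_pos n with rfl | hn
    · -- base case: single arcs
      obtain ⟨e, he⟩ := Finset.card_eq_one.mp hTc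
      obtain ⟨e', he'⟩ := Finset.card_eq_one.mp hT'c
      by_cases hee : e = e'
      · rw [he, he', hee]
      · refine ReflTransGen.single ⟨⟨hTA, hT'A, ⟨r, hT⟩, ⟨r, hT'⟩, hTc, hT'c, ?_, ?_⟩, hT, hT'⟩
        · rw [he, he', Finset.sdiff_singleton_eq_erase,
            Finset.erase_eq_of_notMem (fun h => hee (Finset.mem_singleton.mp h).symm),
            Finset.card_singleton]
        · rw [he, he', Finset.sdiff_singleton_eq_erase,
            Finset.erase_eq_of_notMem (fun h => hee (Finset.mem_singleton.mp h)),
            Finset.card_singleton]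
    · -- inductive step
      have hTne : T.Nonempty := Finset.card_pos.mp (by omega)
      have hT'ne : T'.Nonempty := Finset.card_pos.mp (by omega)
      obtain ⟨s, hsV, hsr, hsink⟩ := exists_sink hT hTne
      obtain ⟨e, heT, he2, _⟩ := in_arc_of_mem hT hsV hsr
      have hW0 : IsDirTree (T.erase e) r :=
        removeSinkArc hT heT (by rw [he2]; exact hsink)
      obtain ⟨s', hs'V, hs'r, hsink'⟩ := exists_sink hT' hT'ne
      obtain ⟨f, hfT, hf2, _⟩ := in_arc_of_mem hT' hs'V hs'r
      have hU' : IsDirTree (T'.erase f) r :=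
        removeSinkArc hT' hfT (by rw [hf2]; exact hsink')
      have hW0c : (T.erase e).card = n := by
        rw [Finset.card_erase_of_mem heT]; omega
      have hU'c : (T'.erase f).card = n := by
        rw [Finset.card_erase_of_mem hfT]; omega
      have hW0A : T.erase e ⊆ A := (Finset.erase_subset _ _).trans hTA
      have hU'A : T'.erase f ⊆ A := (Finset.erase_subset _ _).trans hT'A
      have hchain := ih hn r (T.erase e) (T'.erase f) hW0A hU'A hW0 hU' hW0c hU'c
      obtain ⟨T2, k1, k2, k3, k4, k5⟩ :=
        liftChain hn hchain hT hTA (by omega) (Finset.erase_subset _ _)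
      -- final step : from T2 ⊇ T'.erase f to T'
      obtain ⟨c2, hc2, hT2eq⟩ := extra_arc k4 hU'c (by omega)
      have hT'eq : T' = insert f (T'.erase f) := (Finset.insert_erase hfT).symm
      by_cases hcf : c2 = f
      · rw [hT2eq, hcf, ← hT'eq] at k5
        exact k5
      · have hd1 : T2 \ T' = {c2} := by
          have h0 := insert_sdiff_insert_distinct hc2 (Finset.notMem_erase f T') hcf
          rw [← hT2eq, ← hT'eq] at h0
          exact h0
        have hd2 : T' \ T2 = {f} := by
          have h0 := insert_sdiff_insert_distinct (Finset.notMem_erase f T') hc2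
            (fun h => hcf h.symm)
          rw [← hT2eq, ← hT'eq] at h0
          exact h0
        refine k5.tail ⟨⟨k2, hT'A, ⟨r, k1⟩, ⟨r, hT'⟩, k3, hT'c, ?_, ?_⟩, k1, hT'⟩
        · rw [hd1, Finset.card_singleton]
        · rw [hd2, Finset.card_singleton]

end DirTreeAux

namespace DirTreeAux

open Relation Finset

variable {V : Type*} [DecidableEq V]

section forward

variable {A : Finset (V × V)} {k : ℕ}

/-- Move the root of a tree one step backwards along an arc of `A`. -/
lemma backstep (hk : 1 ≤ k) {Tm : Finset (V × V)} {m u : V}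
    (hTm : IsDirTree Tm m) (hA : Tm ⊆ A) (hc : Tm.card = k) (hum : (u, m) ∈ A)
    (hne : u ≠ m) :
    ∃ Tu, IsDirTree Tu u ∧ Tu ⊆ A ∧ Tu.card = k ∧ GoodStep A k Tu Tm := by
  have hTmne : Tm.Nonempty := Finset.card_pos.mp (by omega)
  have humTm : (u, m) ∉ Tm := fun h => root_not_head hTm h rfl
  -- choose the arc to delete and prove the new set is a `u`-rooted tree
  have main : ∃ e ∈ Tm, IsDirTree (insert (u, m) (Tm.erase e)) u := by
    by_cases huV : u ∈ arcVerts Tm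
    · obtain ⟨e, he, he2, _⟩ := in_arc_of_mem hTm huV hne
      exact ⟨e, he, backstepIn hTm huV hne he he2⟩
    · obtain ⟨s, hsV, hsm, hsink⟩ := exists_sink hTm hTmne
      obtain ⟨e, he, he2, _⟩ := in_arc_of_mem hTm hsV hsm
      have hW : IsDirTree (Tm.erase e) m := removeSinkArc hTm he (by rw [he2]; exact hsink)
      refine ⟨e, he, addRoot hW ?_ hne⟩
      exact fun h => huV (arcVerts_erase_subset e h)
  obtain ⟨e, he, htree⟩ := main
  have hnm : (u, m) ∉ Tm.erase e := fun h => humTm (Finset.mem_of_mem_erase h)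
  have heum : e ≠ (u, m) := fun h => humTm (h ▸ he)
  have hcard : (insert (u, m) (Tm.erase e)).card = k := by
    rw [Finset.card_insert_of_notMem hnm, Finset.card_erase_of_mem he]
    omega
  have hsubA : insert (u, m) (Tm.erase e) ⊆ A := by
    intro x hx
    rcases Finset.mem_insert.mp hx with rfl | h
    · exact hum
    · exact hA (Finset.mem_of_mem_erase h)
  have hTm_eq : Tm = insert e (Tm.erase e) := (Finset.insert_erase he).symm
  have hd1 : (insert (u, m) (Tm.erase e)) \ Tm = {(u, m)} := by
    have h0 := insert_sdiff_insert_distinct (U := Tm.erase e) hnm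
      (Finset.notMem_erase e Tm) (fun h => heum h.symm)
    rw [← hTm_eq] at h0
    exact h0
  have hd2 : Tm \ (insert (u, m) (Tm.erase e)) = {e} := by
    have h0 := insert_sdiff_insert_distinct (U := Tm.erase e)
      (Finset.notMem_erase e Tm) hnm heum
    rw [← hTm_eq] at h0
    exact h0
  exact ⟨insert (u, m) (Tm.erase e), htree, hsubA, hcard,
    hsubA, hA, ⟨u, htree⟩, ⟨m, hTm⟩, hcard, hc,
    by rw [hd1, Finset.card_singleton], by rw [hd2, Finset.card_singleton]⟩

/-- Move the root of a tree backwards along a directed path of `A`. -/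
lemma backChain (hk : 1 ≤ k) {u v : V} (hpath : ReflTransGen (arcRel A) u v) :
    ∀ {Tv : Finset (V × V)}, IsDirTree Tv v → Tv ⊆ A → Tv.card = k →
    ∃ Tu, IsDirTree Tu u ∧ Tu ⊆ A ∧ Tu.card = k ∧
      ReflTransGen (GoodStep A k) Tu Tv := by
  induction hpath using ReflTransGen.head_induction_on with
  | refl =>
    intro Tv h1 h2 h3
    exact ⟨Tv, h1, h2, h3, ReflTransGen.refl⟩
  | @head a c h' _ ih =>
    intro Tv h1 h2 h3
    obtain ⟨Tc, g1, g2, g3, g4⟩ := ih h1 h2 h3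
    by_cases hac : a = c
    · exact ⟨Tc, hac ▸ g1, g2, g3, g4⟩
    · obtain ⟨Ta, m1, m2, m3, m4⟩ := backstep hk g1 g2 g3 h' hac
      exact ⟨Ta, m1, m2, m3, g4.head m4⟩

lemma chainR_mono {r : V} {T T' : Finset (V × V)}
    (h : ReflTransGen (GoodStepR A k r) T T') : ReflTransGen (GoodStep A k) T T' :=
  ReflTransGen.mono (r := GoodStepR A k r) (p := GoodStep A k) (fun _ _ hx => hx.1) _ _ h

lemma forwardStep (hk : 2 ≤ k) {u v : V} (h : auxAdj A k u v)
    {Tu : Finset (V × V)} (h1 : IsDirTree Tu u) (h2 : Tu ⊆ A) (h3 : Tu.card = k) :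
    ∃ Tv, IsDirTree Tv v ∧ Tv ⊆ A ∧ Tv.card = k ∧
      ReflTransGen (GoodStep A k) Tu Tv := by
  obtain ⟨huv, hKu, hKv, hcases⟩ := h
  rcases hcases with (hpath | hpath) | ⟨w, hwA1, hwA2, Tw, hTwsub, hTwtree, hTwc⟩
  · obtain ⟨Tv0, n1, n2, n3⟩ := hKv
    obtain ⟨Tu', m1, m2, m3, m4⟩ := backChain (by omega) hpath n2 n1 n3
    have hs := sameRoot k (by omega) u Tu Tu' h2 m2 h1 m1 h3 m3
    exact ⟨Tv0, n2, n1, n3, (chainR_mono hs).trans m4⟩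
  · obtain ⟨Tv', m1, m2, m3, m4⟩ := backChain (by omega) hpath h1 h2 h3
    exact ⟨Tv', m1, m2, m3, (by haveI : Std.Symm (GoodStep A k) := ⟨fun _ _ h => goodStep_symm h⟩; exact Std.Symm.symm _ _ m4)⟩
  · have hTwA : Tw ⊆ A := hTwsub.trans (Finset.filter_subset _ _)
    have havoid : ∀ e ∈ Tw, e.1 ≠ u ∧ e.1 ≠ v ∧ e.2 ≠ u ∧ e.2 ≠ v := by
      intro e he
      exact (Finset.mem_filter.mp (hTwsub he)).2
    have hTwne : Tw.Nonempty := Finset.card_pos.mp (by omega)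
    have hwV : w ∈ arcVerts Tw := root_mem_arcVerts hTwtree hTwne
    have hwu : w ≠ u := by
      rcases mem_arcVerts.mp hwV with ⟨e, he, rfl | rfl⟩
      · exact (havoid e he).1
      · exact (havoid e he).2.2.1
    have hwv : w ≠ v := by
      rcases mem_arcVerts.mp hwV with ⟨e, he, rfl | rfl⟩
      · exact (havoid e he).2.1
      · exact (havoid e he).2.2.2
    have huV : u ∉ arcVerts Tw := by
      intro hmem
      rcases mem_arcVerts.mp hmem with ⟨e, he, h' | h'⟩
      · exact (havoid e he).1 h'
      · exact (havoid e he).2.2.1 h'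
    have hvV : v ∉ arcVerts Tw := by
      intro hmem
      rcases mem_arcVerts.mp hmem with ⟨e, he, h' | h'⟩
      · exact (havoid e he).2.1 h'
      · exact (havoid e he).2.2.2 h'
    have huwTw : (u, w) ∉ Tw := fun h' => huV (fst_mem_arcVerts h')
    have hvwTw : (v, w) ∉ Tw := fun h' => hvV (fst_mem_arcVerts h')
    have hTu' : IsDirTree (insert (u, w) Tw) u :=
      addRoot hTwtree huV (fun h' => hwu h'.symm)
    have hTv' : IsDirTree (insert (v, w) Tw) v :=
      addRoot hTwtree hvV (fun h' => hwv h'.symm)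
    have hcu : (insert (u, w) Tw).card = k := by
      rw [Finset.card_insert_of_notMem huwTw]; omega
    have hcv : (insert (v, w) Tw).card = k := by
      rw [Finset.card_insert_of_notMem hvwTw]; omega
    have hAu : insert (u, w) Tw ⊆ A := by
      intro x hx
      rcases Finset.mem_insert.mp hx with rfl | h'
      · exact hwA1
      · exact hTwA h'
    have hAv : insert (v, w) Tw ⊆ A := by
      intro x hx
      rcases Finset.mem_insert.mp hx with rfl | h'
      · exact hwA2
      · exact hTwA h'
    have hne2 : (u, w) ≠ (v, w) := fun h' => huv (congrArg Prod.fst h')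
    have hstep : GoodStep A k (insert (u, w) Tw) (insert (v, w) Tw) :=
      ⟨hAu, hAv, ⟨u, hTu'⟩, ⟨v, hTv'⟩, hcu, hcv,
        by rw [insert_sdiff_insert_distinct huwTw hvwTw hne2, Finset.card_singleton],
        by rw [insert_sdiff_insert_distinct hvwTw huwTw (fun h' => hne2 h'.symm),
          Finset.card_singleton]⟩
    have hs := sameRoot k (by omega) u Tu (insert (u, w) Tw) h2 hAu h1 hTu' h3 hcu
    exact ⟨insert (v, w) Tw, hTv', hAv, hcv, (chainR_mono hs).tail hstep⟩

/-- Forward direction : a path in the auxiliary graph yields a reconfiguration chain. -/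
lemma forwardMain (hk : 2 ≤ k) {rs rg : V} (h : ReflTransGen (auxAdj A k) rs rg)
    {Ts : Finset (V × V)} (h1 : IsDirTree Ts rs) (h2 : Ts ⊆ A) (h3 : Ts.card = k) :
    ∃ Te, IsDirTree Te rg ∧ Te ⊆ A ∧ Te.card = k ∧
      ReflTransGen (GoodStep A k) Ts Te := by
  induction h with
  | refl => exact ⟨Ts, h1, h2, h3, ReflTransGen.refl⟩
  | @tail m v _ hstep ih =>
    obtain ⟨Tm, g1, g2, g3, g4⟩ := ih
    obtain ⟨Tv, m1, m2, m3, m4⟩ := forwardStep hk hstep g1 g2 g3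
    exact ⟨Tv, m1, m2, m3, g4.trans m4⟩

end forward

end DirTreeAux

namespace DirTreeAux

open Relation Finset

variable {V : Type*} [DecidableEq V]

section backward

variable {A : Finset (V × V)} {k : ℕ}

lemma has1tree {t c : V} (hc : c ≠ t) (hA : (t, c) ∈ A) : hasKTree A 1 t :=
  ⟨{(t, c)}, Finset.singleton_subset_iff.mpr hA, singleton_tree hc, Finset.card_singleton _⟩

/-- For `k = 1`, any two vertices with (non-loop) out-arcs are connected in the
auxiliary graph, using weak connectivity. -/
lemma walk1 (hconn : ∀ a b : V, ReflTransGen (fun x y => (x, y) ∈ A ∨ (y, x) ∈ A) a b)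
    {a b : V} (ha : ∃ c, c ≠ a ∧ (a, c) ∈ A) (hb : ∃ c, c ≠ b ∧ (b, c) ∈ A) :
    ReflTransGen (auxAdj A 1) a b := by
  have key : ∀ z, ReflTransGen (fun x y => (x, y) ∈ A ∨ (y, x) ∈ A) a z →
      ∃ t, (∃ c, c ≠ t ∧ (t, c) ∈ A) ∧ ReflTransGen (auxAdj A 1) a t ∧
        (t = z ∨ ((t, z) ∈ A ∧ t ≠ z)) := by
    intro z hz
    induction hz with
    | refl => exact ⟨a, ha, ReflTransGen.refl, Or.inl rfl⟩
    | @tail z y _ hstep ih =>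
      obtain ⟨t, htout, htconn, htz⟩ := ih
      by_cases hzy : z = y
      · exact hzy ▸ ⟨t, htout, htconn, htz⟩
      · rcases hstep with hzyA | hyzA
        · -- arc z → y
          have hz1 : hasKTree A 1 z := has1tree (fun h => hzy h.symm) hzyA
          have hconn_az : ReflTransGen (auxAdj A 1) a z := by
            rcases htz with rfl | ⟨htzA, htne⟩
            · exact htconn
            · refine htconn.tail ⟨htne, ?_, hz1, Or.inl (Or.inl (ReflTransGen.single htzA))⟩
              obtain ⟨c, hc1, hc2⟩ := htout
              exact has1tree hc1 hc2
          exact ⟨z, ⟨y, fun h => hzy h.symm, hzyA⟩, hconn_az, Or.inr ⟨hzyA, hzy⟩⟩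
        · -- arc y → z
          have hy1 : hasKTree A 1 y := has1tree hzy hyzA
          have ht1 : hasKTree A 1 t := by
            obtain ⟨c, hc1, hc2⟩ := htout
            exact has1tree hc1 hc2
          rcases htz with rfl | ⟨htzA, htne⟩
          · -- t = z
            have hty : t ≠ y := hzy
            refine ⟨y, ⟨t, fun h => hzy h, hyzA⟩, htconn.tail ?_, Or.inl rfl⟩
            exact ⟨hty, ht1, hy1, Or.inl (Or.inr (ReflTransGen.single hyzA))⟩
          · by_cases hty : t = y
            · exact ⟨y, hty ▸ htout, hty ▸ htconn, Or.inl rfl⟩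
            · refine ⟨y, ⟨z, hzy, hyzA⟩, htconn.tail ?_, Or.inl rfl⟩
              refine ⟨hty, ht1, hy1, Or.inr ⟨z, htzA, hyzA, ∅, Finset.empty_subset _,
                empty_tree z, by simp⟩⟩
  obtain ⟨t, htout, htconn, htb⟩ := key b (hconn a b)
  rcases htb with rfl | ⟨htbA, htne⟩
  · exact htconn
  · refine htconn.tail ⟨htne, ?_, ?_, Or.inl (Or.inl (ReflTransGen.single htbA))⟩
    · obtain ⟨c, hc1, hc2⟩ := htout
      exact has1tree hc1 hc2
    · obtain ⟨c, hc1, hc2⟩ := hb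
      exact has1tree hc1 hc2

/-- The roots of the two trees of a reconfiguration step are joined in `𝒢`. -/
lemma stepAux (hconn : ∀ a b : V, ReflTransGen (fun x y => (x, y) ∈ A ∨ (y, x) ∈ A) a b)
    (hk : 1 ≤ k) {T T' : Finset (V × V)} (hstep : GoodStep A k T T')
    {ρ ρ' : V} (hT : IsDirTree T ρ) (hT' : IsDirTree T' ρ') :
    ReflTransGen (auxAdj A k) ρ ρ' := by
  obtain ⟨hTA, hT'A, _, _, hTc, hT'c, hd1, hd2⟩ := hstep
  have hTne : T.Nonempty := Finset.card_pos.mp (by omega)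
  have hT'ne : T'.Nonempty := Finset.card_pos.mp (by omega)
  have hKρ : hasKTree A k ρ := ⟨T, hTA, hT, hTc⟩
  have hKρ' : hasKTree A k ρ' := ⟨T', hT'A, hT', hT'c⟩
  by_cases hρρ' : ρ = ρ'
  · exact hρρ' ▸ ReflTransGen.refl
  by_cases hρ'T : ρ' ∈ arcVerts T
  · exact ReflTransGen.single
      ⟨hρρ', hKρ, hKρ', Or.inl (Or.inl (reach_mono hTA (hT.2.2 ρ' hρ'T)))⟩
  by_cases hρT' : ρ ∈ arcVerts T'
  · exact ReflTransGen.single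
      ⟨hρρ', hKρ, hKρ', Or.inl (Or.inr (reach_mono hT'A (hT'.2.2 ρ hρT')))⟩
  -- neither root is a vertex of the other tree
  obtain ⟨c, d, hcT, hcT', hdT', hdT, hT'eq⟩ := step_decomp (hTc.trans hT'c.symm) hd1
  have hUeq : T'.erase d = T.erase c := by
    rw [hT'eq, Finset.erase_insert (fun h => hdT (Finset.mem_of_mem_erase h))]
  have havoidρ : ∀ e ∈ T, e ≠ c → e.1 ≠ ρ := by
    intro e he hec h1
    apply hρT'
    have : e ∈ T' := hT'eq ▸ Finset.mem_insert_of_mem (Finset.mem_erase.mpr ⟨hec, he⟩)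
    exact h1 ▸ fst_mem_arcVerts this
  have havoidρ' : ∀ e ∈ T', e ≠ d → e.1 ≠ ρ' := by
    intro e he hed h1
    apply hρ'T
    have : e ∈ T.erase c := hUeq ▸ Finset.mem_erase.mpr ⟨hed, he⟩
    exact h1 ▸ fst_mem_arcVerts (Finset.mem_of_mem_erase this)
  have hc1 : c.1 = ρ := by
    rcases mem_arcVerts.mp (root_mem_arcVerts hT hTne) with ⟨e, he, h1 | h2⟩
    · by_contra hne
      exact havoidρ e he (fun h => hne (h ▸ h1 : c.1 = ρ)) h1
    · exact absurd h2 (root_not_head hT he)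
  have hd1' : d.1 = ρ' := by
    rcases mem_arcVerts.mp (root_mem_arcVerts hT' hT'ne) with ⟨e, he, h1 | h2⟩
    · by_contra hne
      exact havoidρ' e he (fun h => hne (h ▸ h1 : d.1 = ρ')) h1
    · exact absurd h2 (root_not_head hT' he)
  have hU : IsDirTree (T.erase c) c.2 := removeRootArc hT hcT hc1 havoidρ
  have hU' : IsDirTree (T.erase c) d.2 := by
    have := removeRootArc hT' hdT' hd1' havoidρ'
    rwa [hUeq] at this
  have hc2ρ : c.2 ≠ ρ := root_not_head hT hcT
  have hd2ρ' : d.2 ≠ ρ' := root_not_head hT' hdT'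
  rcases Nat.lt_or_ge k 2 with hk1 | hk2
  · -- k = 1 : use the weak-connectivity walk
    have hk1' : k = 1 := by omega
    subst hk1'
    have hcA : (ρ, c.2) ∈ A := hTA (by rw [← hc1, Prod.mk.eta]; exact hcT)
    have hdA : (ρ', d.2) ∈ A := hT'A (by rw [← hd1', Prod.mk.eta]; exact hdT')
    exact walk1 hconn ⟨c.2, hc2ρ, hcA⟩ ⟨d.2, hd2ρ', hdA⟩
  · -- k ≥ 2 : common out-neighbour with a (k-1)-tree avoiding both roots
    have hUne : (T.erase c).Nonempty := by
      rw [← Finset.card_pos, Finset.card_erase_of_mem hcT]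
      omega
    have hw : c.2 = d.2 := root_unique hU hU' hUne
    refine ReflTransGen.single ⟨hρρ', hKρ, hKρ', Or.inr ⟨c.2, ?_, ?_, T.erase c, ?_, hU, ?_⟩⟩
    · exact hTA (by rw [← hc1, Prod.mk.eta]; exact hcT)
    · rw [hw]
      exact hT'A (by rw [← hd1', Prod.mk.eta]; exact hdT')
    · intro e he
      have heT : e ∈ T := Finset.mem_of_mem_erase he
      have heT' : e ∈ T'.erase d := hUeq ▸ he
      refine Finset.mem_filter.mpr ⟨hTA heT, ?_, ?_, ?_, ?_⟩
      · exact havoidρ e heT (Finset.ne_of_mem_erase he)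
      · exact havoidρ' e (Finset.mem_of_mem_erase heT') (Finset.ne_of_mem_erase heT')
      · exact root_not_head hT heT
      · exact root_not_head hT' (Finset.mem_of_mem_erase heT')
    · rw [Finset.card_erase_of_mem hcT, hTc]

lemma backwardMain
    (hconn : ∀ a b : V, ReflTransGen (fun x y => (x, y) ∈ A ∨ (y, x) ∈ A) a b)
    (hk : 1 ≤ k) {T T' : Finset (V × V)} (hc : T.card = k)
    (h : ReflTransGen (GoodStep A k) T T') :
    ∀ {ρ ρ' : V}, IsDirTree T ρ → IsDirTree T' ρ' → ReflTransGen (auxAdj A k) ρ ρ' := by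
  induction h with
  | refl =>
    intro ρ ρ' h1 h2
    have : ρ = ρ' := root_unique h1 h2 (Finset.card_pos.mp (by omega))
    exact this ▸ ReflTransGen.refl
  | @tail Tm T'' _ hstep ih =>
    intro ρ ρ' h1 h2
    have hstep2 := hstep
    obtain ⟨_, _, ⟨ρm, hρm⟩, _, _, _, _, _⟩ := hstep2
    exact (ih h1 hρm).trans (stepAux hconn hk hstep hρm h2)

end backward

end DirTreeAux

namespace DirTreeAux

open Relation Finset

variable {V : Type*} [DecidableEq V]

variable {A : Finset (V × V)} {k : ℕ}

lemma chain_to_format {Ts Tg : Finset (V × V)}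
    (hgood : Ts ⊆ A ∧ (∃ r, IsDirTree Ts r) ∧ Ts.card = k)
    (h : ReflTransGen (GoodStep A k) Ts Tg) :
    ∃ ℓ, ∃ f : ℕ → Finset (V × V), f 0 = Ts ∧ f ℓ = Tg ∧
      (∀ i ≤ ℓ, f i ⊆ A ∧ (∃ r, IsDirTree (f i) r) ∧ (f i).card = k) ∧
      (∀ i < ℓ, (f i \ f (i + 1)).card = 1 ∧ (f (i + 1) \ f i).card = 1) := by
  induction h with
  | refl =>
    exact ⟨0, fun _ => Ts, rfl, rfl, fun i _ => hgood, fun i hi => absurd hi (by omega)⟩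
  | @tail Tm T'' _ hstep ih =>
    obtain ⟨ℓ, f, h0, hl, hg, hd⟩ := ih
    obtain ⟨s1, s2, s3, s4, s5, s6, s7, s8⟩ := hstep
    refine ⟨ℓ + 1, fun i => if i = ℓ + 1 then T'' else f i, ?_, ?_, ?_, ?_⟩
    · simp only [if_neg (by omega : ¬ (0 : ℕ) = ℓ + 1)]
      exact h0
    · simp
    · intro i hi
      by_cases hiℓ : i = ℓ + 1
      · simp only [if_pos hiℓ]
        exact ⟨s2, ⟨_, s4.choose_spec⟩, s6⟩
      · simp only [if_neg hiℓ]
        exact hg i (by omega)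
    · intro i hi
      by_cases hiℓ : i = ℓ
      · subst hiℓ
        simp only [if_neg (by omega : ¬ i = i + 1), if_pos rfl, hl]
        exact ⟨s7, s8⟩
      · simp only [if_neg (by omega : ¬ i = ℓ + 1), if_neg (by omega : ¬ i + 1 = ℓ + 1)]
        exact hd i (by omega)

lemma format_to_chain {Ts Tg : Finset (V × V)} {ℓ : ℕ} {f : ℕ → Finset (V × V)}
    (h0 : f 0 = Ts) (hl : f ℓ = Tg)
    (hg : ∀ i ≤ ℓ, f i ⊆ A ∧ (∃ r, IsDirTree (f i) r) ∧ (f i).card = k)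
    (hd : ∀ i < ℓ, (f i \ f (i + 1)).card = 1 ∧ (f (i + 1) \ f i).card = 1) :
    ReflTransGen (GoodStep A k) Ts Tg := by
  have key : ∀ n ≤ ℓ, ReflTransGen (GoodStep A k) (f 0) (f n) := by
    intro n
    induction n with
    | zero => intro _; exact ReflTransGen.refl
    | succ m ihm =>
      intro hm
      have g1 := hg m (by omega)
      have g2 := hg (m + 1) hm
      have g3 := hd m (by omega)
      exact (ihm (by omega)).tail ⟨g1.1, g2.1, g1.2.1, g2.2.1, g1.2.2, g2.2.2, g3.1, g3.2⟩
  rw [← h0, ← hl]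
  exact key ℓ le_rfl

end DirTreeAux

/-- For a weakly connected finite digraph `G` and directed trees `T^s`, `T^g` with `k`
arcs rooted at `r^s`, `r^g`: there is a path between `r^s` and `r^g` in the auxiliary
graph `𝒢` iff there is a reconfiguration sequence between `T^s` and `T^g` consisting of
directed trees with `k` arcs in `G`. -/
theorem stmt13 {V : Type*} [Fintype V] [DecidableEq V] (A : Finset (V × V))
    (k : ℕ) (hk : 0 < k)
    (hconn : ∀ a b : V, Relation.ReflTransGen (fun x y => (x, y) ∈ A ∨ (y, x) ∈ A) a b)
    (Ts Tg : Finset (V × V)) (rs rg : V)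
    (hTs : Ts ⊆ A) (hTg : Tg ⊆ A) (hs : IsDirTree Ts rs) (hg : IsDirTree Tg rg)
    (hks : Ts.card = k) (hkg : Tg.card = k) :
    Relation.ReflTransGen (auxAdj A k) rs rg ↔
      ∃ ℓ, ∃ f : ℕ → Finset (V × V), f 0 = Ts ∧ f ℓ = Tg ∧
        (∀ i ≤ ℓ, f i ⊆ A ∧ (∃ r, IsDirTree (f i) r) ∧ (f i).card = k) ∧
        (∀ i < ℓ, (f i \ f (i + 1)).card = 1 ∧ (f (i + 1) \ f i).card = 1) := by
  open DirTreeAux in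
  constructor
  · intro h
    rcases Nat.lt_or_ge k 2 with hk1 | hk2
    · -- k = 1 : a reconfiguration sequence always exists
      have hk1' : k = 1 := by omega
      subst hk1'
      by_cases hTsg : Ts = Tg
      · exact ⟨0, fun _ => Ts, rfl, hTsg, fun i _ => ⟨hTs, ⟨rs, hs⟩, hks⟩,
          fun i hi => absurd hi (by omega)⟩
      · obtain ⟨e, he⟩ := Finset.card_eq_one.mp hks
        obtain ⟨e', he'⟩ := Finset.card_eq_one.mp hkg
        have hee : e ≠ e' := by
          intro hq
          exact hTsg (by rw [he, he', hq])
        have hd1 : (Ts \ Tg).card = 1 := by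
          rw [he, he', Finset.sdiff_singleton_eq_erase,
            Finset.erase_eq_of_notMem (fun h' => hee (Finset.mem_singleton.mp h').symm),
            Finset.card_singleton]
        have hd2 : (Tg \ Ts).card = 1 := by
          rw [he, he', Finset.sdiff_singleton_eq_erase,
            Finset.erase_eq_of_notMem (fun h' => hee (Finset.mem_singleton.mp h')),
            Finset.card_singleton]
        refine ⟨1, fun i => if i = 0 then Ts else Tg, by simp, by simp, ?_, ?_⟩
        · intro i _
          by_cases hi0 : i = 0
          · simp only [if_pos hi0]
            exact ⟨hTs, ⟨rs, hs⟩, hks⟩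
          · simp only [if_neg hi0]
            exact ⟨hTg, ⟨rg, hg⟩, hkg⟩
        · intro i hi
          have : i = 0 := by omega
          subst this
          simpa using ⟨hd1, hd2⟩
    · obtain ⟨Te, m1, m2, m3, m4⟩ := forwardMain hk2 h hs hTs hks
      have hsame := sameRoot k (by omega) rg Te Tg m2 hTg m1 hg m3 hkg
      exact chain_to_format ⟨hTs, ⟨rs, hs⟩, hks⟩ (m4.trans (chainR_mono hsame))
  · rintro ⟨ℓ, f, h0, hl, hgood, hdiff⟩
    have hchain := format_to_chain (A := A) (k := k) h0 hl hgood hdiff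
    exact backwardMain hconn hk hks hchain hs hg
end

section
/- Let P = (v_1, v_2, …, v_k) be a directed path in a finite directed graph G such that (v_k, v_1) is an arc of G (so that P + (v_k, v_1) is a directed cycle), and let 1 < i ≤ k. Then the directed path P' = (v_i, v_{i+1}, …, v_k, v_1, …, v_{i−1}) can be obtained from P by a sliding sequence of length i − 1 in G in which every intermediate subgraph is a directed path in G. -/
/-- `l` is (the vertex sequence of) a directed path in the digraph with arc set `A`:
a nonempty sequence of distinct vertices with consecutive pairs being arcs. -/
def IsPathIn {V : Type*} (A : Finset (V × V)) (l : List V) : Prop :=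
  l ≠ [] ∧ l.Nodup ∧ l.Chain' (fun a b => (a, b) ∈ A)

/-- The arc set of the directed path with vertex sequence `l`. -/
def pathArcs {V : Type*} [DecidableEq V] (l : List V) : Finset (V × V) :=
  (l.zip l.tail).toFinset

/-- One sliding step between two directed paths `P = (v_1, …, v_k)` and
`P' = (v'_1, …, v'_k)`: either `v_i = v'_{i+1}` for all `1 ≤ i < k`, or
`v_i = v'_{i-1}` for all `1 < i ≤ k`. -/
def SlideStep {V : Type*} (l l' : List V) : Prop :=
  l.length = l'.length ∧ (l'.tail = l.dropLast ∨ l'.dropLast = l.tail)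


/-- Cycle condition: path plus wrap-around arc. -/
def IsCycIn {V : Type*} (A : Finset (V × V)) (l : List V) : Prop :=
  IsPathIn A l ∧ ∀ h : l ≠ [], (l.getLast h, l.head h) ∈ A

lemma rot1 {V : Type*} (A : Finset (V × V)) (m : List V) (hm : IsCycIn A m) :
    IsCycIn A (m.rotate 1) := by
  obtain ⟨⟨hne, hnd, hch⟩, hc⟩ := hm
  match m with
  | [] => exact absurd rfl hne
  | [a] =>
    rw [show ([a] : List V).rotate 1 = [a] by simp]
    exact ⟨⟨hne, hnd, hch⟩, hc⟩
  | a :: b :: t =>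
    have hrot : (a :: b :: t).rotate 1 = (b :: t) ++ [a] := by
      simp [List.rotate_cons_succ]
    have hlast : (a :: b :: t).getLast hne = (b :: t).getLast (by simp) := by
      simp [List.getLast_cons]
    have hca : ((b :: t).getLast (by simp), a) ∈ A := by
      have := hc hne
      rw [hlast] at this
      simpa using this
    have hch' : ((b :: t) ++ [a]).Chain' (fun x y => (x, y) ∈ A) := by
      rw [show ((b :: t) ++ [a]).Chain' (fun x y => (x, y) ∈ A) ↔ _ from List.isChain_append]
      refine ⟨hch.tail, List.isChain_singleton _, ?_⟩
      intro x hx y hy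
      simp at hy
      subst hy
      rw [List.getLast?_eq_getLast (by simp)] at hx
      simp at hx
      subst hx
      exact hca
    constructor
    · exact ⟨by simp [hrot], by rw [← hrot] at *; exact List.nodup_rotate.mpr hnd,
        hrot ▸ hch'⟩
    · intro h
      have key : ∀ (x : List V) (hx : x ≠ []), x = (b :: t) ++ [a] →
          (x.getLast hx, x.head hx) ∈ A := by
        intro x hx he
        subst he
        have h1 : ((b :: t) ++ [a]).getLast hx = a := by
          simp [List.getLast_append]
        have h2 : ((b :: t) ++ [a]).head hx = b := by simp
        rw [h1, h2]
        exact (List.isChain_cons_cons.mp hch).1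
      exact key _ h hrot

/-- If `P = (v_1, …, v_k)` is a directed path in `G` such that `(v_k, v_1)` is an arc of
`G`, then for `1 < i ≤ k` the rotated path `P' = (v_i, …, v_k, v_1, …, v_{i-1})` can be
obtained from `P` by a sliding sequence of length `i - 1` all of whose members are
directed paths in `G`. -/
theorem stmt16 {V : Type*} [Fintype V] [DecidableEq V] (A : Finset (V × V))
    (l : List V) (hl : IsPathIn A l)
    (hcyc : (l.getLast hl.1, l.head hl.1) ∈ A)
    (i : ℕ) (hi1 : 1 < i) (hik : i ≤ l.length) :
    ∃ f : ℕ → List V, f 0 = l ∧ f (i - 1) = l.rotate (i - 1) ∧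
      (∀ j ≤ i - 1, IsPathIn A (f j)) ∧
      (∀ j < i - 1, SlideStep (f j) (f (j + 1))) := by
  have hcycle : ∀ j, IsCycIn A (l.rotate j) := by
    intro j
    induction j with
    | zero => exact ⟨by simpa using hl, by simpa using fun _ => hcyc⟩
    | succ n ih =>
      have := rot1 A (l.rotate n) ih
      rwa [List.rotate_rotate] at this
  refine ⟨fun j => l.rotate j, by simp, rfl, fun j _ => (hcycle j).1, ?_⟩
  intro j _
  have hne : l.rotate j ≠ [] := (hcycle j).1.1
  constructor
  · simp
  · right
    show (l.rotate (j + 1)).dropLast = (l.rotate j).tail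
    rw [← List.rotate_rotate]
    obtain ⟨a, s, hs⟩ := List.exists_cons_of_ne_nil hne
    rw [hs]
    simp [List.rotate_cons_succ, List.dropLast_concat]
end

section
/- Let G = (V, A) be a finite directed graph and let G' = (V', A') be the directed multigraph with V' = ⋃_{v ∈ V} {v^in, v^out}, containing for each v ∈ V the internal arc (v^in, v^out), and for each arc (u, v) ∈ A exactly |V| + 1 parallel arcs from u^out to v^in. For a directed feedback vertex set X of G, let Y(X) denote the set of internal arcs {(v^in, v^out) : v ∈ X}. Then for any two directed feedback vertex sets X^s and X^g of G with |X^s| = |X^g| = k, there is a sequence ⟨X^s = X_0, X_1, …, X_ℓ = X^g⟩ of directed feedback vertex sets of G with |X_i \ X_{i+1}| = |X_{i+1} \ X_i| = 1 for all 0 ≤ i < ℓ if and only if there is a sequence ⟨Y(X^s) = Y_0, Y_1, …, Y_m = Y(X^g)⟩ of directed feedback arc sets of G' with |Y_i \ Y_{i+1}| = |Y_{i+1} \ Y_i| = 1 for all 0 ≤ i < m. -/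
/-- `X` is a directed feedback vertex set of the digraph with arc set `A`: the subgraph
induced by the complement of `X` has no directed cycle. -/
def IsDFVS {V : Type*} [DecidableEq V] (A : Finset (V × V)) (X : Finset V) : Prop :=
  ∀ a b : V, ((a, b) ∈ A ∧ a ∉ X ∧ b ∉ X) →
    ¬ Relation.ReflTransGen (fun x y => (x, y) ∈ A ∧ x ∉ X ∧ y ∉ X) b a

/-- The arcs of the multigraph `G'`: for every vertex `v` of `G` the internal arc
`Sum.inl v` from `v^in` to `v^out`, and for every arc `e` of `G` exactly `|V| + 1`
parallel copies `Sum.inr (e, j)` from `(tail e)^out` to `(head e)^in`. -/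
abbrev GArc (V : Type*) [Fintype V] [DecidableEq V] (A : Finset (V × V)) : Type _ :=
  V ⊕ ({e : V × V // e ∈ A} × Fin (Fintype.card V + 1))

/-- The tail of an arc of `G'`; vertices of `G'` are pairs `(v, b)` with
`v^in = (v, false)` and `v^out = (v, true)`. -/
def arcTail {V : Type*} [Fintype V] [DecidableEq V] {A : Finset (V × V)} :
    GArc V A → V × Bool
  | Sum.inl v => (v, false)
  | Sum.inr (e, _) => (e.val.1, true)

/-- The head of an arc of `G'`. -/
def arcHead {V : Type*} [Fintype V] [DecidableEq V] {A : Finset (V × V)} :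
    GArc V A → V × Bool
  | Sum.inl v => (v, true)
  | Sum.inr (e, _) => (e.val.2, false)

/-- The step relation of `G'` after removing the arc set `Y`. -/
def fasStep {V : Type*} [Fintype V] [DecidableEq V] {A : Finset (V × V)}
    (Y : Finset (GArc V A)) (x y : V × Bool) : Prop :=
  ∃ ar : GArc V A, ar ∉ Y ∧ arcTail ar = x ∧ arcHead ar = y

/-- `Y` is a directed feedback arc set of the multigraph `G'`: removing `Y` from `G'`
leaves no directed cycle. -/
def IsDFAS {V : Type*} [Fintype V] [DecidableEq V] {A : Finset (V × V)}
    (Y : Finset (GArc V A)) : Prop :=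
  ∀ x y, fasStep Y x y → ¬ Relation.ReflTransGen (fasStep Y) y x



open Relation

set_option linter.unusedSectionVars false
set_option linter.unusedVariables false

section
variable {V : Type*} [Fintype V] [DecidableEq V] {A : Finset (V × V)}

lemma dfvs_mono {X X' : Finset V} (hsub : X ⊆ X') (hX : IsDFVS A X) : IsDFVS A X' := by
  rintro a b ⟨hab, ha, hb⟩ hpath
  refine hX a b ⟨hab, fun h => ha (hsub h), fun h => hb (hsub h)⟩ ?_
  exact ReflTransGen.mono (p := fun x y => (x, y) ∈ A ∧ x ∉ X ∧ y ∉ X)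
    (fun x y h => ⟨h.1, fun hx => h.2.1 (hsub hx), fun hy => h.2.2 (hsub hy)⟩) _ _ hpath

lemma arcTail_false {ar : GArc V A} {c : V} (h : arcTail ar = (c, false)) : ar = Sum.inl c := by
  cases ar with
  | inl v => simp [arcTail] at h; rw [h]
  | inr p => obtain ⟨e, j⟩ := p; simp [arcTail] at h

lemma arcTail_true {ar : GArc V A} {b : V} (h : arcTail ar = (b, true)) :
    ∃ (e : {e : V × V // e ∈ A}) (j : Fin (Fintype.card V + 1)),
      ar = Sum.inr (e, j) ∧ e.val.1 = b := by
  cases ar with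
  | inl v => simp [arcTail] at h
  | inr p =>
      obtain ⟨e, j⟩ := p
      simp [arcTail] at h
      exact ⟨e, j, rfl, h⟩

lemma walk_conv {Y : Finset (GArc V A)} {X : Finset V}
    (h1 : ∀ v, (Sum.inl v : GArc V A) ∈ Y ↔ v ∈ X) {a : V} (ha : a ∉ X) :
    ∀ p : V × Bool, Relation.ReflTransGen (fasStep Y) p (a, false) →
      (∀ c, p = (c, false) →
        Relation.ReflTransGen (fun x y : V => (x, y) ∈ A ∧ x ∉ X ∧ y ∉ X) c a ∧ c ∉ X) ∧
      (∀ b, p = (b, true) → b ∉ X →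
        Relation.ReflTransGen (fun x y : V => (x, y) ∈ A ∧ x ∉ X ∧ y ∉ X) b a) := by
  intro p h
  induction h using Relation.ReflTransGen.head_induction_on with
  | refl =>
      constructor
      · intro c hc
        injection hc with h1' h2'
        subst h1'
        exact ⟨ReflTransGen.refl, ha⟩
      · intro b hb
        injection hb with h1' h2'
        simp at h2'
  | head step rest ih =>
      obtain ⟨ar, harY, htail, hhead⟩ := step
      constructor
      · intro c hc
        subst hc
        have har : ar = Sum.inl c := arcTail_false htail
        subst har
        have hcX : c ∉ X := fun h => harY ((h1 c).2 h)
        have hhd : arcHead (Sum.inl c : GArc V A) = (c, true) := rfl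
        rw [hhd] at hhead
        subst hhead
        exact ⟨ih.2 c rfl hcX, hcX⟩
      · intro b hb hbX
        subst hb
        obtain ⟨e, j, har, he1⟩ := arcTail_true htail
        subst har
        have hhd : arcHead (Sum.inr (e, j) : GArc V A) = (e.val.2, false) := rfl
        rw [hhd] at hhead
        subst hhead
        obtain ⟨hpath, hdX⟩ := ih.1 e.val.2 rfl
        have hA : (b, e.val.2) ∈ A := by
          have : e.val = (b, e.val.2) := by rw [← he1]
          rw [← this]; exact e.property
        exact ReflTransGen.head ⟨hA, hbX, hdX⟩ hpath

end

set_option linter.unusedSectionVars false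
section
variable {V : Type*} [Fintype V] [DecidableEq V] {A : Finset (V × V)}

lemma no_cycle_true_false {Y : Finset (GArc V A)} {X : Finset V}
    (h1 : ∀ v, (Sum.inl v : GArc V A) ∈ Y ↔ v ∈ X) (hX : IsDFVS A X)
    {v : V} (hv : v ∉ X) :
    ¬ Relation.ReflTransGen (fasStep Y) (v, true) (v, false) := by
  intro h
  rcases h.cases_head with heq | ⟨q, step, rest⟩
  · simp at heq
  · obtain ⟨ar, harY, htail, hhead⟩ := step
    obtain ⟨e, j, har, he1⟩ := arcTail_true htail
    subst har
    have hhd : arcHead (Sum.inr (e, j) : GArc V A) = (e.val.2, false) := rfl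
    rw [hhd] at hhead
    subst hhead
    obtain ⟨hpath, hdX⟩ := (walk_conv h1 hv _ rest).1 e.val.2 rfl
    have hA : (v, e.val.2) ∈ A := by
      have : e.val = (v, e.val.2) := by rw [← he1]
      rw [← this]; exact e.property
    exact hX v e.val.2 ⟨hA, hv, hdX⟩ hpath

lemma dfvs_to_dfas {Y : Finset (GArc V A)} {X : Finset V}
    (h1 : ∀ v, (Sum.inl v : GArc V A) ∈ Y ↔ v ∈ X) (hX : IsDFVS A X) : IsDFAS Y := by
  rintro x y ⟨ar, harY, rfl, rfl⟩ hwalk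
  cases ar with
  | inl v =>
      have hv : v ∉ X := fun h => harY ((h1 v).2 h)
      exact no_cycle_true_false h1 hX hv hwalk
  | inr p =>
      obtain ⟨e, j⟩ := p
      -- hwalk : (e.val.2, false) ⇝ (e.val.1, true)
      rcases hwalk.cases_head with heq | ⟨q, step, rest⟩
      · simp [arcHead, arcTail] at heq
      · obtain ⟨ar', harY', htail, hhead⟩ := step
        have har' : ar' = Sum.inl e.val.2 := arcTail_false htail
        subst har'
        have hv : e.val.2 ∉ X := fun h => harY' ((h1 _).2 h)
        have hhd : arcHead (Sum.inl e.val.2 : GArc V A) = (e.val.2, true) := rfl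
        rw [hhd] at hhead
        subst hhead
        have hw : Relation.ReflTransGen (fasStep Y) (e.val.2, true) (e.val.2, false) :=
          rest.tail ⟨Sum.inr (e, j), harY, rfl, rfl⟩
        exact no_cycle_true_false h1 hX hv hw

lemma lift_walk {Y : Finset (GArc V A)} {X : Finset V}
    (h1 : ∀ v, (Sum.inl v : GArc V A) ∈ Y ↔ v ∈ X)
    (h2 : ∀ e : {e : V × V // e ∈ A}, ∃ j, (Sum.inr (e, j) : GArc V A) ∉ Y) {u w : V}
    (h : Relation.ReflTransGen (fun x y : V => (x, y) ∈ A ∧ x ∉ X ∧ y ∉ X) u w) :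
    Relation.ReflTransGen (fasStep Y) (u, false) (w, false) := by
  induction h using Relation.ReflTransGen.head_induction_on with
  | refl => exact ReflTransGen.refl
  | @head x c step rest ih =>
      obtain ⟨hA, hx, hy⟩ := step
      obtain ⟨j, hj⟩ := h2 ⟨(x, c), hA⟩
      refine ReflTransGen.head ⟨Sum.inl x, fun h => hx ((h1 x).1 h), rfl, rfl⟩ ?_
      exact ReflTransGen.head ⟨Sum.inr (⟨(x, c), hA⟩, j), hj, rfl, rfl⟩ ih

lemma dfas_to_dfvs {Y : Finset (GArc V A)} {X : Finset V}
    (h1 : ∀ v, (Sum.inl v : GArc V A) ∈ Y ↔ v ∈ X)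
    (h2 : ∀ e : {e : V × V // e ∈ A}, ∃ j, (Sum.inr (e, j) : GArc V A) ∉ Y)
    (hY : IsDFAS Y) : IsDFVS A X := by
  rintro a b ⟨hab, ha, hb⟩ hpath
  obtain ⟨j, hj⟩ := h2 ⟨(a, b), hab⟩
  have hwalk := lift_walk h1 h2 hpath
  refine hY (a, false) (a, true) ⟨Sum.inl a, fun h => ha ((h1 a).1 h), rfl, rfl⟩ ?_
  exact ReflTransGen.head ⟨Sum.inr (⟨(a, b), hab⟩, j), hj, rfl, rfl⟩ hwalk

end

section
variable {α : Type*} [DecidableEq α]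

lemma card_eq_of_swap {s t : Finset α} (h1 : (s \ t).card = 1) (h2 : (t \ s).card = 1) :
    t.card = s.card := by
  have hs := Finset.card_sdiff_add_card_inter s t
  have ht := Finset.card_sdiff_add_card_inter t s
  rw [Finset.inter_comm] at ht
  omega

lemma compress (P : Finset α → Prop) :
    ∀ (m : ℕ) (Z : ℕ → Finset α), (∀ i ≤ m, P (Z i)) →
      (∀ i < m, Z (i + 1) = Z i ∨
        ((Z i \ Z (i + 1)).card = 1 ∧ (Z (i + 1) \ Z i).card = 1)) →
      ∃ ℓ, ∃ f : ℕ → Finset α, f 0 = Z 0 ∧ f ℓ = Z m ∧ (∀ i ≤ ℓ, P (f i)) ∧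
        ∀ i < ℓ, (f i \ f (i + 1)).card = 1 ∧ (f (i + 1) \ f i).card = 1 := by
  intro m
  induction m with
  | zero =>
      intro Z hP _
      exact ⟨0, fun _ => Z 0, rfl, rfl,
        fun i hi => by rw [Nat.le_zero.mp hi]; exact hP 0 le_rfl,
        fun i hi => absurd hi (Nat.not_lt_zero i)⟩
  | succ m ih =>
      intro Z hP hstep
      obtain ⟨ℓ, f, hf0, hfl, hfP, hfstep⟩ := ih Z (fun i hi => hP i (hi.trans (Nat.le_succ m)))
        (fun i hi => hstep i (hi.trans (Nat.lt_succ_self m)))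
      rcases hstep m (Nat.lt_succ_self m) with heq | hsw
      · exact ⟨ℓ, f, hf0, by rw [hfl, ← heq], hfP, hfstep⟩
      · refine ⟨ℓ + 1, fun i => if i ≤ ℓ then f i else Z (m + 1), by simp [hf0], ?_, ?_, ?_⟩
        · simp
        · intro i hi
          by_cases h : i ≤ ℓ
          · simpa [h] using hfP i h
          · simpa [h] using hP (m + 1) le_rfl
        · intro i hi
          by_cases h : i < ℓ
          · have h1 : i ≤ ℓ := h.le
            have h2 : i + 1 ≤ ℓ := h
            simpa [h1, h2] using hfstep i h
          · have hieq : i = ℓ := by omega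
            subst hieq
            have h2 : ¬ (i + 1 ≤ i) := by omega
            simpa [h2, hfl] using hsw

noncomputable def padSeq (X : ℕ → Finset α) (S : Finset α) : ℕ → Finset α
  | 0 => S
  | n + 1 =>
      let Z := padSeq X S n
      if X (n + 1) ⊆ Z then Z
      else if h : (X (n + 1) \ Z).Nonempty ∧ (Z \ X (n + 1)).Nonempty
        then insert h.1.choose (Z.erase h.2.choose)
        else Z

lemma padSeq_succ (X : ℕ → Finset α) (S : Finset α) (n : ℕ) :
    padSeq X S (n + 1) =
      if X (n + 1) ⊆ padSeq X S n then padSeq X S n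
      else if h : (X (n + 1) \ padSeq X S n).Nonempty ∧
          (padSeq X S n \ X (n + 1)).Nonempty
        then insert h.1.choose ((padSeq X S n).erase h.2.choose)
        else padSeq X S n := rfl

lemma pad_main (X : ℕ → Finset α) (k : ℕ) (hk : (X 0).card = k)
    (m : ℕ) (hcard : ∀ i ≤ m, (X i).card ≤ k) (hd : ∀ i < m, (X (i + 1) \ X i).card ≤ 1) :
    (∀ i ≤ m, X i ⊆ padSeq X (X 0) i ∧ (padSeq X (X 0) i).card = k) ∧
    (∀ i < m, padSeq X (X 0) (i + 1) = padSeq X (X 0) i ∨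
      ((padSeq X (X 0) i \ padSeq X (X 0) (i + 1)).card = 1 ∧
       (padSeq X (X 0) (i + 1) \ padSeq X (X 0) i).card = 1)) := by
  have inv : ∀ i ≤ m, X i ⊆ padSeq X (X 0) i ∧ (padSeq X (X 0) i).card = k := by
    intro i
    induction i with
    | zero => intro _; exact ⟨Finset.Subset.refl _, hk⟩
    | succ n ihn =>
      intro hle
      obtain ⟨hsub, hcardZ⟩ := ihn (Nat.le_of_succ_le hle)
      set Z := padSeq X (X 0) n with hZdef
      rw [padSeq_succ, ← hZdef]
      by_cases hss : X (n + 1) ⊆ Z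
      · rw [if_pos hss]; exact ⟨hss, hcardZ⟩
      · rw [if_neg hss]
        have hne : (X (n + 1) \ Z).Nonempty := by
          obtain ⟨x, hx, hx2⟩ := Finset.not_subset.mp hss
          exact ⟨x, Finset.mem_sdiff.mpr ⟨hx, hx2⟩⟩
        have hne2 : (Z \ X (n + 1)).Nonempty := by
          by_contra hc
          have : Z ⊆ X (n + 1) := by
            intro x hx
            by_contra hx2
            exact hc ⟨x, Finset.mem_sdiff.mpr ⟨hx, hx2⟩⟩
          have heq : Z = X (n + 1) :=
            Finset.eq_of_subset_of_card_le this (by rw [hcardZ]; exact hcard (n + 1) hle)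
          exact hss (heq ▸ Finset.Subset.refl _)
        rw [dif_pos ⟨hne, hne2⟩]
        set w := hne.choose with hwdef
        set u := hne2.choose with hudef
        have hw : w ∈ X (n + 1) \ Z := hne.choose_spec
        have hu : u ∈ Z \ X (n + 1) := hne2.choose_spec
        rw [Finset.mem_sdiff] at hw hu
        have hsmall : (X (n + 1) \ Z).card ≤ 1 := by
          calc (X (n + 1) \ Z).card ≤ (X (n + 1) \ X n).card :=
                Finset.card_le_card (Finset.sdiff_subset_sdiff (Finset.Subset.refl _) hsub)
            _ ≤ 1 := hd n hle
        have hsingle : X (n + 1) \ Z = {w} := by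
          apply Finset.eq_singleton_iff_unique_mem.mpr
          refine ⟨Finset.mem_sdiff.mpr ⟨hw.1, hw.2⟩, ?_⟩
          intro x hx
          by_contra hxw
          have : 1 < (X (n + 1) \ Z).card := by
            apply Finset.one_lt_card.mpr
            exact ⟨x, hx, w, Finset.mem_sdiff.mpr ⟨hw.1, hw.2⟩, hxw⟩
          omega
        constructor
        · intro v hv
          rcases eq_or_ne v w with rfl | hvw
          · exact Finset.mem_insert_self _ _
          · apply Finset.mem_insert_of_mem
            apply Finset.mem_erase.mpr
            refine ⟨fun h => hu.2 (h ▸ hv), ?_⟩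
            by_contra hvZ
            have : v ∈ X (n + 1) \ Z := Finset.mem_sdiff.mpr ⟨hv, hvZ⟩
            rw [hsingle] at this
            exact hvw (Finset.mem_singleton.mp this)
        · rw [Finset.card_insert_of_notMem (fun h => hw.2 (Finset.mem_of_mem_erase h)),
            Finset.card_erase_of_mem hu.1, hcardZ]
          have : 1 ≤ k := by
            rw [← hcardZ]; exact Finset.card_pos.mpr ⟨u, hu.1⟩
          omega
  refine ⟨inv, ?_⟩
  intro i hi
  obtain ⟨hsub, hcardZ⟩ := inv i hi.le
  set Z := padSeq X (X 0) i with hZdef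
  rw [padSeq_succ, ← hZdef]
  by_cases hss : X (i + 1) ⊆ Z
  · rw [if_pos hss]; exact Or.inl rfl
  · rw [if_neg hss]
    have hne : (X (i + 1) \ Z).Nonempty := by
      obtain ⟨x, hx, hx2⟩ := Finset.not_subset.mp hss
      exact ⟨x, Finset.mem_sdiff.mpr ⟨hx, hx2⟩⟩
    have hne2 : (Z \ X (i + 1)).Nonempty := by
      by_contra hc
      have : Z ⊆ X (i + 1) := by
        intro x hx
        by_contra hx2
        exact hc ⟨x, Finset.mem_sdiff.mpr ⟨hx, hx2⟩⟩
      have heq : Z = X (i + 1) :=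
        Finset.eq_of_subset_of_card_le this (by rw [hcardZ]; exact hcard (i + 1) hi)
      exact hss (heq ▸ Finset.Subset.refl _)
    rw [dif_pos ⟨hne, hne2⟩]
    set w := hne.choose with hwdef
    set u := hne2.choose with hudef
    have hw : w ∈ X (i + 1) \ Z := hne.choose_spec
    have hu : u ∈ Z \ X (i + 1) := hne2.choose_spec
    rw [Finset.mem_sdiff] at hw hu
    right
    have huw : u ≠ w := fun h => hw.2 (h ▸ hu.1)
    have hZd : Z \ insert w (Z.erase u) = {u} := by
      ext x
      simp only [Finset.mem_sdiff, Finset.mem_insert, Finset.mem_erase, Finset.mem_singleton]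
      constructor
      · rintro ⟨hxZ, hx2⟩
        push_neg at hx2
        by_contra hxu
        exact hx2.2 hxu hxZ
      · rintro rfl
        refine ⟨hu.1, ?_⟩
        push_neg
        exact ⟨huw, fun h => absurd rfl h⟩
    have hZd2 : insert w (Z.erase u) \ Z = {w} := by
      ext x
      simp only [Finset.mem_sdiff, Finset.mem_insert, Finset.mem_erase, Finset.mem_singleton]
      constructor
      · rintro ⟨hx1, hx2⟩
        rcases hx1 with rfl | ⟨_, hxZ⟩
        · rfl
        · exact absurd hxZ hx2
      · rintro rfl
        exact ⟨Or.inl rfl, hw.2⟩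
    rw [hZd, hZd2]
    simp
end

/-- For directed feedback vertex sets `X^s`, `X^g` of `G` with `|X^s| = |X^g| = k`,
there is a reconfiguration sequence of directed feedback vertex sets of `G` between
them iff there is a reconfiguration sequence of directed feedback arc sets of `G'`
between the corresponding sets of internal arcs. -/
theorem stmt18 {V : Type*} [Fintype V] [DecidableEq V] (A : Finset (V × V)) (k : ℕ)
    (Xs Xg : Finset V) (hXs : IsDFVS A Xs) (hXg : IsDFVS A Xg)
    (hks : Xs.card = k) (hkg : Xg.card = k) :
    (∃ ℓ, ∃ f : ℕ → Finset V, f 0 = Xs ∧ f ℓ = Xg ∧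
        (∀ i ≤ ℓ, IsDFVS A (f i)) ∧
        (∀ i < ℓ, (f i \ f (i + 1)).card = 1 ∧ (f (i + 1) \ f i).card = 1)) ↔
      (∃ m, ∃ g : ℕ → Finset (GArc V A),
        g 0 = Xs.image (fun v => (Sum.inl v : GArc V A)) ∧
        g m = Xg.image (fun v => (Sum.inl v : GArc V A)) ∧
        (∀ i ≤ m, IsDFAS (g i)) ∧
        (∀ i < m, (g i \ g (i + 1)).card = 1 ∧ (g (i + 1) \ g i).card = 1)) := by
  constructor
  · rintro ⟨ℓ, f, hf0, hfl, hfP, hfstep⟩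
    refine ⟨ℓ, fun i => (f i).image (fun v => (Sum.inl v : GArc V A)),
      by simp only []; rw [hf0], by simp only []; rw [hfl], ?_, ?_⟩
    · intro i hi
      exact dfvs_to_dfas (fun v => by simp) (hfP i hi)
    · intro i hi
      have h := hfstep i hi
      have key : ∀ s t : Finset V,
          ((s.image (fun v => (Sum.inl v : GArc V A))) \
            (t.image (fun v => (Sum.inl v : GArc V A)))).card = (s \ t).card := by
        intro s t
        rw [← Finset.image_sdiff _ _ Sum.inl_injective,
          Finset.card_image_of_injective _ Sum.inl_injective]
      rw [key, key]
      exact h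
  · rintro ⟨m, g, hg0, hgm, hgP, hgstep⟩
    -- all g i have cardinality k
    have hcardg : ∀ i ≤ m, (g i).card = k := by
      intro i
      induction i with
      | zero =>
          intro _
          rw [hg0, Finset.card_image_of_injective _ Sum.inl_injective, hks]
      | succ n ihn =>
          intro hle
          have hn := ihn (Nat.le_of_succ_le hle)
          have hs := hgstep n hle
          rw [card_eq_of_swap hs.1 hs.2, hn]
    set X : ℕ → Finset V :=
      fun i => Finset.univ.filter (fun v => (Sum.inl v : GArc V A) ∈ g i) with hXdef
    have h1 : ∀ i, ∀ v, (Sum.inl v : GArc V A) ∈ g i ↔ v ∈ X i := by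
      intro i v; simp [hXdef]
    have hkV : k ≤ Fintype.card V := by
      rw [← hks, ← Finset.card_univ]
      exact Finset.card_le_univ Xs
    have h2 : ∀ i ≤ m, ∀ e : {e : V × V // e ∈ A},
        ∃ j, (Sum.inr (e, j) : GArc V A) ∉ g i := by
      intro i hi e
      by_contra h
      push_neg at h
      have hle : (Finset.univ : Finset (Fin (Fintype.card V + 1))).card ≤ (g i).card := by
        apply Finset.card_le_card_of_injOn (fun j => (Sum.inr (e, j) : GArc V A))
          (fun j _ => h j)
        intro j1 _ j2 _ hj
        simpa using hj
      rw [Finset.card_univ, Fintype.card_fin, hcardg i hi] at hle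
      omega
    have hXdfvs : ∀ i ≤ m, IsDFVS A (X i) :=
      fun i hi => dfas_to_dfvs (h1 i) (h2 i hi) (hgP i hi)
    have hX0 : X 0 = Xs := by
      ext v; simp [hXdef, hg0]
    have hXm : X m = Xg := by
      ext v; simp [hXdef, hgm]
    have hXcard : ∀ i ≤ m, (X i).card ≤ k := by
      intro i hi
      rw [← hcardg i hi]
      apply Finset.card_le_card_of_injOn (fun v => (Sum.inl v : GArc V A))
        (fun v hv => ((h1 i v).mpr hv))
      intro a _ b _ hab
      simpa using hab
    have hXd : ∀ i < m, (X (i + 1) \ X i).card ≤ 1 := by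
      intro i hi
      have := hgstep i hi
      calc (X (i + 1) \ X i).card ≤ (g (i + 1) \ g i).card := by
            apply Finset.card_le_card_of_injOn (fun v => (Sum.inl v : GArc V A))
            · intro v hv
              rw [Finset.mem_coe, Finset.mem_sdiff] at hv ⊢
              exact ⟨(h1 _ v).mpr hv.1, fun h => hv.2 ((h1 _ v).mp h)⟩
            · intro a _ b _ hab
              simpa using hab
        _ = 1 := this.2
    have hk0 : (X 0).card = k := by rw [hX0, hks]
    obtain ⟨inv, hsteps⟩ := pad_main X k hk0 m hXcard hXd
    have hZ0 : padSeq X (X 0) 0 = Xs := hX0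
    have hZm : padSeq X (X 0) m = Xg := by
      have hs := inv m le_rfl
      have hsub : Xg ⊆ padSeq X (X 0) m := hXm ▸ hs.1
      exact (Finset.eq_of_subset_of_card_le hsub (by rw [hs.2, hkg])).symm
    obtain ⟨ℓ, f, hf0, hfl, hfP, hfstep⟩ := compress (IsDFVS A) m (padSeq X (X 0))
      (fun i hi => dfvs_mono (inv i hi).1 (hXdfvs i hi)) hsteps
    exact ⟨ℓ, f, by rw [hf0, hZ0], by rw [hfl, hZm], hfP, hfstep⟩
end
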